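/- arXiv:2407.07767 — 9 statements merged into one kernel-verified Lean document; each statement's English description precedes it below -/
import Mathlib

section
/- Let ξ be a real-valued random variable whose law μ has a nonzero absolutely continuous part with respect to Lebesgue measure; that is, in the Lebesgue decomposition μ = μ_ac + μ_s into an absolutely continuous part μ_ac and a singular part μ_s, one has μ_ac ≠ 0. Then ξ belongs to the class 𝔻. -/
open MeasureTheory ProbabilityTheory

/-- A real-valued random variable `ξ` on `(Ω, P)` belongs to the class `𝔻` if there exist
two distinct bounded Borel sets `B₁, B₂ ⊆ ℝ` such that `pᵢ := P[ξ ∈ Bᵢ] > 0`,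
`eᵢ := E[ξ ⋅ 1_{ξ ∈ Bᵢ}] ≠ 0`, and `p₂ e₁ − p₁ e₂ ≠ 0`. -/
def MemD {Ω : Type*} [MeasurableSpace Ω] (P : Measure Ω) (ξ : Ω → ℝ) : Prop :=
  ∃ B₁ B₂ : Set ℝ, MeasurableSet B₁ ∧ MeasurableSet B₂ ∧
    Bornology.IsBounded B₁ ∧ Bornology.IsBounded B₂ ∧ B₁ ≠ B₂ ∧
    0 < P (ξ ⁻¹' B₁) ∧ 0 < P (ξ ⁻¹' B₂) ∧
    (∫ ω in ξ ⁻¹' B₁, ξ ω ∂P) ≠ 0 ∧ (∫ ω in ξ ⁻¹' B₂, ξ ω ∂P) ≠ 0 ∧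
    (P (ξ ⁻¹' B₂)).toReal * (∫ ω in ξ ⁻¹' B₁, ξ ω ∂P) -
      (P (ξ ⁻¹' B₁)).toReal * (∫ ω in ξ ⁻¹' B₂, ξ ω ∂P) ≠ 0

/-- A continuous function is integrable on a bounded set w.r.t. a finite measure. -/
lemma aux_integrableOn (μ : Measure ℝ) [IsFiniteMeasure μ] {B : Set ℝ}
    (hbd : Bornology.IsBounded B) {f : ℝ → ℝ} (hf : Continuous f) :
    IntegrableOn f B μ :=
  (hf.continuousOn.integrableOn_compact hbd.isCompact_closure).mono_set subset_closure

/-- Positivity of a set integral of a continuous function positive on the set. -/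
lemma aux_setIntegral_pos (μ : Measure ℝ) [IsFiniteMeasure μ] {B : Set ℝ}
    (hB : MeasurableSet B) (hbd : Bornology.IsBounded B) (hμ : 0 < μ B)
    {f : ℝ → ℝ} (hf : Continuous f) (hpos : ∀ x ∈ B, 0 < f x) :
    0 < ∫ x in B, f x ∂μ := by
  rw [setIntegral_pos_iff_support_of_nonneg_ae
    ((ae_restrict_iff' hB).2 (Filter.Eventually.of_forall fun x hx => (hpos x hx).le))
    (aux_integrableOn μ hbd hf)]
  refine lt_of_lt_of_le hμ (measure_mono fun x hx => ⟨(hpos x hx).ne', hx⟩)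

/-- Key construction: from a bounded measurable set `A` of one sign with positive measure
w.r.t. an atomless minorant `ν` of `μ`, produce the two sets required for class `𝔻`. -/
lemma aux_key (μ ν : Measure ℝ) [IsFiniteMeasure μ] (hle : ν ≤ μ)
    (hν0 : ∀ x : ℝ, ν {x} = 0)
    {A : Set ℝ} (hA : MeasurableSet A) (hbdA : Bornology.IsBounded A)
    (hνA : 0 < ν A) (σ : ℝ) (hσ : σ = 1 ∨ σ = -1) (hAσ : ∀ x ∈ A, 0 < σ * x) :
    ∃ B₁ B₂ : Set ℝ, MeasurableSet B₁ ∧ MeasurableSet B₂ ∧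
      Bornology.IsBounded B₁ ∧ Bornology.IsBounded B₂ ∧ B₁ ≠ B₂ ∧
      0 < μ B₁ ∧ 0 < μ B₂ ∧
      (∫ x in B₁, x ∂μ) ≠ 0 ∧ (∫ x in B₂, x ∂μ) ≠ 0 ∧
      (μ B₂).toReal * (∫ x in B₁, x ∂μ) - (μ B₁).toReal * (∫ x in B₂, x ∂μ) ≠ 0 := by
  obtain ⟨R, hR⟩ := hbdA.subset_ball (0 : ℝ)
  have hRball : ∀ x ∈ A, |x| < R := by
    intro x hx
    have := hR hx
    simpa [Metric.mem_ball, Real.dist_eq] using this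
  set S : Set ℝ := {s : ℝ | ν (A ∩ Set.Iio s) = 0} with hS
  have hSne : (-R) ∈ S := by
    have : A ∩ Set.Iio (-R) = ∅ := by
      ext x
      simp only [Set.mem_inter_iff, Set.mem_Iio, Set.mem_empty_iff_false, iff_false]
      rintro ⟨hx, hlt⟩
      have := abs_lt.1 (hRball x hx)
      linarith [this.1]
    simp [hS, this]
  have hSbdd : BddAbove S := by
    refine ⟨R, fun s hs => ?_⟩
    by_contra hcon
    push_neg at hcon
    have : A ∩ Set.Iio s = A := by
      apply Set.inter_eq_self_of_subset_left
      intro x hx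
      have := abs_lt.1 (hRball x hx)
      exact lt_trans this.2 hcon
    rw [hS] at hs
    simp only [Set.mem_setOf_eq, this] at hs
    exact absurd hs hνA.ne'
  set t : ℝ := sSup S with ht
  -- the part of A at or below t is ν-null
  have hIio : ν (A ∩ Set.Iio t) = 0 := by
    have hunion : A ∩ Set.Iio t = ⋃ k : ℕ, A ∩ Set.Iio (t - ((k : ℝ) + 1)⁻¹) := by
      ext x
      simp only [Set.mem_inter_iff, Set.mem_Iio, Set.mem_iUnion]
      constructor
      · rintro ⟨hx, hlt⟩
        obtain ⟨k, hk⟩ := exists_nat_one_div_lt (sub_pos.2 hlt)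
        exact ⟨k, hx, by rw [one_div] at hk; linarith⟩
      · rintro ⟨k, hx, hk⟩
        refine ⟨hx, lt_of_lt_of_le hk ?_⟩
        have : (0:ℝ) < ((k : ℝ) + 1)⁻¹ := by positivity
        linarith
    rw [hunion]
    refine measure_iUnion_null fun k => ?_
    have hklt : t - ((k : ℝ) + 1)⁻¹ < t := by
      have : (0:ℝ) < ((k : ℝ) + 1)⁻¹ := by positivity
      linarith
    obtain ⟨s, hsS, hs⟩ := exists_lt_of_lt_csSup ⟨-R, hSne⟩ hklt
    exact measure_mono_null (Set.inter_subset_inter_right _ (Set.Iio_subset_Iio hs.le)) hsS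
  have hIic : ν (A ∩ Set.Iic t) = 0 := by
    have hsub : A ∩ Set.Iic t ⊆ (A ∩ Set.Iio t) ∪ {t} := by
      rintro x ⟨hx, hxt⟩
      rcases (Set.mem_Iic.1 hxt).lt_or_eq with h | h
      · exact Or.inl ⟨hx, h⟩
      · exact Or.inr (by simp [h])
    refine measure_mono_null hsub (le_antisymm ?_ zero_le)
    calc ν ((A ∩ Set.Iio t) ∪ {t}) ≤ ν (A ∩ Set.Iio t) + ν {t} := measure_union_le _ _
    _ = 0 := by rw [hIio, hν0]; simp
  -- strictly above t, A still has positive measure arbitrarily close to t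
  have hIoi : 0 < ν (A ∩ Set.Ioi t) := by
    have hsub : A ⊆ (A ∩ Set.Iic t) ∪ (A ∩ Set.Ioi t) := by
      intro x hx
      rcases le_or_gt x t with h | h
      · exact Or.inl ⟨hx, h⟩
      · exact Or.inr ⟨hx, h⟩
    by_contra hcon
    push_neg at hcon
    have h0 : ν (A ∩ Set.Ioi t) = 0 := le_antisymm hcon zero_le
    have : ν A ≤ ν (A ∩ Set.Iic t) + ν (A ∩ Set.Ioi t) :=
      le_trans (measure_mono hsub) (measure_union_le _ _)
    rw [hIic, h0] at this
    simp only [add_zero, nonpos_iff_eq_zero] at this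
    exact absurd this hνA.ne'
  -- choose the threshold t'
  have hunion2 : A ∩ Set.Ioi t = ⋃ k : ℕ, A ∩ Set.Ioi (t + ((k : ℝ) + 1)⁻¹) := by
    ext x
    simp only [Set.mem_inter_iff, Set.mem_Ioi, Set.mem_iUnion]
    constructor
    · rintro ⟨hx, hlt⟩
      obtain ⟨k, hk⟩ := exists_nat_one_div_lt (sub_pos.2 hlt)
      exact ⟨k, hx, by rw [one_div] at hk; linarith⟩
    · rintro ⟨k, hx, hk⟩
      have : (0:ℝ) < ((k : ℝ) + 1)⁻¹ := by positivity
      exact ⟨hx, by linarith⟩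
  obtain ⟨k, hk⟩ : ∃ k : ℕ, ν (A ∩ Set.Ioi (t + ((k : ℝ) + 1)⁻¹)) ≠ 0 := by
    by_contra hcon
    push_neg at hcon
    rw [hunion2] at hIoi
    exact absurd (measure_iUnion_null hcon) hIoi.ne'
  set t' : ℝ := t + ((k : ℝ) + 1)⁻¹ with ht'
  have htt' : t < t' := by
    have : (0:ℝ) < ((k : ℝ) + 1)⁻¹ := by positivity
    rw [ht']; linarith
  set B₁ : Set ℝ := A ∩ Set.Ioo t t' with hB₁def
  set B₂ : Set ℝ := A ∩ Set.Ioi t' with hB₂def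
  have hmB₁ : MeasurableSet B₁ := hA.inter measurableSet_Ioo
  have hmB₂ : MeasurableSet B₂ := hA.inter measurableSet_Ioi
  have hbdB₁ : Bornology.IsBounded B₁ := hbdA.subset Set.inter_subset_left
  have hbdB₂ : Bornology.IsBounded B₂ := hbdA.subset Set.inter_subset_left
  -- positivity of ν on B₁
  have hνB₁ : 0 < ν B₁ := by
    have ht'S : t' ∉ S := fun h => absurd (le_csSup hSbdd h) (not_le.2 htt')
    have hpos : 0 < ν (A ∩ Set.Iio t') := by
      rw [hS] at ht'S
      simp only [Set.mem_setOf_eq] at ht'S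
      exact zero_le.lt_of_ne (Ne.symm ht'S)
    have hsub : A ∩ Set.Iio t' ⊆ (A ∩ Set.Iic t) ∪ B₁ := by
      rintro x ⟨hx, hxlt⟩
      rcases le_or_gt x t with h | h
      · exact Or.inl ⟨hx, h⟩
      · exact Or.inr ⟨hx, h, hxlt⟩
    have : ν (A ∩ Set.Iio t') ≤ ν (A ∩ Set.Iic t) + ν B₁ :=
      le_trans (measure_mono hsub) (measure_union_le _ _)
    rw [hIic, zero_add] at this
    exact lt_of_lt_of_le hpos this
  have hνB₂ : 0 < ν B₂ := zero_le.lt_of_ne (Ne.symm hk)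
  have hμB₁ : 0 < μ B₁ := lt_of_lt_of_le hνB₁ (hle B₁)
  have hμB₂ : 0 < μ B₂ := lt_of_lt_of_le hνB₂ (hle B₂)
  -- distinctness
  have hne : B₁ ≠ B₂ := by
    intro h
    obtain ⟨x, hx⟩ := nonempty_of_measure_ne_zero hμB₂.ne'
    have hx1 : x ∈ B₁ := h ▸ hx
    have h1 : x < t' := hx1.2.2
    have h2 : t' < x := hx.2
    linarith
  refine ⟨B₁, B₂, hmB₁, hmB₂, hbdB₁, hbdB₂, hne, hμB₁, hμB₂, ?_, ?_, ?_⟩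
  -- nonzero integrals
  case _ =>
    have h : 0 < ∫ x in B₁, σ * x ∂μ :=
      aux_setIntegral_pos μ hmB₁ hbdB₁ hμB₁ (continuous_const.mul continuous_id)
        (fun x hx => hAσ x hx.1)
    rw [integral_const_mul] at h
    intro h0
    rw [h0, mul_zero] at h
    exact lt_irrefl _ h
  case _ =>
    have h : 0 < ∫ x in B₂, σ * x ∂μ :=
      aux_setIntegral_pos μ hmB₂ hbdB₂ hμB₂ (continuous_const.mul continuous_id)
        (fun x hx => hAσ x hx.1)
    rw [integral_const_mul] at h
    intro h0
    rw [h0, mul_zero] at h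
    exact lt_irrefl _ h
  case _ =>
    set p₁ : ℝ := (μ B₁).toReal with hp₁
    set p₂ : ℝ := (μ B₂).toReal with hp₂
    set e₁ : ℝ := ∫ x in B₁, x ∂μ with he₁
    set e₂ : ℝ := ∫ x in B₂, x ∂μ with he₂
    have hp₁pos : 0 < p₁ := ENNReal.toReal_pos hμB₁.ne' (measure_ne_top μ B₁)
    have hp₂pos : 0 < p₂ := ENNReal.toReal_pos hμB₂.ne' (measure_ne_top μ B₂)
    have h1 : 0 < ∫ x in B₁, (t' - x) ∂μ :=
      aux_setIntegral_pos μ hmB₁ hbdB₁ hμB₁ (continuous_const.sub continuous_id)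
        (fun x hx => sub_pos.2 hx.2.2)
    have h2 : 0 < ∫ x in B₂, (x - t') ∂μ :=
      aux_setIntegral_pos μ hmB₂ hbdB₂ hμB₂ (continuous_id.sub continuous_const)
        (fun x hx => sub_pos.2 hx.2)
    have hi1 : IntegrableOn (fun x : ℝ => x) B₁ μ := aux_integrableOn μ hbdB₁ continuous_id
    have hi2 : IntegrableOn (fun x : ℝ => x) B₂ μ := aux_integrableOn μ hbdB₂ continuous_id
    have heq1 : ∫ x in B₁, (t' - x) ∂μ = p₁ * t' - e₁ := by
      rw [integral_sub (show IntegrableOn (fun _ : ℝ => t') B₁ μ from integrableOn_const (measure_ne_top μ B₁)) hi1]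
      · rw [setIntegral_const]
        simp [hp₁, he₁, smul_eq_mul, Measure.real]
    have heq2 : ∫ x in B₂, (x - t') ∂μ = e₂ - p₂ * t' := by
      rw [integral_sub hi2 (show IntegrableOn (fun _ : ℝ => t') B₂ μ from integrableOn_const (measure_ne_top μ B₂))]
      · rw [setIntegral_const]
        simp [hp₂, he₂, smul_eq_mul, Measure.real]
    rw [heq1] at h1
    rw [heq2] at h2
    have he1lt : e₁ < p₁ * t' := by linarith
    have he2gt : p₂ * t' < e₂ := by linarith
    have : p₂ * e₁ - p₁ * e₂ < 0 := by nlinarith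
    exact this.ne

/-- If the law of a real random variable `ξ` has a nonzero absolutely continuous part with
respect to Lebesgue measure (in the Lebesgue decomposition of its law), then `ξ` belongs to
the class `𝔻`. -/
theorem absolutelyContinuousPart_memD {Ω : Type*} [MeasurableSpace Ω] (P : Measure Ω)
    [IsProbabilityMeasure P] (ξ : Ω → ℝ) (hξ : Measurable ξ)
    (hac : MeasureTheory.volume.withDensity
      ((Measure.map ξ P).rnDeriv MeasureTheory.volume) ≠ 0) :
    MemD P ξ := by
  set μ : Measure ℝ := Measure.map ξ P with hμdef
  haveI : IsProbabilityMeasure μ := Measure.isProbabilityMeasure_map hξ.aemeasurable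
  set ν : Measure ℝ := MeasureTheory.volume.withDensity (μ.rnDeriv MeasureTheory.volume)
    with hνdef
  have hle : ν ≤ μ := Measure.withDensity_rnDeriv_le μ MeasureTheory.volume
  have hνac : ν ≪ MeasureTheory.volume := withDensity_absolutelyContinuous _ _
  have hν0 : ∀ x : ℝ, ν {x} = 0 := fun x => hνac (measure_singleton x)
  have hνuniv : 0 < ν Set.univ := Measure.measure_univ_pos.2 hac
  have hcompl : 0 < ν ({(0:ℝ)}ᶜ) := by
    by_contra hcon
    push_neg at hcon
    have h0 : ν ({(0:ℝ)}ᶜ) = 0 := le_antisymm hcon zero_le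
    have : ν Set.univ ≤ ν {(0:ℝ)} + ν ({(0:ℝ)}ᶜ) := by
      refine le_trans (measure_mono ?_) (measure_union_le _ _)
      intro x _
      by_cases hx : x = 0
      · exact Or.inl (by simp [hx])
      · exact Or.inr hx
    rw [hν0, h0, add_zero] at this
    exact absurd (le_antisymm this zero_le) hνuniv.ne'
  have hsplit : 0 < ν (Set.Iio (0:ℝ)) ∨ 0 < ν (Set.Ioi (0:ℝ)) := by
    by_contra hcon
    push_neg at hcon
    have h1 : ν (Set.Iio (0:ℝ)) = 0 := le_antisymm hcon.1 zero_le
    have h2 : ν (Set.Ioi (0:ℝ)) = 0 := le_antisymm hcon.2 zero_le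
    have : ν ({(0:ℝ)}ᶜ) ≤ ν (Set.Iio (0:ℝ)) + ν (Set.Ioi (0:ℝ)) := by
      rw [← Set.Iio_union_Ioi]
      exact measure_union_le _ _
    rw [h1, h2, add_zero] at this
    exact absurd (le_antisymm this zero_le) hcompl.ne'
  -- in either case, find a bounded one-signed interval of positive ν-measure
  have hkey : ∃ (A : Set ℝ) (σ : ℝ), MeasurableSet A ∧ Bornology.IsBounded A ∧ 0 < ν A ∧
      (σ = 1 ∨ σ = -1) ∧ ∀ x ∈ A, 0 < σ * x := by
    rcases hsplit with hneg | hpos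
    · have hsub : Set.Iio (0:ℝ) ⊆ ⋃ n : ℕ, Set.Ioo (-((n:ℝ)+1)) (-((n:ℝ)+1)⁻¹) := by
        intro x hx
        simp only [Set.mem_Iio] at hx
        obtain ⟨n, hn⟩ := exists_nat_gt (max (-x) (-x)⁻¹)
        have hx1 : -x < (n:ℝ) + 1 := lt_trans (lt_of_le_of_lt (le_max_left _ _) hn)
          (by linarith)
        have hx2 : (-x)⁻¹ < (n:ℝ) + 1 := lt_trans (lt_of_le_of_lt (le_max_right _ _) hn)
          (by linarith)
        have hxpos : 0 < -x := by linarith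
        have : ((n:ℝ)+1)⁻¹ < -x := by
          have := inv_strictAnti₀ (inv_pos.2 hxpos) hx2
          rwa [inv_inv] at this
        simp only [Set.mem_iUnion, Set.mem_Ioo]
        exact ⟨n, by linarith, by linarith⟩
      obtain ⟨n, hn⟩ : ∃ n : ℕ, ν (Set.Ioo (-((n:ℝ)+1)) (-((n:ℝ)+1)⁻¹)) ≠ 0 := by
        by_contra hcon
        push_neg at hcon
        exact absurd (measure_mono_null hsub (measure_iUnion_null hcon)) hneg.ne'
      refine ⟨Set.Ioo (-((n:ℝ)+1)) (-((n:ℝ)+1)⁻¹), -1, measurableSet_Ioo,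
        Metric.isBounded_Ioo _ _, zero_le.lt_of_ne (Ne.symm hn), Or.inr rfl, ?_⟩
      intro x hx
      have h2 : x < -((n:ℝ)+1)⁻¹ := hx.2
      have : (0:ℝ) < ((n:ℝ)+1)⁻¹ := by positivity
      nlinarith
    · have hsub : Set.Ioi (0:ℝ) ⊆ ⋃ n : ℕ, Set.Ioo ((((n:ℝ))+1)⁻¹) ((n:ℝ)+1) := by
        intro x hx
        simp only [Set.mem_Ioi] at hx
        obtain ⟨n, hn⟩ := exists_nat_gt (max x x⁻¹)
        have hx1 : x < (n:ℝ) + 1 := lt_trans (lt_of_le_of_lt (le_max_left _ _) hn)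
          (by linarith)
        have hx2 : x⁻¹ < (n:ℝ) + 1 := lt_trans (lt_of_le_of_lt (le_max_right _ _) hn)
          (by linarith)
        have : ((n:ℝ)+1)⁻¹ < x := by
          have := inv_strictAnti₀ (inv_pos.2 hx) hx2
          rwa [inv_inv] at this
        simp only [Set.mem_iUnion, Set.mem_Ioo]
        exact ⟨n, this, hx1⟩
      obtain ⟨n, hn⟩ : ∃ n : ℕ, ν (Set.Ioo ((((n:ℝ))+1)⁻¹) ((n:ℝ)+1)) ≠ 0 := by
        by_contra hcon
        push_neg at hcon
        exact absurd (measure_mono_null hsub (measure_iUnion_null hcon)) hpos.ne'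
      refine ⟨Set.Ioo ((((n:ℝ))+1)⁻¹) ((n:ℝ)+1), 1, measurableSet_Ioo,
        Metric.isBounded_Ioo _ _, zero_le.lt_of_ne (Ne.symm hn), Or.inl rfl, ?_⟩
      intro x hx
      have h1 : (((n:ℝ))+1)⁻¹ < x := hx.1
      have : (0:ℝ) < ((n:ℝ)+1)⁻¹ := by positivity
      linarith [one_mul x]
  obtain ⟨A, σ, hA, hbdA, hνA, hσ, hAσ⟩ := hkey
  obtain ⟨B₁, B₂, hm1, hm2, hb1, hb2, hne, hp1, hp2, he1, he2, hdet⟩ :=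
    aux_key μ ν hle hν0 hA hbdA hνA σ hσ hAσ
  have hmap : ∀ (B : Set ℝ), MeasurableSet B → μ B = P (ξ ⁻¹' B) := fun B hB =>
    Measure.map_apply hξ hB
  have hint : ∀ (B : Set ℝ), MeasurableSet B →
      (∫ x in B, x ∂μ) = ∫ ω in ξ ⁻¹' B, ξ ω ∂P := fun B hB =>
    setIntegral_map hB measurable_id.aestronglyMeasurable hξ.aemeasurable
  refine ⟨B₁, B₂, hm1, hm2, hb1, hb2, hne, ?_, ?_, ?_, ?_, ?_⟩
  · rw [← hmap B₁ hm1]; exact hp1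
  · rw [← hmap B₂ hm2]; exact hp2
  · rw [← hint B₁ hm1]; exact he1
  · rw [← hint B₂ hm2]; exact he2
  · rw [← hint B₁ hm1, ← hint B₂ hm2, ← hmap B₁ hm1, ← hmap B₂ hm2]; exact hdet
end

section
/- Let p ∈ [1, ∞). In the setting of the d-dimensional stochastic Volterra summation equation, assume each component ⟨ξ(n), eⱼ⟩ (j = 1, …, d) is equal in distribution to a fixed random variable ξⱼ belonging to the class 𝔻 (no moment condition is assumed). If X ∈ ℓ^p(ℤ₊; ℝ^d) almost surely, then f ∈ ℓ^p(ℤ₊; ℝ^d) and σ ∈ ℓ^p(ℤ₊; ℝ^{d×d}). -/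
open MeasureTheory ProbabilityTheory

open Finset Filter


private lemma vlt_integrable_of_bound {Ω : Type*} [MeasurableSpace Ω] (P : Measure Ω)
    [IsFiniteMeasure P] {g : Ω → ℝ} (hg : Measurable g) (C : ℝ) (hC : ∀ ω, |g ω| ≤ C) :
    Integrable g P :=
  (integrable_const C).mono' hg.aestronglyMeasurable
    (Filter.Eventually.of_forall (by simpa [Real.norm_eq_abs] using hC))

private lemma vlt_abs_add_rpow_le {p : ℝ} (hp : 1 ≤ p) (a b : ℝ) :
    |a + b| ^ p ≤ 2 ^ p * (|a| ^ p + |b| ^ p) := by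
  have hp0 : (0:ℝ) ≤ p := le_trans zero_le_one hp
  have h1 : |a + b| ≤ 2 * max |a| |b| := by
    calc |a + b| ≤ |a| + |b| := abs_add_le _ _
    _ ≤ max |a| |b| + max |a| |b| := add_le_add (le_max_left _ _) (le_max_right _ _)
    _ = 2 * max |a| |b| := by ring
  calc |a + b| ^ p ≤ (2 * max |a| |b|) ^ p :=
        Real.rpow_le_rpow (abs_nonneg _) h1 hp0
  _ = 2 ^ p * (max |a| |b|) ^ p := by
        rw [Real.mul_rpow (by norm_num) (le_max_iff.2 (Or.inl (abs_nonneg _)))]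
  _ ≤ 2 ^ p * (|a| ^ p + |b| ^ p) := by
        apply mul_le_mul_of_nonneg_left _ (Real.rpow_nonneg (by norm_num) p)
        rcases max_cases |a| |b| with ⟨h, _⟩ | ⟨h, _⟩ <;> rw [h]
        · exact le_add_of_nonneg_right (Real.rpow_nonneg (abs_nonneg _) p)
        · exact le_add_of_nonneg_left (Real.rpow_nonneg (abs_nonneg _) p)

private lemma vlt_summable_rpow_add {p : ℝ} (hp : 1 ≤ p) {x y : ℕ → ℝ}
    (hx : Summable fun n => |x n| ^ p) (hy : Summable fun n => |y n| ^ p) :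
    Summable fun n => |x n + y n| ^ p := by
  refine Summable.of_nonneg_of_le (fun n => Real.rpow_nonneg (abs_nonneg _) p)
    (fun n => vlt_abs_add_rpow_le hp _ _) ?_
  exact (hx.add hy).mul_left _

private lemma vlt_summable_rpow_sum {p : ℝ} (hp : 1 ≤ p) {ι : Type*} (s : Finset ι)
    {g : ι → ℕ → ℝ} (hg : ∀ l ∈ s, Summable fun n => |g l n| ^ p) :
    Summable fun n => |∑ l ∈ s, g l n| ^ p := by
  classical
  induction s using Finset.induction_on with
  | empty =>
      simpa [Real.zero_rpow (by linarith : p ≠ 0)] using summable_zero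
  | @insert a s ha ih =>
      have := vlt_summable_rpow_add hp (hg a (mem_insert_self a s))
        (ih (fun l hl => hg l (mem_insert_of_mem hl)))
      simpa [Finset.sum_insert ha] using this

private lemma vlt_summable_rpow_neg {p : ℝ} {x : ℕ → ℝ}
    (hx : Summable fun n => |x n| ^ p) : Summable fun n => |-(x n)| ^ p := by
  simpa [abs_neg] using hx


private lemma vlt_summable_conv {p : ℝ} (hp : 1 ≤ p) {k x : ℕ → ℝ}
    (hk : Summable fun n => |k n|) (hx : Summable fun n => |x n| ^ p) :
    Summable fun n => |∑ j ∈ range (n + 1), k (n - j) * x j| ^ p := by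
  have hp0 : (0:ℝ) ≤ p := le_trans zero_le_one hp
  set A : ℝ := (∑' n, |k n|) + 1 with hA
  have hA1 : (1:ℝ) ≤ A := le_add_of_nonneg_left (tsum_nonneg fun n => abs_nonneg _)
  have hA0 : (0:ℝ) < A := lt_of_lt_of_le one_pos hA1
  -- reflect: ∑_{j∈range(n+1)} k (n-j) * y j = ∑_{j} k j * y (n-j)
  have hrefl : ∀ (u y : ℕ → ℝ) (n : ℕ),
      ∑ j ∈ range (n + 1), u (n - j) * y j = ∑ j ∈ range (n + 1), u j * y (n - j) := by
    intro u y n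
    rw [← Finset.sum_range_reflect]
    refine Finset.sum_congr rfl fun j hj => ?_
    have hj' : j ≤ n := Nat.lt_succ_iff.mp (mem_range.mp hj)
    rw [Nat.succ_sub_one, Nat.sub_sub_self hj']
  -- summability of the majorant
  have hmaj : Summable fun n => ∑ j ∈ range (n + 1), |k (n - j)| * |x j| ^ p := by
    have h := summable_norm_sum_mul_range_of_summable_norm
      (f := fun n => |k n|) (g := fun n => |x n| ^ p)
      (by simpa [Real.norm_eq_abs, abs_abs] using hk)
      (by
        simpa [Real.norm_eq_abs, abs_of_nonneg (Real.rpow_nonneg (abs_nonneg _) p)] using hx)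
    have h2 : Summable fun n => ∑ j ∈ range (n + 1), |k j| * |x (n - j)| ^ p := by
      refine h.of_norm.congr fun n => rfl
    refine h2.congr fun n => ?_
    rw [hrefl (fun m => |k m|) (fun j => |x j| ^ p) n]
  refine Summable.of_nonneg_of_le (fun n => Real.rpow_nonneg (abs_nonneg _) p)
    (fun n => ?_) (hmaj.mul_left (A ^ (p - 1)))
  -- key pointwise bound
  set w : ℕ → ℝ := fun j => |k (n - j)| with hw
  set S : ℝ := ∑ j ∈ range (n + 1), w j with hS
  have hwn : ∀ j, 0 ≤ w j := fun j => abs_nonneg _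
  have hSn : 0 ≤ S := Finset.sum_nonneg fun j _ => hwn j
  have habs : |∑ j ∈ range (n + 1), k (n - j) * x j| ≤ ∑ j ∈ range (n + 1), w j * |x j| := by
    refine le_trans (Finset.abs_sum_le_sum_abs _ _) ?_
    exact le_of_eq (Finset.sum_congr rfl fun j _ => abs_mul _ _)
  have hstep1 : |∑ j ∈ range (n + 1), k (n - j) * x j| ^ p
      ≤ (∑ j ∈ range (n + 1), w j * |x j|) ^ p :=
    Real.rpow_le_rpow (abs_nonneg _) habs hp0
  have hSA : S ≤ A := by
    have : S = ∑ j ∈ range (n + 1), |k j| := by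
      rw [hS]; simpa using hrefl (fun m => |k m|) (fun _ => (1:ℝ)) n
    rw [this, hA]
    exact le_add_of_le_of_nonneg (hk.sum_le_tsum _ (fun j _ => abs_nonneg _)) zero_le_one
  have hkey : (∑ j ∈ range (n + 1), w j * |x j|) ^ p
      ≤ A ^ (p - 1) * ∑ j ∈ range (n + 1), w j * |x j| ^ p := by
    rcases eq_or_lt_of_le hSn with hS0 | hS0
    · -- S = 0 : all weights vanish
      have hall : ∀ j ∈ range (n + 1), w j = 0 := by
        intro j hj
        have := (Finset.sum_eq_zero_iff_of_nonneg (fun j _ => hwn j)).mp hS0.symm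
        exact this j hj
      have h1 : (∑ j ∈ range (n + 1), w j * |x j|) = 0 :=
        Finset.sum_eq_zero fun j hj => by rw [hall j hj, zero_mul]
      rw [h1, Real.zero_rpow (by linarith : p ≠ 0)]
      exact mul_nonneg (Real.rpow_nonneg (le_of_lt hA0) _)
        (Finset.sum_nonneg fun j _ => mul_nonneg (hwn j) (Real.rpow_nonneg (abs_nonneg _) _))
    · have hjensen := Real.rpow_arith_mean_le_arith_mean_rpow (range (n + 1))
        (fun j => w j / S) (fun j => |x j|)
        (fun j _ => div_nonneg (hwn j) hSn)
        (by rw [← Finset.sum_div, ← hS, div_self (ne_of_gt hS0)])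
        (fun j _ => abs_nonneg _) hp
      have hexp : (∑ j ∈ range (n + 1), (w j / S) * |x j|) = (∑ j ∈ range (n + 1), w j * |x j|) / S := by
        rw [Finset.sum_div]; exact Finset.sum_congr rfl fun j _ => by ring
      have hexp2 : (∑ j ∈ range (n + 1), (w j / S) * |x j| ^ p)
          = (∑ j ∈ range (n + 1), w j * |x j| ^ p) / S := by
        rw [Finset.sum_div]; exact Finset.sum_congr rfl fun j _ => by ring
      rw [hexp, hexp2, Real.div_rpow (Finset.sum_nonneg fun j _ =>
        mul_nonneg (hwn j) (abs_nonneg _)) hSn] at hjensen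
      -- hjensen : (∑ w|x|)^p / S^p ≤ (∑ w |x|^p)/S
      have hSp : (0:ℝ) < S ^ p := Real.rpow_pos_of_pos hS0 p
      have := (div_le_div_iff₀ hSp hS0).mp hjensen
      -- (∑ w |x|)^p * S ≤ (∑ w |x|^p) * S^p
      have h2 : (∑ j ∈ range (n + 1), w j * |x j|) ^ p
          ≤ (∑ j ∈ range (n + 1), w j * |x j| ^ p) * S ^ (p - 1) := by
        rw [Real.rpow_sub hS0, Real.rpow_one, ← mul_div_assoc]
        exact (le_div_iff₀ hS0).mpr this
      refine le_trans h2 ?_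
      rw [mul_comm (A ^ (p - 1))]
      refine mul_le_mul_of_nonneg_left ?_ (Finset.sum_nonneg fun j _ =>
        mul_nonneg (hwn j) (Real.rpow_nonneg (abs_nonneg _) _))
      exact Real.rpow_le_rpow hSn hSA (by linarith)
  exact le_trans hstep1 hkey

private lemma vlt_integrableOn_of_bound {Ω : Type*} [MeasurableSpace Ω] (P : Measure Ω)
    [IsFiniteMeasure P] {g : Ω → ℝ} (hg : Measurable g) {S : Set Ω} (hS : MeasurableSet S)
    (C : ℝ) (hC : ∀ ω ∈ S, |g ω| ≤ C) : IntegrableOn g S P := by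
  refine (integrable_const C).mono' hg.aestronglyMeasurable ?_
  refine (ae_restrict_iff' hS).2 (Filter.Eventually.of_forall fun ω hω => ?_)
  simpa [Real.norm_eq_abs] using hC ω hω

set_option maxHeartbeats 1000000 in
private lemma vlt_lower_bound {Ω : Type*} [MeasurableSpace Ω] (P : Measure Ω)
    [IsProbabilityMeasure P] {p : ℝ} (hp : 1 ≤ p) {ξ : Ω → ℝ} (hξ : Measurable ξ)
    (hD : MemD P ξ) :
    ∃ q κ : ℝ, 0 < q ∧ 0 < κ ∧ ∀ a s : ℝ,
      q * min 1 ((κ * (|a| + |s|)) ^ p) ≤ ∫ ω, min (|a + s * ξ ω| ^ p) 1 ∂P := by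
  have hp0 : (0:ℝ) ≤ p := le_trans zero_le_one hp
  have hpne : p ≠ 0 := by linarith
  obtain ⟨B₁, B₂, mB₁, mB₂, bd₁, bd₂, hne, hP₁, hP₂, he₁, he₂, hdet⟩ := hD
  set S₁ : Set Ω := ξ ⁻¹' B₁ with hS₁def
  set S₂ : Set Ω := ξ ⁻¹' B₂ with hS₂def
  have mS₁ : MeasurableSet S₁ := hξ mB₁
  have mS₂ : MeasurableSet S₂ := hξ mB₂
  set p₁ : ℝ := (P S₁).toReal with hp₁def
  set p₂ : ℝ := (P S₂).toReal with hp₂def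
  have hp₁ : 0 < p₁ := ENNReal.toReal_pos (ne_of_gt hP₁) (measure_ne_top P _)
  have hp₂ : 0 < p₂ := ENNReal.toReal_pos (ne_of_gt hP₂) (measure_ne_top P _)
  set e₁ : ℝ := ∫ ω in S₁, ξ ω ∂P with he₁def
  set e₂ : ℝ := ∫ ω in S₂, ξ ω ∂P with he₂def
  obtain ⟨M₀, hM₀⟩ := isBounded_iff_forall_norm_le.1 (bd₁.union bd₂)
  set M : ℝ := max M₀ 1 with hMdef
  have hM1 : (1:ℝ) ≤ M := le_max_right _ _
  have hM0 : (0:ℝ) < M := lt_of_lt_of_le one_pos hM1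
  have hMb₁ : ∀ ω ∈ S₁, |ξ ω| ≤ M := fun ω hω =>
    le_trans (by simpa [Real.norm_eq_abs] using hM₀ _ (Set.mem_union_left _ hω)) (le_max_left _ _)
  have hMb₂ : ∀ ω ∈ S₂, |ξ ω| ≤ M := fun ω hω =>
    le_trans (by simpa [Real.norm_eq_abs] using hM₀ _ (Set.mem_union_right _ hω)) (le_max_left _ _)
  set m₁ : ℝ := e₁ / p₁ with hm₁def
  set m₂ : ℝ := e₂ / p₂ with hm₂def
  have hm : m₁ ≠ m₂ := by
    intro h
    apply hdet
    rw [hm₁def, hm₂def, div_eq_div_iff (ne_of_gt hp₁) (ne_of_gt hp₂)] at h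
    nlinarith [h]
  set D : ℝ := |m₁ - m₂| with hDdef
  have hD0 : 0 < D := abs_pos.2 (sub_ne_zero.2 hm)
  set κ : ℝ := min (1/3 : ℝ) (D / (4 * (1 + 2 * M))) with hκdef
  set pm : ℝ := min p₁ p₂ with hpmdef
  have hpm : 0 < pm := lt_min hp₁ hp₂
  set q : ℝ := min pm (pm * D / (12 * M)) with hqdef
  have hκ0 : 0 < κ := lt_min (by norm_num) (by positivity)
  have hq0 : 0 < q := lt_min hpm (by positivity)
  refine ⟨q, κ, hq0, hκ0, fun a s => ?_⟩
  set t : ℝ := |a| + |s| with htdef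
  clear_value t
  have ht0 : 0 ≤ t := htdef ▸ add_nonneg (abs_nonneg _) (abs_nonneg _)
  set g : Ω → ℝ := fun ω => min (|a + s * ξ ω| ^ p) 1 with hgdef
  have hgmeas : Measurable g :=
    ((measurable_const.add (measurable_const.mul hξ)).abs.pow_const p).min measurable_const
  have hg0 : ∀ ω, 0 ≤ g ω := fun ω =>
    le_min (Real.rpow_nonneg (abs_nonneg _) p) zero_le_one
  have hg1 : ∀ ω, g ω ≤ 1 := fun ω => min_le_right _ _
  have hgint : Integrable g P :=
    (integrable_const (1:ℝ)).mono' hgmeas.aestronglyMeasurable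
      (Filter.Eventually.of_forall fun ω => by
        simpa [Real.norm_eq_abs, abs_le] using ⟨by linarith [hg0 ω], hg1 ω⟩)
  -- the schema
  have schema : ∀ E : Set Ω, MeasurableSet E → q ≤ (P E).toReal →
      (∀ ω ∈ E, κ * t ≤ |a + s * ξ ω|) →
      q * min 1 ((κ * t) ^ p) ≤ ∫ ω, g ω ∂P := by
    intro E mE hqE hlow
    have hmin0 : 0 ≤ min 1 ((κ * t) ^ p) :=
      le_min zero_le_one (Real.rpow_nonneg (by positivity) p)
    have h1 : ∀ ω ∈ E, min 1 ((κ * t) ^ p) ≤ g ω := by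
      intro ω hω
      refine le_min ?_ (min_le_left _ _)
      exact le_trans (min_le_right _ _)
        (Real.rpow_le_rpow (by positivity) (hlow ω hω) hp0)
    calc q * min 1 ((κ * t) ^ p) ≤ (P E).toReal * min 1 ((κ * t) ^ p) :=
          mul_le_mul_of_nonneg_right hqE hmin0
    _ = ∫ _ω in E, min 1 ((κ * t) ^ p) ∂P := by rw [setIntegral_const, smul_eq_mul]; rfl
    _ ≤ ∫ ω in E, g ω ∂P := by
        refine setIntegral_mono_on (integrableOn_const (measure_ne_top P E))
          hgint.integrableOn mE h1
    _ ≤ ∫ ω, g ω ∂P := setIntegral_le_integral hgint (Filter.Eventually.of_forall hg0)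
  by_cases ht : t = 0
  · have : (κ * t) = 0 := by rw [ht, mul_zero]
    rw [this, Real.zero_rpow hpne, min_eq_right zero_le_one, mul_zero]
    exact integral_nonneg hg0
  · have ht0' : 0 < t := lt_of_le_of_ne ht0 (Ne.symm ht)
    by_cases hcase : 2 * M * |s| < |a|
    · -- case |a| large: use S₁
      refine schema S₁ mS₁ (le_trans (le_trans (min_le_left _ _) (min_le_left _ _)) le_rfl) ?_
      intro ω hω
      have hb := hMb₁ ω hω
      have h1 : |s * ξ ω| ≤ |s| * M := by
        rw [abs_mul]
        exact mul_le_mul_of_nonneg_left hb (abs_nonneg _)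
      have h2 : |a| - |s| * M ≤ |a + s * ξ ω| := by
        have := abs_sub_abs_le_abs_sub a (-(s * ξ ω))
        simp only [sub_neg_eq_add, abs_neg] at this
        linarith
      have hsM : |s| * M ≤ |a| / 2 := by nlinarith [abs_nonneg s]
      have hta : t ≤ (3/2) * |a| := by
        have : |s| ≤ |a| / (2 * M) := by
          rw [le_div_iff₀ (by positivity)]
          nlinarith [abs_nonneg s]
        have h3 : |a| / (2 * M) ≤ |a| / 2 := by
          apply div_le_div_of_nonneg_left (abs_nonneg a) (by norm_num) (by linarith)
        rw [htdef]; linarith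
      have hκ3 : κ ≤ 1/3 := min_le_left _ _
      have : κ * t ≤ (1/3) * ((3/2) * |a|) :=
        mul_le_mul hκ3 hta ht0 (by norm_num)
      linarith
    · -- case |a| ≤ 2M|s|
      push_neg at hcase
      have hs0 : s ≠ 0 := by
        intro h
        rw [h, abs_zero, mul_zero] at hcase
        have : |a| = 0 := le_antisymm hcase (abs_nonneg a)
        rw [htdef, h, abs_zero, this] at ht0'
        simp at ht0'
      have hsabs : 0 < |s| := abs_pos.2 hs0
      set c : ℝ := -a / s with hcdef
      have hc2M : |c| ≤ 2 * M := by
        rw [hcdef, abs_div, abs_neg, div_le_iff₀ hsabs]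
        linarith
      -- the inner claim producing sets E
      have inner : ∀ S : Set Ω, MeasurableSet S → (∀ ω ∈ S, |ξ ω| ≤ M) →
          pm ≤ (P S).toReal →
          D / 2 ≤ |(∫ ω in S, ξ ω ∂P) / (P S).toReal - c| →
          0 < (P S).toReal →
          ∃ E : Set Ω, MeasurableSet E ∧ q ≤ (P E).toReal ∧
            ∀ ω ∈ E, D / 4 < |ξ ω - c| := by
        intro S mS hMb hpmS hfar hpS
        set pI : ℝ := (P S).toReal with hpIdef
        set eI : ℝ := ∫ ω in S, ξ ω ∂P with heIdef
        set T : Set Ω := {ω | D / 4 < |ξ ω - c|} with hTdef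
        have mT : MeasurableSet T :=
          measurableSet_lt measurable_const (hξ.sub_const c).abs
        refine ⟨S ∩ T, mS.inter mT, ?_, fun ω hω => hω.2⟩
        -- integrability
        have hintξ : IntegrableOn (fun ω => ξ ω - c) S P :=
          vlt_integrableOn_of_bound P (hξ.sub_const c) mS (M + 2*M)
            (fun ω hω => le_trans (abs_sub _ _) (add_le_add (hMb ω hω) hc2M))
        have hintabs : IntegrableOn (fun ω => |ξ ω - c|) S P := hintξ.abs
        have hlow1 : pI * (D / 2) ≤ |∫ ω in S, (ξ ω - c) ∂P| := by
          have hsub : ∫ ω in S, (ξ ω - c) ∂P = eI - pI * c := by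
            rw [integral_sub (vlt_integrableOn_of_bound P hξ mS M hMb)
              (integrableOn_const (measure_ne_top P S))]
            rw [setIntegral_const, smul_eq_mul, heIdef]; rfl
          rw [hsub]
          have : eI - pI * c = pI * (eI / pI - c) := by field_simp
          rw [this, abs_mul, abs_of_pos hpS]
          exact mul_le_mul_of_nonneg_left hfar (le_of_lt hpS)
        have hup : |∫ ω in S, (ξ ω - c) ∂P| ≤ ∫ ω in S, |ξ ω - c| ∂P := by
          simpa [Real.norm_eq_abs] using
            norm_integral_le_integral_norm (μ := P.restrict S) (f := fun ω => ξ ω - c)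
        have hsplit : ∫ ω in S, |ξ ω - c| ∂P
            = (∫ ω in S ∩ T, |ξ ω - c| ∂P) + ∫ ω in S \ T, |ξ ω - c| ∂P :=
          (integral_inter_add_diff mT hintabs).symm
        have hE : ∫ ω in S ∩ T, |ξ ω - c| ∂P ≤ (P (S ∩ T)).toReal * (3 * M) := by
          calc ∫ ω in S ∩ T, |ξ ω - c| ∂P ≤ ∫ _ω in S ∩ T, 3 * M ∂P := by
                refine setIntegral_mono_on (hintabs.mono_set Set.inter_subset_left)
                  (integrableOn_const (measure_ne_top P _)) (mS.inter mT)
                  (fun ω hω => ?_)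
                have := abs_sub (ξ ω) c
                have h1 := hMb ω hω.1
                linarith [this, h1, hc2M]
          _ = (P (S ∩ T)).toReal * (3 * M) := by rw [setIntegral_const, smul_eq_mul]; rfl
        have hdiff : ∫ ω in S \ T, |ξ ω - c| ∂P ≤ pI * (D / 4) := by
          calc ∫ ω in S \ T, |ξ ω - c| ∂P ≤ ∫ _ω in S \ T, D / 4 ∂P := by
                refine setIntegral_mono_on (hintabs.mono_set Set.diff_subset)
                  (integrableOn_const (measure_ne_top P _)) (mS.diff mT)
                  (fun ω hω => ?_)
                have : ¬ (D / 4 < |ξ ω - c|) := hω.2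
                linarith [not_lt.mp this]
          _ = (P (S \ T)).toReal * (D / 4) := by rw [setIntegral_const, smul_eq_mul]; rfl
          _ ≤ pI * (D / 4) := by
                refine mul_le_mul_of_nonneg_right ?_ (by positivity)
                exact ENNReal.toReal_mono (measure_ne_top P _) (measure_mono Set.diff_subset)
        have hPE : pI * D / (12 * M) ≤ (P (S ∩ T)).toReal := by
          have h := le_trans hlow1 hup
          rw [hsplit] at h
          have h3M : (0:ℝ) < 3 * M := by linarith
          rw [div_le_iff₀ (by positivity : (0:ℝ) < 12 * M)]
          linarith [hE, hdiff, h]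
        refine le_trans ?_ hPE
        refine le_trans (min_le_right _ _) ?_
        have h12 : (0:ℝ) < 12 * M := by positivity
        have hnum : pm * D ≤ pI * D := mul_le_mul_of_nonneg_right hpmS hD0.le
        exact (div_le_div_iff_of_pos_right h12).2 hnum
      -- pick the far conditional mean
      have hfar : D / 2 ≤ |m₁ - c| ∨ D / 2 ≤ |m₂ - c| := by
        by_contra h
        push_neg at h
        have := abs_sub_abs_le_abs_sub (m₁ - c) (m₂ - c)
        have h2 : |m₁ - m₂| ≤ |m₁ - c| + |m₂ - c| := by
          have : m₁ - m₂ = (m₁ - c) - (m₂ - c) := by ring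
          rw [this]
          exact abs_sub _ _
        rw [← hDdef] at h2
        linarith [h.1, h.2]
      have hconc : ∃ E : Set Ω, MeasurableSet E ∧ q ≤ (P E).toReal ∧
          ∀ ω ∈ E, D / 4 < |ξ ω - c| := by
        rcases hfar with hf | hf
        · exact inner S₁ mS₁ hMb₁ (min_le_left _ _) hf hp₁
        · exact inner S₂ mS₂ hMb₂ (min_le_right _ _) hf hp₂
      obtain ⟨E, mE, hqE, hEfar⟩ := hconc
      refine schema E mE hqE ?_
      intro ω hω
      have h1 : a + s * ξ ω = s * (ξ ω - c) := by
        rw [hcdef]; field_simp; ring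
      rw [h1, abs_mul]
      have h2 : κ * t ≤ |s| * (D / 4) := by
        have hts : t ≤ (1 + 2 * M) * |s| := by rw [htdef]; nlinarith [hcase]
        have hκD : κ ≤ D / (4 * (1 + 2 * M)) := min_le_right _ _
        calc κ * t ≤ (D / (4 * (1 + 2 * M))) * ((1 + 2 * M) * |s|) := by
              apply mul_le_mul hκD hts ht0 (by positivity)
        _ = |s| * (D / 4) := by field_simp
      exact le_trans h2 (mul_le_mul_of_nonneg_left (le_of_lt (hEfar ω hω)) (abs_nonneg s))

private lemma vlt_exp_neg_le {z : ℝ} (h0 : 0 ≤ z) (h1 : z ≤ 1) :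
    Real.exp (-z) ≤ 1 - (1 - Real.exp (-1)) * z := by
  calc Real.exp (-z) = Real.exp (z * (-1) + (1 - z) * 0) := by norm_num
  _ ≤ z * Real.exp (-1) + (1 - z) * Real.exp 0 :=
      convexOn_exp.2 (Set.mem_univ _) (Set.mem_univ _) h0 (by linarith) (by ring)
  _ = 1 - (1 - Real.exp (-1)) * z := by rw [Real.exp_zero]; ring

private lemma vlt_integral_prod {Ω : Type*} [MeasurableSpace Ω] (P : Measure Ω)
    [IsProbabilityMeasure P] (F : ℕ → Ω → ℝ) (hmeas : ∀ n, Measurable (F n))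
    (hbd : ∀ n ω, |F n ω| ≤ 1)
    (hind : iIndepFun F P) (N : ℕ) :
    ∫ ω, ∏ n ∈ range N, F n ω ∂P = ∏ n ∈ range N, ∫ ω, F n ω ∂P := by
  induction N with
  | zero => simp
  | succ N ih =>
      have hpm : Measurable (∏ n ∈ range N, F n) := by
        rw [Finset.prod_fn]
        exact Finset.measurable_prod _ (fun n _ => hmeas n)
      have hpbd : ∀ ω, |(∏ n ∈ range N, F n) ω| ≤ 1 := by
        intro ω
        rw [Finset.prod_apply, Finset.abs_prod]
        exact Finset.prod_le_one (fun n _ => abs_nonneg _) (fun n _ => hbd n ω)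
      have hintp : Integrable (∏ n ∈ range N, F n) P :=
        vlt_integrable_of_bound P hpm 1 hpbd
      have hintN : Integrable (F N) P := vlt_integrable_of_bound P (hmeas N) 1 (hbd N)
      have hIF : IndepFun (∏ n ∈ range N, F n) (F N) P :=
        hind.indepFun_prod_range_succ hmeas N
      have hmul := hIF.integral_mul_eq_mul_integral hintp.aestronglyMeasurable hintN.aestronglyMeasurable
      calc ∫ ω, ∏ n ∈ range (N + 1), F n ω ∂P
          = ∫ ω, ((∏ n ∈ range N, F n) * F N) ω ∂P := by
            refine integral_congr_ae (Filter.Eventually.of_forall fun ω => ?_)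
            simp [Finset.prod_range_succ, Finset.prod_apply]
      _ = (∫ ω, (∏ n ∈ range N, F n) ω ∂P) * ∫ ω, F N ω ∂P := hmul
      _ = ∏ n ∈ range (N + 1), ∫ ω, F n ω ∂P := by
            rw [Finset.prod_range_succ, ← ih]
            congr 1
            refine integral_congr_ae (Filter.Eventually.of_forall fun ω => ?_)
            simp [Finset.prod_apply]

private lemma vlt_core {Ω : Type*} [MeasurableSpace Ω] (P : Measure Ω) [IsProbabilityMeasure P]
    {p : ℝ} (hp : 1 ≤ p) (a s : ℕ → ℝ) (ζ : ℕ → Ω → ℝ) (hζ : ∀ n, Measurable (ζ n))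
    (hind : iIndepFun ζ P)
    (ξ : Ω → ℝ) (hξ : Measurable ξ) (hD : MemD P ξ)
    (hdist : ∀ n, Measure.map (ζ n) P = Measure.map ξ P)
    (hsum : ∀ᵐ ω ∂P, Summable fun n => |a n + s n * ζ n ω| ^ p) :
    (Summable fun n => |a n| ^ p) ∧ (Summable fun n => |s n| ^ p) := by
  have hp0 : (0:ℝ) ≤ p := le_trans zero_le_one hp
  set z : ℕ → ℝ → ℝ := fun n x => min (|a n + s n * x| ^ p) 1 with hzdef
  have hzmeas : ∀ n, Measurable (z n) := fun n =>
    ((measurable_const.add (measurable_const.mul measurable_id)).abs.pow_const p).min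
      measurable_const
  have hz0 : ∀ n x, 0 ≤ z n x := fun n x =>
    le_min (Real.rpow_nonneg (abs_nonneg _) p) zero_le_one
  have hz1 : ∀ n x, z n x ≤ 1 := fun n x => min_le_right _ _
  set Z : ℕ → Ω → ℝ := fun n ω => z n (ζ n ω) with hZdef
  have hZmeas : ∀ n, Measurable (Z n) := fun n => (hzmeas n).comp (hζ n)
  have hZint : ∀ n, Integrable (Z n) P := fun n =>
    vlt_integrable_of_bound P (hZmeas n) 1
      (fun ω => abs_le.2 ⟨by linarith [hz0 n (ζ n ω)], hz1 n (ζ n ω)⟩)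
  -- the independent factors
  set F : ℕ → Ω → ℝ := fun n => (fun x => Real.exp (-(z n x))) ∘ ζ n with hFdef
  have hFmeas : ∀ n, Measurable (F n) := fun n => ((hzmeas n).neg.exp).comp (hζ n)
  have hF0 : ∀ n ω, 0 < F n ω := fun n ω => Real.exp_pos _
  have hF1 : ∀ n ω, F n ω ≤ 1 := fun n ω => by
    rw [hFdef]
    simp only [Function.comp_apply]
    rw [show (1:ℝ) = Real.exp 0 by rw [Real.exp_zero]]
    exact Real.exp_le_exp.2 (by simpa using hz0 n (ζ n ω))
  have hFbd : ∀ n ω, |F n ω| ≤ 1 := fun n ω =>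
    abs_le.2 ⟨by linarith [hF0 n ω], hF1 n ω⟩
  have hFind : iIndepFun F P :=
    hind.comp _ (fun n => (hzmeas n).neg.exp)
  have hFint : ∀ n, Integrable (F n) P := fun n =>
    vlt_integrable_of_bound P (hFmeas n) 1 (hFbd n)
  have prodEq : ∀ N, ∫ ω, ∏ n ∈ range N, F n ω ∂P = ∏ n ∈ range N, ∫ ω, F n ω ∂P :=
    vlt_integral_prod P F hFmeas hFbd hFind
  -- a positive lower bound on the partial products
  set A : ℕ → Set Ω := fun k => {ω | ∀ N, (∑ n ∈ range N, Z n ω) ≤ (k:ℝ)} with hAdef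
  have mA : ∀ k, MeasurableSet (A k) := by
    intro k
    have : A k = ⋂ N, {ω | (∑ n ∈ range N, Z n ω) ≤ (k:ℝ)} := by
      ext ω; simp [hAdef]
    rw [this]
    exact MeasurableSet.iInter fun N =>
      measurableSet_le (Finset.measurable_sum _ (fun n _ => hZmeas n)) measurable_const
  have hae : ∀ᵐ ω ∂P, ∃ k : ℕ, ω ∈ A k := by
    filter_upwards [hsum] with ω hω
    have hZsum : Summable fun n => Z n ω :=
      Summable.of_nonneg_of_le (fun n => hz0 n (ζ n ω)) (fun n => min_le_left _ _) hω
    obtain ⟨k, hk⟩ := exists_nat_ge (∑' n, Z n ω)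
    exact ⟨k, fun N => le_trans (hZsum.sum_le_tsum (range N)
      (fun n _ => hz0 n (ζ n ω))) hk⟩
  have hex : ∃ k, P (A k) ≠ 0 := by
    by_contra h
    push_neg at h
    have hU : P (⋃ k, A k) = 0 := measure_iUnion_null h
    have : ∀ᵐ ω ∂P, ω ∈ ⋃ k, A k := hae.mono fun ω ⟨k, hk⟩ => Set.mem_iUnion.2 ⟨k, hk⟩
    have h1 : P (⋃ k, A k) = 1 := by
      rw [← prob_compl_eq_zero_iff (MeasurableSet.iUnion mA), ← mem_ae_iff]
      exact this
    rw [hU] at h1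
    exact zero_ne_one h1
  obtain ⟨k, hk⟩ := hex
  set δ : ℝ := Real.exp (-(k:ℝ)) * (P (A k)).toReal with hδdef
  have hδ0 : 0 < δ := mul_pos (Real.exp_pos _)
    (ENNReal.toReal_pos hk (measure_ne_top P _))
  have hδle : ∀ N, δ ≤ ∫ ω, ∏ n ∈ range N, F n ω ∂P := by
    intro N
    have hintp : Integrable (fun ω => ∏ n ∈ range N, F n ω) P := by
      refine vlt_integrable_of_bound P ?_ 1 ?_
      · exact Finset.measurable_prod _ (fun n _ => hFmeas n)
      · intro ω
        rw [Finset.abs_prod]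
        exact Finset.prod_le_one (fun n _ => abs_nonneg _) (fun n _ => hFbd n ω)
    have key : ∀ ω ∈ A k, Real.exp (-(k:ℝ)) ≤ ∏ n ∈ range N, F n ω := by
      intro ω hω
      have : ∏ n ∈ range N, F n ω = Real.exp (-(∑ n ∈ range N, Z n ω)) := by
        rw [← Finset.sum_neg_distrib, Real.exp_sum]
        rfl
      rw [this]
      exact Real.exp_le_exp.2 (neg_le_neg (hω N))
    calc δ = (P (A k)).toReal * Real.exp (-(k:ℝ)) := by rw [hδdef]; ring
    _ = ∫ _ω in A k, Real.exp (-(k:ℝ)) ∂P := by rw [setIntegral_const, smul_eq_mul]; rfl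
    _ ≤ ∫ ω in A k, ∏ n ∈ range N, F n ω ∂P := by
        refine setIntegral_mono_on (integrableOn_const (measure_ne_top P _))
          hintp.integrableOn (mA k) key
    _ ≤ ∫ ω, ∏ n ∈ range N, F n ω ∂P := by
        refine setIntegral_le_integral hintp (Filter.Eventually.of_forall fun ω => ?_)
        exact Finset.prod_nonneg fun n _ => (hF0 n ω).le
  -- the exponential moment bound
  set c : ℝ := 1 - Real.exp (-1) with hcdef
  have hc0 : 0 < c := by
    rw [hcdef]
    have : Real.exp (-1) < Real.exp 0 := Real.exp_lt_exp.2 (by norm_num)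
    rw [Real.exp_zero] at this
    linarith
  have hFle : ∀ n, ∫ ω, F n ω ∂P ≤ Real.exp (-(c * ∫ ω, Z n ω ∂P)) := by
    intro n
    have h1 : ∫ ω, F n ω ∂P ≤ ∫ ω, (1 - c * Z n ω) ∂P := by
      refine integral_mono (hFint n) ((integrable_const 1).sub ((hZint n).const_mul c)) ?_
      intro ω
      exact vlt_exp_neg_le (hz0 n (ζ n ω)) (hz1 n (ζ n ω))
    have h2 : ∫ ω, (1 - c * Z n ω) ∂P = 1 - c * ∫ ω, Z n ω ∂P := by
      rw [integral_sub (integrable_const 1) ((hZint n).const_mul c), integral_const,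
        integral_const_mul]
      simp
    have h3 : 1 - c * ∫ ω, Z n ω ∂P ≤ Real.exp (-(c * ∫ ω, Z n ω ∂P)) := by
      have := Real.add_one_le_exp (-(c * ∫ ω, Z n ω ∂P))
      linarith
    linarith [h1, h2.le, h2.ge, h3]
  have hEZnn : ∀ n, 0 ≤ ∫ ω, Z n ω ∂P := fun n =>
    integral_nonneg fun ω => hz0 n (ζ n ω)
  have hEZsum : Summable fun n => ∫ ω, Z n ω ∂P := by
    refine summable_of_sum_range_le hEZnn (c := (-Real.log δ) / c) ?_
    intro N
    have h1 : δ ≤ Real.exp (-(c * ∑ n ∈ range N, ∫ ω, Z n ω ∂P)) := by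
      calc δ ≤ ∫ ω, ∏ n ∈ range N, F n ω ∂P := hδle N
      _ = ∏ n ∈ range N, ∫ ω, F n ω ∂P := prodEq N
      _ ≤ ∏ n ∈ range N, Real.exp (-(c * ∫ ω, Z n ω ∂P)) := by
          refine Finset.prod_le_prod (fun n _ => ?_) (fun n _ => hFle n)
          exact integral_nonneg fun ω => (hF0 n ω).le
      _ = Real.exp (-(c * ∑ n ∈ range N, ∫ ω, Z n ω ∂P)) := by
          rw [← Real.exp_sum]
          congr 1
          rw [Finset.mul_sum]
          simp [Finset.sum_neg_distrib]
    have h2 : Real.log δ ≤ -(c * ∑ n ∈ range N, ∫ ω, Z n ω ∂P) := by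
      have := Real.log_le_log hδ0 h1
      rwa [Real.log_exp] at this
    rw [le_div_iff₀ hc0]
    linarith
  -- transfer to the fixed random variable ξ and use the lower bound
  have hEZeq : ∀ n, ∫ ω, Z n ω ∂P = ∫ ω, z n (ξ ω) ∂P := by
    intro n
    have h1 : ∫ ω, z n (ζ n ω) ∂P = ∫ x, z n x ∂(Measure.map (ζ n) P) :=
      (integral_map (hζ n).aemeasurable (hzmeas n).aestronglyMeasurable).symm
    have h2 : ∫ x, z n x ∂(Measure.map ξ P) = ∫ ω, z n (ξ ω) ∂P :=
      integral_map hξ.aemeasurable (hzmeas n).aestronglyMeasurable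
    rw [hZdef]
    simp only []
    rw [h1, hdist n, h2]
  obtain ⟨q, κ, hq, hκ, hlb⟩ := vlt_lower_bound P hp hξ hD
  set t : ℕ → ℝ := fun n => |a n| + |s n| with htdef
  have ht0 : ∀ n, 0 ≤ t n := fun n => add_nonneg (abs_nonneg _) (abs_nonneg _)
  have hminsum : Summable fun n => min 1 ((κ * t n) ^ p) := by
    refine Summable.of_nonneg_of_le
      (fun n => le_min zero_le_one (Real.rpow_nonneg (by positivity) p))
      (fun n => ?_) (hEZsum.div_const q)
    rw [le_div_iff₀ hq]
    have := hlb (a n) (s n)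
    rw [← hEZeq n] at this
    calc min 1 ((κ * t n) ^ p) * q = q * min 1 ((κ * t n) ^ p) := by ring
    _ ≤ ∫ ω, Z n ω ∂P := this
  have h0 : Tendsto (fun n => min 1 ((κ * t n) ^ p)) atTop (nhds 0) :=
    hminsum.tendsto_atTop_zero
  have hev : ∀ᶠ n in atTop, min 1 ((κ * t n) ^ p) = (κ * t n) ^ p := by
    filter_upwards [h0.eventually_lt_const (by norm_num : (0:ℝ) < 1)] with n hn
    rcases le_or_gt 1 ((κ * t n) ^ p) with h | h
    · rw [min_eq_left h] at hn; norm_num at hn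
    · exact min_eq_right h.le
  obtain ⟨N, hN⟩ := eventually_atTop.1 hev
  have hsum1 : Summable fun n => (κ * t (n + N)) ^ p := by
    refine ((summable_nat_add_iff N).2 hminsum).congr fun n => ?_
    exact hN (n + N) (Nat.le_add_left N n)
  have hκp : 0 < κ ^ p := Real.rpow_pos_of_pos hκ p
  have hsum2 : Summable fun n => t (n + N) ^ p := by
    refine (hsum1.mul_left ((κ ^ p)⁻¹)).congr fun n => ?_
    rw [Real.mul_rpow hκ.le (ht0 _)]
    field_simp
  have hsumt : Summable fun n => t n ^ p := (summable_nat_add_iff N).1 hsum2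
  constructor
  · refine Summable.of_nonneg_of_le (fun n => Real.rpow_nonneg (abs_nonneg _) p)
      (fun n => Real.rpow_le_rpow (abs_nonneg _) (by rw [htdef]; simp [abs_nonneg]) hp0) hsumt
  · refine Summable.of_nonneg_of_le (fun n => Real.rpow_nonneg (abs_nonneg _) p)
      (fun n => Real.rpow_le_rpow (abs_nonneg _) (by rw [htdef]; simp [abs_nonneg]) hp0) hsumt

set_option maxHeartbeats 1000000 in
/-- Converse `ℓ^p`-summability for the `d`-dimensional stochastic Volterra summation
equation `X(n+1) = X(n) + ∑_{j=0}^n K(n−j) X(j) + f(n) + σ(n) ξ(n+1)`, `X(0) = ξ₀`, with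
diagonal `σ(n)`, i.i.d. noise `(ξ(n))_{n ≥ 1}` whose components are equal in distribution
to fixed random variables of class `𝔻` (no moment condition), and with the kernel `K` and
the resolvent `R` both in `ℓ¹`:  if `X ∈ ℓ^p` almost surely then `f ∈ ℓ^p` and `σ ∈ ℓ^p`.
(Here `η n` plays the role of `ξ(n+1)`.) -/
theorem lp_summability_converse_volterra {Ω : Type*} [MeasurableSpace Ω] (P : Measure Ω)
    [IsProbabilityMeasure P] (d : ℕ) (p : ℝ) (hp : 1 ≤ p)
    (K σmat R : ℕ → Matrix (Fin d) (Fin d) ℝ) (f : ℕ → Fin d → ℝ)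
    (ξ₀ : Ω → Fin d → ℝ) (hξ₀ : Measurable ξ₀)
    (η : ℕ → Ω → Fin d → ℝ) (hηmeas : ∀ n, Measurable (η n))
    (hindep : iIndepFun η P)
    (hident : ∀ n, Measure.map (η n) P = Measure.map (η 0) P)
    (ξcomp : Fin d → Ω → ℝ) (hξcompmeas : ∀ j, Measurable (ξcomp j))
    (hD : ∀ j, MemD P (ξcomp j))
    (hdist : ∀ n j, Measure.map (fun ω => η n ω j) P = Measure.map (ξcomp j) P)
    (hσdiag : ∀ n, (σmat n).IsDiag)
    (hK : ∀ i j, Summable fun n => |K n i j|)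
    (hR0 : R 0 = 1)
    (hRrec : ∀ n, R (n + 1) = R n + ∑ j ∈ Finset.range (n + 1), K (n - j) * R j)
    (hR : ∀ i j, Summable fun n => |R n i j|)
    (X : ℕ → Ω → Fin d → ℝ)
    (hX0 : ∀ ω, X 0 ω = ξ₀ ω)
    (hXrec : ∀ n ω, X (n + 1) ω = X n ω
      + (∑ j ∈ Finset.range (n + 1), (K (n - j)).mulVec (X j ω))
      + f n + (σmat n).mulVec (η n ω))
    (hXlp : ∀ᵐ ω ∂P, ∀ i, Summable fun n => |X n ω i| ^ p) :
    (∀ i, Summable fun n => |f n i| ^ p) ∧ (∀ i j, Summable fun n => |σmat n i j| ^ p) := by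
  have hp0 : (0:ℝ) ≤ p := le_trans zero_le_one hp
  have hpne : p ≠ 0 := by linarith
  have hdiagmv : ∀ n (v : Fin d → ℝ) (i : Fin d),
      (σmat n).mulVec v i = σmat n i i * v i := by
    intro n v i
    simp only [Matrix.mulVec, dotProduct]
    refine Finset.sum_eq_single i (fun l _ hl => ?_) (by simp)
    rw [hσdiag n (Ne.symm hl), zero_mul]
  have hKmv : ∀ n j (v : Fin d → ℝ) (i : Fin d),
      (K (n - j)).mulVec v i = ∑ l, K (n - j) i l * v l := by
    intro n j v i
    simp [Matrix.mulVec, dotProduct]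
  have key : ∀ i : Fin d,
      (Summable fun n => |f n i| ^ p) ∧ (Summable fun n => |σmat n i i| ^ p) := by
    intro i
    have hζmeas : ∀ n, Measurable fun ω => η n ω i := fun n =>
      (measurable_pi_apply i).comp (hηmeas n)
    have hind : iIndepFun (fun n => (fun v : Fin d → ℝ => v i) ∘ η n) P :=
      hindep.comp _ (fun n => measurable_pi_apply i)
    have hsum : ∀ᵐ ω ∂P, Summable fun n => |f n i + σmat n i i * η n ω i| ^ p := by
      filter_upwards [hXlp] with ω hω
      have heq : ∀ n, f n i + σmat n i i * η n ω i
          = X (n+1) ω i + -(X n ω i)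
            + -(∑ l, ∑ j ∈ range (n+1), K (n - j) i l * X j ω l) := by
        intro n
        have h := congrFun (hXrec n ω) i
        simp only [Pi.add_apply] at h
        rw [hdiagmv n (η n ω) i] at h
        have hconv : (∑ j ∈ range (n+1), (K (n - j)).mulVec (X j ω)) i
            = ∑ l, ∑ j ∈ range (n+1), K (n - j) i l * X j ω l := by
          rw [Finset.sum_apply]
          rw [Finset.sum_comm]
          refine Finset.sum_congr rfl fun j _ => ?_
          exact hKmv n j (X j ω) i
        rw [hconv] at h
        linarith
      refine Summable.congr ?_ (fun n => congrArg (fun x => |x| ^ p) (heq n).symm)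
      have h1 : Summable fun n => |X (n+1) ω i| ^ p := (summable_nat_add_iff 1).2 (hω i)
      have h2 : Summable fun n => |-(X n ω i)| ^ p := by simpa [abs_neg] using hω i
      have hconv : Summable fun n =>
          |-(∑ l, ∑ j ∈ range (n+1), K (n - j) i l * X j ω l)| ^ p := by
        have : Summable fun n => |∑ l, ∑ j ∈ range (n+1), K (n - j) i l * X j ω l| ^ p := by
          refine vlt_summable_rpow_sum hp
            (g := fun l n => ∑ j ∈ range (n+1), K (n - j) i l * X j ω l)
            Finset.univ (fun l _ => ?_)
          exact vlt_summable_conv hp (k := fun m => K m i l) (x := fun j => X j ω l)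
            (hK i l) (hω l)
        simpa [abs_neg] using this
      exact vlt_summable_rpow_add hp (vlt_summable_rpow_add hp h1 h2) hconv
    exact vlt_core P hp (fun n => f n i) (fun n => σmat n i i)
      (fun n => (fun v : Fin d → ℝ => v i) ∘ η n) hζmeas hind (ξcomp i) (hξcompmeas i)
      (hD i) (fun n => hdist n i) hsum
  refine ⟨fun i => (key i).1, fun i j => ?_⟩
  by_cases h : i = j
  · subst h; exact (key i).2
  · have hz : ∀ n, σmat n i j = 0 := fun n => hσdiag n h
    refine summable_zero.congr fun n => ?_
    rw [hz n, abs_zero, Real.zero_rpow hpne]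
end

section
/- Let (f(n))_{n≥0} and (σ(n))_{n≥0} be deterministic real (scalar) sequences, and let (ξ(n))_{n≥1} be an i.i.d. sequence of real-valued random variables, each equal in distribution to a random variable ξ belonging to the class 𝔻. If for some p ∈ [1, ∞) one has ∑_{n=0}^∞ |f(n) + σ(n)ξ(n+1)|^p < ∞ almost surely, then (f(n)) ∈ ℓ^p(ℤ₊; ℝ) and (σ(n)) ∈ ℓ^p(ℤ₊; ℝ). -/
open MeasureTheory ProbabilityTheory Finset
open scoped ENNReal

/-- Key second-moment lemma: if `(Aₙ)` are pairwise independent events with probabilities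
bounded below by `δ > 0`, and `∑ aₙ 1_{Aₙ}` converges a.s., then `∑ aₙ < ∞`. -/
lemma core_summable{Ω : Type*} [MeasurableSpace Ω] (P : Measure Ω) [IsProbabilityMeasure P]
    (a : ℕ → ℝ) (ha : ∀ n, 0 ≤ a n) (A : ℕ → Set Ω) (hA : ∀ n, MeasurableSet (A n))
    (δ : ℝ) (hδ : 0 < δ) (hPA : ∀ n, δ ≤ (P (A n)).toReal)
    (hpair : ∀ m n, m ≠ n → P (A m ∩ A n) = P (A m) * P (A n))
    (hsum : ∀ᵐ ω ∂P, Summable fun n => (A n).indicator (fun _ => a n) ω) :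
    Summable a := by
  by_contra hns
  set b : ℕ → ℝ := fun n => min (a n) 1 with hbdef
  have hb0 : ∀ n, 0 ≤ b n := fun n => le_min (ha n) one_pos.le
  have hb1 : ∀ n, b n ≤ 1 := fun n => min_le_right _ _
  have hba : ∀ n, b n ≤ a n := fun n => min_le_left _ _
  have hnsb : ¬ Summable b := by
    intro hsb
    apply hns
    have h0 : Filter.Tendsto b Filter.atTop (nhds 0) := hsb.tendsto_atTop_zero
    have hev : ∀ᶠ n in Filter.atTop, b n < 1 := h0.eventually_lt_const one_pos
    obtain ⟨N, hN⟩ := Filter.eventually_atTop.1 hev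
    rw [← summable_nat_add_iff N]
    refine ((summable_nat_add_iff N).2 hsb).congr fun n => ?_
    have h1 : b (n + N) < 1 := hN _ (Nat.le_add_left _ _)
    have : a (n + N) ≤ 1 := by
      by_contra hc
      push_neg at hc
      simp only [hbdef, min_eq_right hc.le] at h1
      linarith
    simp [hbdef, min_eq_left this]
  have hBtop : Filter.Tendsto (fun N => ∑ i ∈ range N, b i) Filter.atTop Filter.atTop :=
    (not_summable_iff_tendsto_nat_atTop_of_nonneg hb0).1 hnsb
  set B : ℕ → ℝ := fun N => ∑ i ∈ range N, b i with hBdef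
  set q : ℕ → ℝ := fun n => (P (A n)).toReal with hqdef
  have hq0 : ∀ n, 0 ≤ q n := fun n => ENNReal.toReal_nonneg
  have hq1 : ∀ n, q n ≤ 1 := by
    intro n
    have := prob_le_one (μ := P) (s := A n)
    simpa [hqdef] using ENNReal.toReal_mono (by simp) this
  set X : ℕ → Ω → ℝ := fun n => (A n).indicator (fun _ => b n) with hXdef
  have hXmeas : ∀ n, Measurable (X n) := fun n => measurable_const.indicator (hA n)
  have hXint : ∀ n, Integrable (X n) P := fun n => (integrable_const (b n)).indicator (hA n)
  have hX0 : ∀ n ω, 0 ≤ X n ω := by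
    intro n ω
    exact Set.indicator_nonneg (fun _ _ => hb0 n) ω
  set S : ℕ → Ω → ℝ := fun N ω => ∑ n ∈ range N, X n ω with hSdef
  have hSmeas : ∀ N, Measurable (S N) := fun N => Finset.measurable_sum _ fun n _ => hXmeas n
  have hSint : ∀ N, Integrable (S N) P := fun N => integrable_finset_sum _ fun n _ => hXint n
  have hXX : ∀ m n, (fun ω => X m ω * X n ω) = (A m ∩ A n).indicator (fun _ => b m * b n) := by
    intro m n
    funext ω
    by_cases h1 : ω ∈ A m <;> by_cases h2 : ω ∈ A n <;>
      simp [hXdef, Set.indicator_apply, h1, h2, Set.mem_inter_iff]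
  have hXXint : ∀ m n, Integrable (fun ω => X m ω * X n ω) P := by
    intro m n
    rw [hXX]
    exact (integrable_const _).indicator ((hA m).inter (hA n))
  have hEX : ∀ n, ∫ ω, X n ω ∂P = q n * b n := by
    intro n
    simp [hXdef, integral_indicator_const (b n) (hA n), hqdef, smul_eq_mul, measureReal_def]
  have hEXX : ∀ m n, m ≠ n → ∫ ω, X m ω * X n ω ∂P = (q m * b m) * (q n * b n) := by
    intro m n hmn
    rw [hXX]
    rw [integral_indicator_const _ ((hA m).inter (hA n))]
    rw [measureReal_def, hpair m n hmn]
    simp [hqdef, ENNReal.toReal_mul, smul_eq_mul]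
    ring
  have hEXXn : ∀ n, ∫ ω, X n ω * X n ω ∂P = q n * (b n * b n) := by
    intro n
    rw [hXX, Set.inter_self, integral_indicator_const _ (hA n)]
    simp only [hqdef, smul_eq_mul, measureReal_def]
  set m : ℕ → ℝ := fun N => ∑ n ∈ range N, q n * b n with hmdef
  have hmB : ∀ N, δ * B N ≤ m N := by
    intro N
    rw [hBdef, hmdef]
    simp only
    rw [Finset.mul_sum]
    refine Finset.sum_le_sum fun n _ => ?_
    exact mul_le_mul_of_nonneg_right (hPA n) (hb0 n)
  have hES : ∀ N, ∫ ω, S N ω ∂P = m N := by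
    intro N
    rw [hSdef, hmdef]
    simp only
    rw [integral_finset_sum _ fun n _ => hXint n]
    exact Finset.sum_congr rfl fun n _ => hEX n
  -- second moment
  have hS2 : ∀ N ω, S N ω * S N ω = ∑ i ∈ range N, ∑ j ∈ range N, X i ω * X j ω := by
    intro N ω
    rw [hSdef]
    simp only
    rw [Finset.sum_mul_sum]
  have hS2int : ∀ N, Integrable (fun ω => S N ω * S N ω) P := by
    intro N
    have : (fun ω => S N ω * S N ω)
        = fun ω => ∑ i ∈ range N, ∑ j ∈ range N, X i ω * X j ω := by
      funext ω; exact hS2 N ω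
    rw [this]
    exact integrable_finset_sum _ fun i _ => integrable_finset_sum _ fun j _ => hXXint i j
  have hES2 : ∀ N, ∫ ω, S N ω * S N ω ∂P
      = ∑ i ∈ range N, ∑ j ∈ range N, ∫ ω, X i ω * X j ω ∂P := by
    intro N
    have : (fun ω => S N ω * S N ω)
        = fun ω => ∑ i ∈ range N, ∑ j ∈ range N, X i ω * X j ω := by
      funext ω; exact hS2 N ω
    rw [this, integral_finset_sum _ fun i _ => integrable_finset_sum _ fun j _ => hXXint i j]
    exact Finset.sum_congr rfl fun i _ =>
      integral_finset_sum _ fun j _ => hXXint i j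
  have hVar : ∀ N, ∫ ω, (S N ω - m N) ^ 2 ∂P ≤ B N := by
    intro N
    have hexp : (fun ω => (S N ω - m N) ^ 2)
        = fun ω => S N ω * S N ω - (2 * m N) * S N ω + (m N) ^ 2 := by
      funext ω; ring
    have h1 : Integrable (fun ω => S N ω * S N ω - 2 * m N * S N ω) P :=
      (hS2int N).sub ((hSint N).const_mul _)
    have h2 : Integrable (fun ω => 2 * m N * S N ω) P := (hSint N).const_mul _
    have hint : ∫ ω, (S N ω - m N) ^ 2 ∂P
        = (∫ ω, S N ω * S N ω ∂P) - (2 * m N) * (∫ ω, S N ω ∂P) + (m N) ^ 2 := by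
      rw [hexp]
      rw [integral_add h1 (integrable_const _)]
      rw [integral_sub (hS2int N) h2]
      rw [integral_const_mul, integral_const]
      simp
    rw [hint, hES, hES2]
    have hkey : ∑ i ∈ range N, ∑ j ∈ range N, ∫ ω, X i ω * X j ω ∂P
        - (m N) ^ 2 ≤ B N := by
      have hm2 : (m N) ^ 2 = ∑ i ∈ range N, ∑ j ∈ range N, (q i * b i) * (q j * b j) := by
        rw [hmdef]; simp only; rw [sq, Finset.sum_mul_sum]
      rw [hm2, ← Finset.sum_sub_distrib]
      have : ∀ i ∈ range N,
          (∑ j ∈ range N, ∫ ω, X i ω * X j ω ∂P) - ∑ j ∈ range N, (q i * b i) * (q j * b j)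
          ≤ b i := by
        intro i hi
        rw [← Finset.sum_sub_distrib]
        have hsingle : ∑ j ∈ range N,
            ((∫ ω, X i ω * X j ω ∂P) - (q i * b i) * (q j * b j))
            = (∫ ω, X i ω * X i ω ∂P) - (q i * b i) * (q i * b i) := by
          refine Finset.sum_eq_single_of_mem i hi fun j _ hj => ?_
          rw [hEXX i j (Ne.symm hj)]
          ring
        rw [hsingle, hEXXn i]
        have h1 : q i * (b i * b i) - q i * b i * (q i * b i)
            = q i * (1 - q i) * (b i * b i) := by ring
        rw [h1]
        have hb2 : b i * b i ≤ b i := by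
          nlinarith [hb0 i, hb1 i]
        have hq' : q i * (1 - q i) ≤ 1 := by nlinarith [hq0 i, hq1 i]
        nlinarith [hb0 i, mul_nonneg (hq0 i) (sub_nonneg.2 (hq1 i)),
          mul_nonneg (hb0 i) (hb0 i)]
      calc ∑ i ∈ range N, ((∑ j ∈ range N, ∫ ω, X i ω * X j ω ∂P)
            - ∑ j ∈ range N, (q i * b i) * (q j * b j))
          ≤ ∑ i ∈ range N, b i := Finset.sum_le_sum this
        _ = B N := rfl
    linarith [hkey]
  -- null sets
  set E' : ℕ → Set Ω := fun C => {ω | ∀ N, S N ω ≤ (C : ℝ)} with hE'def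
  have hE'null : ∀ C, P (E' C) = 0 := by
    intro C
    by_contra hne
    have hρ : 0 < (P (E' C)).toReal := ENNReal.toReal_pos hne (measure_ne_top P _)
    set ρ : ℝ := (P (E' C)).toReal with hρdef
    set K : ℝ := max (2 * ((C : ℝ) + 1) / δ) (8 / (ρ * δ ^ 2)) with hKdef
    obtain ⟨N, hN⟩ := (hBtop.eventually_ge_atTop (K + 1)).exists
    have hBN : K + 1 ≤ B N := hN
    have hK1 : 2 * ((C : ℝ) + 1) / δ ≤ K := le_max_left _ _
    have hK2 : 8 / (ρ * δ ^ 2) ≤ K := le_max_right _ _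
    have hKB : K ≤ B N := by linarith
    have hBpos : 0 < B N := by
      have h0 : (0:ℝ) ≤ 2 * ((C : ℝ) + 1) / δ := by positivity
      have : (0:ℝ) ≤ K := le_trans h0 hK1
      linarith
    have hδB : 2 * ((C : ℝ) + 1) ≤ δ * B N := by
      have h1 : 2 * ((C : ℝ) + 1) / δ ≤ B N := hK1.trans hKB
      calc 2 * ((C : ℝ) + 1) = (2 * ((C : ℝ) + 1) / δ) * δ :=
            (div_mul_cancel₀ _ (ne_of_gt hδ)).symm
        _ ≤ B N * δ := mul_le_mul_of_nonneg_right h1 hδ.le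
        _ = δ * B N := mul_comm _ _
    have hCm : (C : ℝ) ≤ m N := by
      have := hmB N
      have hC0 : (0:ℝ) ≤ (C:ℝ) := Nat.cast_nonneg C
      linarith
    -- Markov
    have hsub : E' C ⊆ {ω | (m N - (C : ℝ)) ^ 2 ≤ (S N ω - m N) ^ 2} := by
      intro ω hω
      have h1 : S N ω ≤ (C : ℝ) := hω N
      have h2 : 0 ≤ m N - (C : ℝ) := by linarith
      have h3 : m N - (C : ℝ) ≤ m N - S N ω := by linarith
      have h4 : (m N - (C:ℝ))^2 ≤ (m N - S N ω)^2 := by nlinarith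
      have h5 : (m N - S N ω)^2 = (S N ω - m N)^2 := by ring
      simpa [h5] using h4
    have hYint : Integrable (fun ω => (S N ω - m N) ^ 2) P := by
      have hexp : (fun ω => (S N ω - m N) ^ 2)
          = fun ω => S N ω * S N ω - (2 * m N) * S N ω + (m N) ^ 2 := by
        funext ω; ring
      rw [hexp]
      exact ((hS2int N).sub ((hSint N).const_mul _)).add (integrable_const _)
    have hmark := mul_meas_ge_le_integral_of_nonneg
      (ae_of_all P fun ω => sq_nonneg (S N ω - m N)) hYint ((m N - (C:ℝ)) ^ 2)
    have hmono : ρ ≤ (P {ω | (m N - (C : ℝ)) ^ 2 ≤ (S N ω - m N) ^ 2}).toReal := by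
      rw [hρdef]
      exact ENNReal.toReal_mono (measure_ne_top P _) (measure_mono hsub)
    have hfin : (m N - (C:ℝ)) ^ 2 * ρ ≤ B N := by
      calc (m N - (C:ℝ)) ^ 2 * ρ
          ≤ (m N - (C:ℝ)) ^ 2 * (P {ω | (m N - (C : ℝ)) ^ 2 ≤ (S N ω - m N) ^ 2}).toReal :=
            mul_le_mul_of_nonneg_left hmono (sq_nonneg _)
        _ ≤ ∫ ω, (S N ω - m N) ^ 2 ∂P := hmark
        _ ≤ B N := hVar N
    -- derive contradiction
    have hmlow : δ * B N ≤ 2 * (m N - (C:ℝ)) := by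
      have := hmB N
      linarith
    have hρδ : 0 < ρ * δ ^ 2 := by positivity
    have h8' : 8 ≤ B N * (ρ * δ ^ 2) := by
      calc (8:ℝ) = (8 / (ρ * δ ^ 2)) * (ρ * δ ^ 2) :=
            (div_mul_cancel₀ _ (ne_of_gt hρδ)).symm
        _ ≤ B N * (ρ * δ ^ 2) := mul_le_mul_of_nonneg_right (hK2.trans hKB) hρδ.le
    have hδB0 : 0 ≤ δ * B N := by positivity
    have hp2 : (δ * B N) ^ 2 ≤ (2 * (m N - (C:ℝ))) ^ 2 := by nlinarith [hmlow, hδB0]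
    have hsq4 : (δ * B N) ^ 2 * ρ ≤ 4 * B N := by nlinarith [hfin, hρ.le, hp2]
    have hx : B N * 8 ≤ B N * (B N * (ρ * δ ^ 2)) :=
      mul_le_mul_of_nonneg_left h8' hBpos.le
    have hy : B N * (B N * (ρ * δ ^ 2)) = (δ * B N) ^ 2 * ρ := by ring
    linarith [hsq4, hx.trans_eq hy, hBpos]
  have hUnull : P (⋃ C : ℕ, E' C) = 0 := measure_iUnion_null hE'null
  have hUae : ∀ᵐ ω ∂P, ω ∉ ⋃ C : ℕ, E' C := measure_eq_zero_iff_ae_notMem.mp hUnull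
  obtain ⟨ω, hω1, hω2⟩ := (hsum.and hUae).exists
  have hXsum : Summable fun n => X n ω := by
    refine Summable.of_nonneg_of_le (fun n => hX0 n ω) (fun n => ?_) hω1
    exact Set.indicator_le_indicator (hba n)
  set T : ℝ := ∑' n, X n ω with hTdef
  have hST : ∀ N, S N ω ≤ T := by
    intro N
    exact Summable.sum_le_tsum (range N) (fun i _ => hX0 i ω) hXsum
  have : ω ∈ E' ⌈T⌉₊ := by
    intro N
    exact le_trans (hST N) (Nat.le_ceil T)
  exact hω2 (Set.mem_iUnion.2 ⟨⌈T⌉₊, this⟩)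

/-- A random variable in class `𝔻` admits two separated compact intervals of positive
probability. -/
lemma memD_two_intervals {Ω : Type*} [MeasurableSpace Ω] (P : Measure Ω) [IsProbabilityMeasure P]
    (ξ : Ω → ℝ) (hξmeas : Measurable ξ) (hξD : MemD P ξ) :
    ∃ l₁ u₁ l₂ u₂ : ℝ, l₁ ≤ u₁ ∧ u₁ < l₂ ∧ l₂ ≤ u₂ ∧
      0 < P (ξ ⁻¹' Set.Icc l₁ u₁) ∧ 0 < P (ξ ⁻¹' Set.Icc l₂ u₂) := by
  have hIic : ∃ t : ℝ, 0 < P (ξ ⁻¹' Set.Iic t) := by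
    by_contra hc
    push_neg at hc
    have hz : ∀ t : ℝ, P (ξ ⁻¹' Set.Iic t) = 0 := fun t => le_antisymm (hc t) zero_le
    have hcover : Set.univ ⊆ ⋃ n : ℕ, ξ ⁻¹' Set.Iic (n : ℝ) := by
      intro ω _
      refine Set.mem_iUnion.2 ⟨⌈ξ ω⌉₊, ?_⟩
      simp only [Set.mem_preimage, Set.mem_Iic]
      exact Nat.le_ceil _
    have h1 : (1 : ℝ≥0∞) ≤ 0 := by
      calc (1 : ℝ≥0∞) = P Set.univ := measure_univ.symm
        _ ≤ ∑' n : ℕ, P (ξ ⁻¹' Set.Iic (n : ℝ)) :=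
          le_trans (measure_mono hcover) (measure_iUnion_le _)
        _ = 0 := by simp [hz]
    simp at h1
  have hIci : ∃ t : ℝ, 0 < P (ξ ⁻¹' Set.Ici t) := by
    by_contra hc
    push_neg at hc
    have hz : ∀ t : ℝ, P (ξ ⁻¹' Set.Ici t) = 0 := fun t => le_antisymm (hc t) zero_le
    have hcover : Set.univ ⊆ ⋃ n : ℕ, ξ ⁻¹' Set.Ici (-(n : ℝ)) := by
      intro ω _
      refine Set.mem_iUnion.2 ⟨⌈-ξ ω⌉₊, ?_⟩
      have := Nat.le_ceil (-ξ ω)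
      simp only [Set.mem_preimage, Set.mem_Ici]
      linarith
    have h1 : (1 : ℝ≥0∞) ≤ 0 := by
      calc (1 : ℝ≥0∞) = P Set.univ := measure_univ.symm
        _ ≤ ∑' n : ℕ, P (ξ ⁻¹' Set.Ici (-(n : ℝ))) :=
          le_trans (measure_mono hcover) (measure_iUnion_le _)
        _ = 0 := by simp [hz]
    simp at h1
  have hbdd : ∀ (c : ℝ), 0 < P (ξ ⁻¹' Set.Iic c) → ∃ M : ℕ, 0 < P (ξ ⁻¹' Set.Icc (c - M) c) := by
    intro c hc
    by_contra hcon
    push_neg at hcon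
    have hz : ∀ M : ℕ, P (ξ ⁻¹' Set.Icc (c - M) c) = 0 :=
      fun M => le_antisymm (hcon M) zero_le
    have hcover : ξ ⁻¹' Set.Iic c ⊆ ⋃ M : ℕ, ξ ⁻¹' Set.Icc (c - M) c := by
      intro ω hω
      refine Set.mem_iUnion.2 ⟨⌈c - ξ ω⌉₊, ?_⟩
      have := Nat.le_ceil (c - ξ ω)
      simp only [Set.mem_preimage, Set.mem_Icc]
      exact ⟨by linarith, hω⟩
    have : P (ξ ⁻¹' Set.Iic c) = 0 := by
      refine le_antisymm ?_ zero_le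
      calc P (ξ ⁻¹' Set.Iic c) ≤ ∑' M : ℕ, P (ξ ⁻¹' Set.Icc (c - M) c) :=
          le_trans (measure_mono hcover) (measure_iUnion_le _)
        _ = 0 := by simp [hz]
    exact absurd this (ne_of_gt hc)
  have hbdd' : ∀ (c : ℝ), 0 < P (ξ ⁻¹' Set.Ici c) → ∃ M : ℕ, 0 < P (ξ ⁻¹' Set.Icc c (c + M)) := by
    intro c hc
    by_contra hcon
    push_neg at hcon
    have hz : ∀ M : ℕ, P (ξ ⁻¹' Set.Icc c (c + M)) = 0 :=
      fun M => le_antisymm (hcon M) zero_le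
    have hcover : ξ ⁻¹' Set.Ici c ⊆ ⋃ M : ℕ, ξ ⁻¹' Set.Icc c (c + M) := by
      intro ω hω
      refine Set.mem_iUnion.2 ⟨⌈ξ ω - c⌉₊, ?_⟩
      have := Nat.le_ceil (ξ ω - c)
      simp only [Set.mem_preimage, Set.mem_Icc]
      exact ⟨hω, by linarith⟩
    have : P (ξ ⁻¹' Set.Ici c) = 0 := by
      refine le_antisymm ?_ zero_le
      calc P (ξ ⁻¹' Set.Ici c) ≤ ∑' M : ℕ, P (ξ ⁻¹' Set.Icc c (c + M)) :=
          le_trans (measure_mono hcover) (measure_iUnion_le _)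
        _ = 0 := by simp [hz]
    exact absurd this (ne_of_gt hc)
  by_cases hab : ∃ a b : ℝ, a < b ∧ 0 < P (ξ ⁻¹' Set.Iic a) ∧ 0 < P (ξ ⁻¹' Set.Ici b)
  · obtain ⟨a, b, hlt, ha, hb⟩ := hab
    obtain ⟨M₁, hM₁⟩ := hbdd a ha
    obtain ⟨M₂, hM₂⟩ := hbdd' b hb
    exact ⟨a - M₁, a, b, b + M₂, by simp [Nat.cast_nonneg], hlt,
      by simp [Nat.cast_nonneg], hM₁, hM₂⟩
  · exfalso
    push_neg at hab
    -- ξ is a.s. constant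
    obtain ⟨t₀, ht₀⟩ := hIic
    obtain ⟨s₀, hs₀⟩ := hIci
    set S : Set ℝ := {t | 0 < P (ξ ⁻¹' Set.Iic t)} with hSdef
    have hSne : S.Nonempty := ⟨t₀, ht₀⟩
    have hSbdd : BddBelow S := by
      refine ⟨s₀, fun t ht => ?_⟩
      by_contra hlt
      push_neg at hlt
      have := hab t s₀ hlt ht
      exact absurd hs₀ (by simp [this])
    set c : ℝ := sInf S with hcdef
    have h_lt : ∀ t, t < c → P (ξ ⁻¹' Set.Iic t) = 0 := by
      intro t ht
      by_contra hne
      have htS : t ∈ S := by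
        simp only [hSdef, Set.mem_setOf_eq]
        exact pos_iff_ne_zero.2 hne
      exact absurd (csInf_le hSbdd htS) (not_le_of_gt ht)
    have h_gt : ∀ t, c < t → P (ξ ⁻¹' Set.Ici t) = 0 := by
      intro t ht
      obtain ⟨u, huS, hut⟩ := exists_lt_of_csInf_lt hSne ht
      exact le_antisymm (hab u t hut huS) zero_le
    have hae : ∀ᵐ ω ∂P, ξ ω = c := by
      have hsub : {ω | ξ ω ≠ c} ⊆
          (⋃ n : ℕ, ξ ⁻¹' Set.Iic (c - 1 / (n + 1))) ∪
          (⋃ n : ℕ, ξ ⁻¹' Set.Ici (c + 1 / (n + 1))) := by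
        intro ω hω
        rcases lt_or_gt_of_ne hω with h | h
        · left
          obtain ⟨n, hn⟩ := exists_nat_one_div_lt (sub_pos.2 h)
          refine Set.mem_iUnion.2 ⟨n, ?_⟩
          simp only [Set.mem_preimage, Set.mem_Iic]
          linarith
        · right
          obtain ⟨n, hn⟩ := exists_nat_one_div_lt (sub_pos.2 h)
          refine Set.mem_iUnion.2 ⟨n, ?_⟩
          simp only [Set.mem_preimage, Set.mem_Ici]
          linarith
      have hz1 : ∀ n : ℕ, P (ξ ⁻¹' Set.Iic (c - 1 / (n + 1))) = 0 := by
        intro n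
        apply h_lt
        have : (0:ℝ) < 1 / (n + 1) := by positivity
        linarith
      have hz2 : ∀ n : ℕ, P (ξ ⁻¹' Set.Ici (c + 1 / (n + 1))) = 0 := by
        intro n
        apply h_gt
        have : (0:ℝ) < 1 / (n + 1) := by positivity
        linarith
      have hnull : P {ω | ξ ω ≠ c} = 0 := by
        refine le_antisymm ?_ zero_le
        calc P {ω | ξ ω ≠ c}
            ≤ P ((⋃ n : ℕ, ξ ⁻¹' Set.Iic (c - 1 / (n + 1))) ∪
              (⋃ n : ℕ, ξ ⁻¹' Set.Ici (c + 1 / (n + 1)))) := measure_mono hsub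
          _ ≤ P (⋃ n : ℕ, ξ ⁻¹' Set.Iic (c - 1 / (n + 1))) +
              P (⋃ n : ℕ, ξ ⁻¹' Set.Ici (c + 1 / (n + 1))) := measure_union_le _ _
          _ = 0 := by
              rw [measure_iUnion_null hz1, measure_iUnion_null hz2, add_zero]
      exact hnull
    obtain ⟨B₁, B₂, hmB₁, hmB₂, _, _, _, hp₁, hp₂, he₁, he₂, hdet⟩ := hξD
    have hint : ∀ B : Set ℝ, MeasurableSet B →
        (∫ ω in ξ ⁻¹' B, ξ ω ∂P) = c * (P (ξ ⁻¹' B)).toReal := by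
      intro B hB
      have h1 : ∫ ω in ξ ⁻¹' B, ξ ω ∂P = ∫ _ in ξ ⁻¹' B, c ∂P := by
        refine setIntegral_congr_ae (hξmeas hB) ?_
        exact hae.mono fun ω hω _ => hω
      rw [h1, setIntegral_const, smul_eq_mul, mul_comm, measureReal_def]
    apply hdet
    rw [hint B₁ hmB₁, hint B₂ hmB₂]
    ring

/-- Lemma on the `p`-summability of perturbations: if `(ξ(n))_{n ≥ 1}` is an i.i.d. sequence
of real random variables, each equal in distribution to `ξ ∈ 𝔻`, and
`∑ₙ |f(n) + σ(n) ξ(n+1)|^p < ∞` almost surely for some `p ∈ [1, ∞)`, then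
`f, σ ∈ ℓ^p(ℤ₊; ℝ)`.  (Here `η n` plays the role of `ξ(n+1)`.) -/
theorem summability_converse {Ω : Type*} [MeasurableSpace Ω] (P : Measure Ω)
    [IsProbabilityMeasure P] (p : ℝ) (hp : 1 ≤ p)
    (f σ : ℕ → ℝ) (ξ : Ω → ℝ) (hξmeas : Measurable ξ) (hξD : MemD P ξ)
    (η : ℕ → Ω → ℝ) (hηmeas : ∀ n, Measurable (η n))
    (hindep : iIndepFun η P)
    (hident : ∀ n, Measure.map (η n) P = Measure.map ξ P)
    (hsum : ∀ᵐ ω ∂P, Summable fun n => |f n + σ n * η n ω| ^ p) :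
    (Summable fun n => |f n| ^ p) ∧ (Summable fun n => |σ n| ^ p) := by
  have hp0 : 0 ≤ p := le_trans zero_le_one hp
  obtain ⟨l₁, u₁, l₂, u₂, h11, h12, h22, hpos1, hpos2⟩ := memD_two_intervals P ξ hξmeas hξD
  have hmapeq : ∀ n (s : Set ℝ), MeasurableSet s → P (η n ⁻¹' s) = P (ξ ⁻¹' s) := by
    intro n s hs
    rw [← Measure.map_apply (hηmeas n) hs, hident n, Measure.map_apply hξmeas hs]
  have hpair : ∀ (s : Set ℝ), MeasurableSet s → ∀ m n : ℕ, m ≠ n →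
      P (η m ⁻¹' s ∩ η n ⁻¹' s) = P (η m ⁻¹' s) * P (η n ⁻¹' s) := by
    intro s hs m n hmn
    exact (hindep.indepFun hmn).measure_inter_preimage_eq_mul s s hs hs
  have hmin : ∀ (l u : ℝ), l ≤ u → ∀ n : ℕ, ∃ x, x ∈ Set.Icc l u ∧
      ∀ y ∈ Set.Icc l u, |f n + σ n * x| ≤ |f n + σ n * y| := by
    intro l u hlu n
    have hcont : ContinuousOn (fun x => |f n + σ n * x|) (Set.Icc l u) :=
      ((continuous_const.add (continuous_const.mul continuous_id)).abs).continuousOn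
    obtain ⟨x, hx, hm⟩ := isCompact_Icc.exists_isMinOn (Set.nonempty_Icc.2 hlu) hcont
    exact ⟨x, hx, fun y hy => hm hy⟩
  choose x₁ hx₁mem hx₁min using hmin l₁ u₁ h11
  choose x₂ hx₂mem hx₂min using hmin l₂ u₂ h22
  have happly : ∀ (l u : ℝ) (x : ℕ → ℝ), (∀ n, x n ∈ Set.Icc l u) →
      (∀ n, ∀ y ∈ Set.Icc l u, |f n + σ n * x n| ≤ |f n + σ n * y|) →
      0 < P (ξ ⁻¹' Set.Icc l u) →
      Summable (fun n => |f n + σ n * x n| ^ p) := by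
    intro l u x hxmem hxmin hpos
    refine core_summable P _ (fun n => Real.rpow_nonneg (abs_nonneg _) p)
      (fun n => η n ⁻¹' Set.Icc l u)
      (fun n => (hηmeas n) measurableSet_Icc) ((P (ξ ⁻¹' Set.Icc l u)).toReal)
      (ENNReal.toReal_pos hpos.ne' (measure_ne_top P _)) ?_ ?_ ?_
    · intro n
      rw [hmapeq n _ measurableSet_Icc]
    · exact hpair _ measurableSet_Icc
    · refine hsum.mono fun ω hω => ?_
      refine Summable.of_nonneg_of_le
        (fun n => Set.indicator_nonneg
          (fun _ _ => Real.rpow_nonneg (abs_nonneg _) p) ω) (fun n => ?_) hω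
      by_cases hmem : ω ∈ η n ⁻¹' Set.Icc l u
      · rw [Set.indicator_of_mem hmem]
        exact Real.rpow_le_rpow (abs_nonneg _) (hxmin n _ hmem) hp0
      · rw [Set.indicator_of_notMem hmem]
        exact Real.rpow_nonneg (abs_nonneg _) p
  have hg : Summable (fun n => |f n + σ n * x₁ n| ^ p) := happly l₁ u₁ x₁ hx₁mem hx₁min hpos1
  have hh : Summable (fun n => |f n + σ n * x₂ n| ^ p) := happly l₂ u₂ x₂ hx₂mem hx₂min hpos2
  -- arithmetic
  set γ : ℝ := l₂ - u₁ with hγdef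
  have hγ : 0 < γ := sub_pos.2 h12
  set R : ℝ := max (max |l₁| |u₁|) (max |l₂| |u₂|) with hRdef
  have hR0 : 0 ≤ R := le_trans (abs_nonneg l₁) (le_trans (le_max_left _ _) (le_max_left _ _))
  have hR1 : ∀ n, |x₁ n| ≤ R := by
    intro n
    have h1 := (hx₁mem n).1
    have h2 := (hx₁mem n).2
    have h3 := neg_abs_le l₁
    have h4 := le_abs_self u₁
    have h5 : |l₁| ≤ R := le_trans (le_max_left _ _) (le_max_left _ _)
    have h6 : |u₁| ≤ R := le_trans (le_max_right _ _) (le_max_left _ _)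
    exact abs_le.2 ⟨by linarith, by linarith⟩
  set K : ℝ := (γ + R + 1) / γ with hKdef
  have hγK : γ * K = γ + R + 1 := by
    rw [hKdef, mul_div_cancel₀ _ (ne_of_gt hγ)]
  have hK0 : 0 < K := by
    rw [hKdef]
    positivity
  set C : ℝ := 1 + R * K + K with hCdef
  have hC0 : 0 < C := by positivity
  have hbound : ∀ n, |f n| ≤ C * (|f n + σ n * x₁ n| + |f n + σ n * x₂ n|) ∧
      |σ n| ≤ C * (|f n + σ n * x₁ n| + |f n + σ n * x₂ n|) := by
    intro n
    set r₁ : ℝ := |f n + σ n * x₁ n| with hr₁def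
    set r₂ : ℝ := |f n + σ n * x₂ n| with hr₂def
    have hr₁0 : 0 ≤ r₁ := abs_nonneg _
    have hr₂0 : 0 ≤ r₂ := abs_nonneg _
    have hx12 : γ ≤ x₂ n - x₁ n := by
      have := (hx₁mem n).2
      have := (hx₂mem n).1
      rw [hγdef]; linarith
    have hσγ : |σ n| * γ ≤ r₁ + r₂ := by
      have heq : σ n * (x₂ n - x₁ n) = (f n + σ n * x₂ n) - (f n + σ n * x₁ n) := by ring
      have htri : |(f n + σ n * x₂ n) - (f n + σ n * x₁ n)| ≤ r₂ + r₁ := by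
        calc |(f n + σ n * x₂ n) - (f n + σ n * x₁ n)|
            = |(f n + σ n * x₂ n) + (-(f n + σ n * x₁ n))| := by rw [sub_eq_add_neg]
          _ ≤ |f n + σ n * x₂ n| + |(-(f n + σ n * x₁ n))| := abs_add_le _ _
          _ = r₂ + r₁ := by rw [abs_neg]
      calc |σ n| * γ ≤ |σ n| * (x₂ n - x₁ n) :=
            mul_le_mul_of_nonneg_left hx12 (abs_nonneg _)
        _ = |σ n * (x₂ n - x₁ n)| := by
            rw [abs_mul, abs_of_nonneg (le_trans hγ.le hx12)]
        _ = |(f n + σ n * x₂ n) - (f n + σ n * x₁ n)| := by rw [heq]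
        _ ≤ r₂ + r₁ := htri
        _ = r₁ + r₂ := add_comm _ _
    have hσb : |σ n| ≤ K * (r₁ + r₂) := by
      have h1 : |σ n| * (γ * K) ≤ (r₁ + r₂) * K :=
        mul_le_mul_of_nonneg_right hσγ hK0.le |> fun h => by
          calc |σ n| * (γ * K) = (|σ n| * γ) * K := by ring
            _ ≤ (r₁ + r₂) * K := h
      have h2 : |σ n| * 1 ≤ |σ n| * (γ * K) := by
        apply mul_le_mul_of_nonneg_left _ (abs_nonneg _)
        rw [hγK]; linarith
      calc |σ n| = |σ n| * 1 := (mul_one _).symm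
        _ ≤ (r₁ + r₂) * K := le_trans h2 h1
        _ = K * (r₁ + r₂) := mul_comm _ _
    have hfb : |f n| ≤ r₁ + R * |σ n| := by
      have heq : f n = (f n + σ n * x₁ n) - σ n * x₁ n := by ring
      have htri : |f n| ≤ r₁ + |σ n * x₁ n| := by
        conv_lhs => rw [heq]
        calc |(f n + σ n * x₁ n) - σ n * x₁ n|
            = |(f n + σ n * x₁ n) + (-(σ n * x₁ n))| := by rw [sub_eq_add_neg]
          _ ≤ |f n + σ n * x₁ n| + |(-(σ n * x₁ n))| := abs_add_le _ _
          _ = r₁ + |σ n * x₁ n| := by rw [abs_neg]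
      have h2 : |σ n * x₁ n| ≤ |σ n| * R := by
        rw [abs_mul]
        exact mul_le_mul_of_nonneg_left (hR1 n) (abs_nonneg _)
      calc |f n| ≤ r₁ + |σ n * x₁ n| := htri
        _ ≤ r₁ + |σ n| * R := by linarith
        _ = r₁ + R * |σ n| := by ring
    constructor
    · calc |f n| ≤ r₁ + R * |σ n| := hfb
        _ ≤ r₁ + R * (K * (r₁ + r₂)) :=
          add_le_add_right (mul_le_mul_of_nonneg_left hσb hR0) _
        _ ≤ C * (r₁ + r₂) := by
          rw [hCdef]
          nlinarith [mul_nonneg hR0 hK0.le, hK0.le, hr₁0, hr₂0]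
    · calc |σ n| ≤ K * (r₁ + r₂) := hσb
        _ ≤ C * (r₁ + r₂) := by
          apply mul_le_mul_of_nonneg_right _ (by linarith)
          rw [hCdef]
          nlinarith [mul_nonneg hR0 hK0.le]
  have hpow2 : ∀ x y : ℝ, 0 ≤ x → 0 ≤ y → (x + y) ^ p ≤ 2 ^ p * (x ^ p + y ^ p) := by
    intro x y hx hy
    have h2p : (0:ℝ) ≤ 2 ^ p := Real.rpow_nonneg (by norm_num) p
    rcases le_total x y with hxy | hxy
    · calc (x + y) ^ p ≤ (2 * y) ^ p :=
            Real.rpow_le_rpow (by linarith) (by linarith) hp0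
        _ = 2 ^ p * y ^ p := Real.mul_rpow (by norm_num) hy
        _ ≤ 2 ^ p * (x ^ p + y ^ p) := by
            have := Real.rpow_nonneg hx p
            nlinarith
    · calc (x + y) ^ p ≤ (2 * x) ^ p :=
            Real.rpow_le_rpow (by linarith) (by linarith) hp0
        _ = 2 ^ p * x ^ p := Real.mul_rpow (by norm_num) hx
        _ ≤ 2 ^ p * (x ^ p + y ^ p) := by
            have := Real.rpow_nonneg hy p
            nlinarith
  have hmaj : Summable (fun n => (C ^ p * 2 ^ p) *
      (|f n + σ n * x₁ n| ^ p + |f n + σ n * x₂ n| ^ p)) :=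
    (hg.add hh).mul_left _
  have hkey : ∀ (w : ℕ → ℝ), (∀ n, 0 ≤ w n) →
      (∀ n, w n ≤ C * (|f n + σ n * x₁ n| + |f n + σ n * x₂ n|)) →
      Summable (fun n => w n ^ p) := by
    intro w hw0 hwb
    refine Summable.of_nonneg_of_le (fun n => Real.rpow_nonneg (hw0 n) p)
      (fun n => ?_) hmaj
    have hr₁0 : 0 ≤ |f n + σ n * x₁ n| := abs_nonneg _
    have hr₂0 : 0 ≤ |f n + σ n * x₂ n| := abs_nonneg _
    calc w n ^ p ≤ (C * (|f n + σ n * x₁ n| + |f n + σ n * x₂ n|)) ^ p :=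
          Real.rpow_le_rpow (hw0 n) (hwb n) hp0
      _ = C ^ p * (|f n + σ n * x₁ n| + |f n + σ n * x₂ n|) ^ p :=
          Real.mul_rpow hC0.le (by linarith)
      _ ≤ C ^ p * (2 ^ p * (|f n + σ n * x₁ n| ^ p + |f n + σ n * x₂ n| ^ p)) := by
          apply mul_le_mul_of_nonneg_left (hpow2 _ _ hr₁0 hr₂0)
          exact Real.rpow_nonneg hC0.le p
      _ = (C ^ p * 2 ^ p) * (|f n + σ n * x₁ n| ^ p + |f n + σ n * x₂ n| ^ p) := by ring
  exact ⟨hkey (fun n => |f n|) (fun n => abs_nonneg _) (fun n => (hbound n).1),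
    hkey (fun n => |σ n|) (fun n => abs_nonneg _) (fun n => (hbound n).2)⟩
end

section
/- Let p ∈ [1, ∞), let (f(n))_{n≥0} be a deterministic real sequence, and let (ζ(n))_{n≥0} be a sequence of mutually independent real Gaussian random variables with mean zero (variances arbitrary, possibly zero). If ∑_{n=0}^∞ |f(n) + ζ(n)|^p < ∞ almost surely, then ∑_{n=0}^∞ |f(n)|^p < ∞ and ∑_{n=0}^∞ (E[ζ(n)²])^{p/2} < ∞. -/
open MeasureTheory ProbabilityTheory Filter
open scoped NNReal ENNReal



/-- Converse direction of Kolmogorov's three-series theorem for `[0,1]`-valued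
independent random variables. -/
theorem summable_integral_of_indep {Ω : Type*} [MeasurableSpace Ω]
    (P : Measure Ω) [IsProbabilityMeasure P]
    (Z : ℕ → Ω → ℝ) (hmeas : ∀ n, Measurable (Z n))
    (h0 : ∀ n ω, 0 ≤ Z n ω) (h1 : ∀ n ω, Z n ω ≤ 1)
    (hindep : iIndepFun Z P)
    (hsum : ∀ᵐ ω ∂P, Summable fun n => Z n ω) :
    Summable fun n => ∫ ω, Z n ω ∂P := by
  set W : ℕ → Ω → ℝ := fun n ω => Real.exp (-(Z n ω)) with hW
  have hWmeas : ∀ n, Measurable (W n) := fun n => ((hmeas n).neg).exp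
  have hW0 : ∀ n ω, 0 ≤ W n ω := fun n ω => (Real.exp_pos _).le
  have hW1 : ∀ n ω, W n ω ≤ 1 := fun n ω => Real.exp_le_one_iff.2 (by linarith [h0 n ω])
  have hWindep : iIndepFun W P := by
    have := hindep.comp (fun _ x => Real.exp (-x)) (fun _ => measurable_neg.exp)
    exact this
  have hWint : ∀ n, Integrable (W n) P := by
    intro n
    refine (integrable_const (1 : ℝ)).mono' (hWmeas n).aestronglyMeasurable ?_
    exact Filter.Eventually.of_forall fun ω => by
      rw [Real.norm_eq_abs, abs_of_nonneg (hW0 n ω)]; exact hW1 n ω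
  -- product formula
  have hprod : ∀ N, ∫ ω, ∏ j ∈ Finset.range N, W j ω ∂P
      = ∏ j ∈ Finset.range N, ∫ ω, W j ω ∂P := by
    intro N
    induction N with
    | zero => simp
    | succ N ih =>
      have hIF : IndepFun (∏ j ∈ Finset.range N, W j) (W N) P :=
        hWindep.indepFun_prod_range_succ hWmeas N
      have := hIF.integral_mul_eq_mul_integral
        (by
          have : Measurable (∏ j ∈ Finset.range N, W j) := by
            rw [show (∏ j ∈ Finset.range N, W j) = fun ω => ∏ j ∈ Finset.range N, W j ω from
              funext fun ω => Finset.prod_apply ω _ _]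
            exact Finset.measurable_prod _ (fun j _ => hWmeas j)
          exact this.aestronglyMeasurable)
        (hWmeas N).aestronglyMeasurable
      simp only [Finset.prod_range_succ]
      calc ∫ ω, (∏ j ∈ Finset.range N, W j ω) * W N ω ∂P
          = ∫ ω, ((∏ j ∈ Finset.range N, W j) * W N) ω ∂P := by
            congr 1; ext ω; simp [Finset.prod_apply]
        _ = (∫ ω, (∏ j ∈ Finset.range N, W j) ω ∂P) * ∫ ω, W N ω ∂P := this
        _ = (∏ j ∈ Finset.range N, ∫ ω, W j ω ∂P) * ∫ ω, W N ω ∂P := by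
            rw [← ih]; congr 1; apply integral_congr_ae; filter_upwards with ω
            simp [Finset.prod_apply]
  set c : ℝ := 1 - Real.exp (-1) with hc
  have hcpos : 0 < c := by
    have : Real.exp (-1) < 1 := Real.exp_lt_one_iff.2 (by norm_num)
    simp only [hc]; linarith
  have hZint : ∀ n, Integrable (Z n) P := by
    intro n
    refine (integrable_const (1 : ℝ)).mono' (hmeas n).aestronglyMeasurable ?_
    exact Filter.Eventually.of_forall fun ω => by
      rw [Real.norm_eq_abs, abs_of_nonneg (h0 n ω)]; exact h1 n ω
  have hEZ0 : ∀ n, 0 ≤ ∫ ω, Z n ω ∂P := fun n => integral_nonneg (h0 n)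
  have hEW_le : ∀ n, ∫ ω, W n ω ∂P ≤ Real.exp (-(c * ∫ ω, Z n ω ∂P)) := by
    intro n
    have h1' : ∫ ω, W n ω ∂P ≤ ∫ ω, (1 - c * Z n ω) ∂P := by
      refine integral_mono (hWint n) ((integrable_const 1).sub ((hZint n).const_mul c)) ?_
      intro ω
      have hz0 := h0 n ω; have hz1 := h1 n ω
      have hcx := convexOn_exp.2 (Set.mem_univ (-1:ℝ)) (Set.mem_univ (0:ℝ))
        hz0 (by linarith : (0:ℝ) ≤ 1 - Z n ω) (by ring)
      simp only [smul_eq_mul, mul_neg, mul_one, mul_zero, add_zero, Real.exp_zero] at hcx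
      show W n ω ≤ 1 - c * Z n ω
      simp only [hW, hc]
      nlinarith [hcx]
    have h2' : ∫ ω, (1 - c * Z n ω) ∂P = 1 - c * ∫ ω, Z n ω ∂P := by
      rw [integral_sub (integrable_const 1) ((hZint n).const_mul c), integral_const,
        integral_const_mul]
      simp
    have h3' : 1 - c * ∫ ω, Z n ω ∂P ≤ Real.exp (-(c * ∫ ω, Z n ω ∂P)) := by
      have := Real.add_one_le_exp (-(c * ∫ ω, Z n ω ∂P))
      linarith
    linarith
  set T : ℕ → ℝ := fun N => ∑ j ∈ Finset.range N, ∫ ω, Z j ω ∂P with hT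
  have hEW0 : ∀ n, 0 ≤ ∫ ω, W n ω ∂P := fun n => integral_nonneg (hW0 n)
  have hPT : ∀ N, ∏ j ∈ Finset.range N, ∫ ω, W j ω ∂P ≤ Real.exp (-(c * T N)) := by
    intro N
    calc ∏ j ∈ Finset.range N, ∫ ω, W j ω ∂P
        ≤ ∏ j ∈ Finset.range N, Real.exp (-(c * ∫ ω, Z j ω ∂P)) :=
          Finset.prod_le_prod (fun j _ => hEW0 j) (fun j _ => hEW_le j)
      _ = Real.exp (∑ j ∈ Finset.range N, -(c * ∫ ω, Z j ω ∂P)) := (Real.exp_sum _ _).symm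
      _ = Real.exp (-(c * T N)) := by
          congr 1
          rw [hT]
          simp [Finset.mul_sum]
  set F : ℕ → Ω → ℝ := fun N ω => ∏ j ∈ Finset.range N, W j ω with hF
  have hFmeas : ∀ N, Measurable (F N) :=
    fun N => Finset.measurable_prod _ (fun j _ => hWmeas j)
  have hF0 : ∀ N ω, 0 ≤ F N ω := fun N ω => Finset.prod_nonneg fun j _ => hW0 j ω
  have hF1 : ∀ N ω, F N ω ≤ 1 := fun N ω =>
    Finset.prod_le_one (fun j _ => hW0 j ω) (fun j _ => hW1 j ω)
  have hFint : ∀ N, Integrable (F N) P := by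
    intro N
    refine (integrable_const (1 : ℝ)).mono' (hFmeas N).aestronglyMeasurable ?_
    exact Filter.Eventually.of_forall fun ω => by
      rw [Real.norm_eq_abs, abs_of_nonneg (hF0 N ω)]; exact hF1 N ω
  set G : Ω → ENNReal := fun ω => liminf (fun N => ENNReal.ofReal (F N ω)) atTop with hG
  have hGmeas : Measurable G :=
    Measurable.liminf (fun N => (hFmeas N).ennreal_ofReal)
  have key1 : ∫⁻ ω, G ω ∂P ≤ liminf (fun N => ENNReal.ofReal (∫ ω, F N ω ∂P)) atTop := by
    have h := lintegral_liminf_le (fun N => (hFmeas N).ennreal_ofReal) (μ := P) (u := atTop)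
    refine h.trans (le_of_eq ?_)
    apply Filter.liminf_congr
    filter_upwards with N
    rw [ofReal_integral_eq_lintegral_ofReal (hFint N)
      (Filter.Eventually.of_forall (hF0 N))]
  have hGpos : ∀ᵐ ω ∂P, 0 < G ω := by
    filter_upwards [hsum] with ω hsω
    have htend : Tendsto (fun N => F N ω) atTop (nhds (Real.exp (-(∑' n, Z n ω)))) := by
      have h1t : Tendsto (fun N => ∑ j ∈ Finset.range N, Z j ω) atTop
          (nhds (∑' n, Z n ω)) := hsω.hasSum.tendsto_sum_nat
      have h2t := ((Real.continuous_exp.comp continuous_neg).tendsto _).comp h1t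
      refine h2t.congr fun N => ?_
      simp only [Function.comp_apply, hF]
      rw [← Real.exp_sum]
      simp
    have hlim : liminf (fun N => ENNReal.ofReal (F N ω)) atTop
        = ENNReal.ofReal (Real.exp (-(∑' n, Z n ω))) := by
      simpa [Function.comp_def] using
        ((ENNReal.continuous_ofReal.tendsto _).comp htend).liminf_eq
    show 0 < liminf (fun N => ENNReal.ofReal (F N ω)) atTop
    rw [hlim]
    exact ENNReal.ofReal_pos.2 (Real.exp_pos _)
  have hGint_pos : 0 < ∫⁻ ω, G ω ∂P := by
    rcases eq_or_lt_of_le (zero_le : 0 ≤ ∫⁻ ω, G ω ∂P) with h | h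
    · exfalso
      have hz : G =ᵐ[P] 0 := (lintegral_eq_zero_iff hGmeas).1 h.symm
      obtain ⟨ω, h1ω, h2ω⟩ := (hGpos.and hz).exists
      rw [h2ω] at h1ω
      exact lt_irrefl _ h1ω
    · exact h
  by_contra hns
  have hTtend : Tendsto T atTop atTop := by
    rw [hT]
    exact (not_summable_iff_tendsto_nat_atTop_of_nonneg hEZ0).1 hns
  have hupper : Tendsto (fun N => Real.exp (-(c * T N))) atTop (nhds 0) := by
    apply Real.tendsto_exp_atBot.comp
    apply Filter.tendsto_neg_atBot_iff.2
    exact hTtend.const_mul_atTop hcpos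
  have hsq : Tendsto (fun N => ENNReal.ofReal (∫ ω, F N ω ∂P)) atTop (nhds 0) := by
    have hub : Tendsto (fun N => ENNReal.ofReal (Real.exp (-(c * T N)))) atTop (nhds 0) := by
      have := (ENNReal.continuous_ofReal.tendsto _).comp hupper
      simpa [Function.comp_def] using this
    refine tendsto_of_tendsto_of_tendsto_of_le_of_le tendsto_const_nhds hub
      (fun N => zero_le) (fun N => ?_)
    apply ENNReal.ofReal_le_ofReal
    calc ∫ ω, F N ω ∂P = ∏ j ∈ Finset.range N, ∫ ω, W j ω ∂P := hprod N
      _ ≤ Real.exp (-(c * T N)) := hPT N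
  have : liminf (fun N => ENNReal.ofReal (∫ ω, F N ω ∂P)) atTop = 0 := hsq.liminf_eq
  rw [this] at key1
  exact absurd (le_antisymm key1 zero_le) (ne_of_gt hGint_pos)



lemma integral_ge_aux {μ : Measure ℝ} [IsProbabilityMeasure μ] {g : ℝ → ℝ} (hg : Measurable g)
    (hg0 : ∀ x, 0 ≤ g x) (hg1 : ∀ x, g x ≤ 1) {s : Set ℝ} (hs : MeasurableSet s)
    {a : ℝ} (ha0 : 0 ≤ a) (ha : ∀ x ∈ s, a ≤ g x) :
    a * (μ s).toReal ≤ ∫ x, g x ∂μ := by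
  have hgint : Integrable g μ := (integrable_const 1).mono' hg.aestronglyMeasurable
    (.of_forall fun x => by rw [Real.norm_eq_abs, abs_of_nonneg (hg0 x)]; exact hg1 x)
  have hind : ∫ x, s.indicator (fun _ => a) x ∂μ = (μ s).toReal * a := by
    rw [integral_indicator_const _ hs]; simp [Measure.real]
  rw [mul_comm, ← hind]
  refine integral_mono ((integrable_const a).indicator hs) hgint ?_
  intro x
  by_cases hx : x ∈ s
  · simpa [Set.indicator_of_mem hx] using ha x hx
  · simpa [Set.indicator_of_notMem hx] using hg0 x

lemma gaussian_neg_map (v : ℝ≥0) :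
    Measure.map (fun x => -x) (gaussianReal 0 v) = gaussianReal 0 v := by
  have h := gaussianReal_map_const_mul (μ := 0) (v := v) (-1)
  have h1 : (NNReal.mk ((-1 : ℝ)^2) (sq_nonneg _)) = 1 := by ext; norm_num
  rw [h1, one_mul, mul_zero] at h
  simpa [neg_one_mul] using h

lemma gaussian_half (v : ℝ≥0) : (2 : ENNReal)⁻¹ ≤ gaussianReal 0 v {x | 0 ≤ x} := by
  set γ := gaussianReal 0 v
  have hsymm : γ {x | x ≤ 0} = γ {x | 0 ≤ x} := by
    have := (Measure.map_apply (measurable_neg) (measurableSet_Ici (a := (0:ℝ)))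
      (μ := γ) (f := fun x : ℝ => -x))
    rw [gaussian_neg_map] at this
    convert this.symm using 2
    · ext x; simp [Set.mem_Ici]
    · rfl
  have hcover : (1 : ENNReal) ≤ γ {x | 0 ≤ x} + γ {x | x ≤ 0} := by
    have : (Set.univ : Set ℝ) ⊆ {x | 0 ≤ x} ∪ {x | x ≤ 0} := by
      intro x _; rcases le_total 0 x with h | h
      · exact Or.inl h
      · exact Or.inr h
    calc (1 : ENNReal) = γ Set.univ := (measure_univ).symm
      _ ≤ γ ({x | 0 ≤ x} ∪ {x | x ≤ 0}) := measure_mono this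
      _ ≤ _ := measure_union_le _ _
  rw [hsymm, ← two_mul] at hcover
  calc (2 : ENNReal)⁻¹ = 2⁻¹ * 1 := (mul_one _).symm
    _ ≤ 2⁻¹ * (2 * γ {x | 0 ≤ x}) := mul_le_mul_right hcover _
    _ = γ {x | 0 ≤ x} := by
        rw [← mul_assoc, ENNReal.inv_mul_cancel (by norm_num) (by norm_num), one_mul]

lemma gaussian_half_neg (v : ℝ≥0) : (2 : ENNReal)⁻¹ ≤ gaussianReal 0 v {x | x ≤ 0} := by
  have hsymm : gaussianReal 0 v {x | x ≤ 0} = gaussianReal 0 v {x | 0 ≤ x} := by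
    have := (Measure.map_apply (measurable_neg) (measurableSet_Ici (a := (0:ℝ)))
      (μ := gaussianReal 0 v) (f := fun x : ℝ => -x))
    rw [gaussian_neg_map] at this
    convert this.symm using 2
    · ext x; simp [Set.mem_Ici]
    · rfl
  rw [hsymm]; exact gaussian_half v

lemma gaussian_tail_pos : 0 < gaussianReal 0 1 {x | 1 ≤ x} := by
  rcases eq_or_lt_of_le (zero_le : 0 ≤ gaussianReal 0 1 {x | 1 ≤ x}) with h | h
  · exfalso
    have h0 : gaussianReal 0 1 {x | 1 ≤ x} = 0 := h.symm
    have := gaussianReal_absolutelyContinuous' 0 (v := 1) one_ne_zero h0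
    rw [show {x : ℝ | 1 ≤ x} = Set.Ici 1 from rfl, Real.volume_Ici] at this
    exact ENNReal.top_ne_zero this
  · exact h

lemma gaussian_scale_map (v : ℝ≥0) :
    Measure.map (fun x => Real.sqrt v * x) (gaussianReal 0 1) = gaussianReal 0 v := by
  have h := gaussianReal_map_const_mul (μ := 0) (v := 1) (Real.sqrt v)
  have h1 : (NNReal.mk ((Real.sqrt v)^2) (sq_nonneg _)) = v := by
    ext; simp [Real.sq_sqrt v.2]
  rw [h1, mul_one, mul_zero] at h
  exact h

lemma gaussian_tail_right (v : ℝ≥0) (hv : v ≠ 0) :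
    gaussianReal 0 v {x | Real.sqrt v ≤ x} = gaussianReal 0 1 {x | 1 ≤ x} := by
  have hvpos : (0:ℝ) < Real.sqrt v :=
    Real.sqrt_pos.2 (by exact_mod_cast pos_iff_ne_zero.2 hv)
  rw [← gaussian_scale_map v,
    show {x : ℝ | Real.sqrt v ≤ x} = Set.Ici (Real.sqrt v) from rfl,
    Measure.map_apply (measurable_const_mul _) (measurableSet_Ici (a := Real.sqrt v))]
  congr 1
  ext y
  simp only [Set.mem_preimage, Set.mem_setOf_eq]
  exact (le_mul_iff_one_le_right hvpos)

lemma gaussian_tail_left (v : ℝ≥0) (hv : v ≠ 0) :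
    gaussianReal 0 v {x | x ≤ -Real.sqrt v} = gaussianReal 0 1 {x | 1 ≤ x} := by
  have hvpos : (0:ℝ) < Real.sqrt v :=
    Real.sqrt_pos.2 (by exact_mod_cast pos_iff_ne_zero.2 hv)
  have hmap : Measure.map (fun x => -Real.sqrt v * x) (gaussianReal 0 1) = gaussianReal 0 v := by
    have h := gaussianReal_map_const_mul (μ := 0) (v := 1) (-Real.sqrt v)
    have h1 : (NNReal.mk ((-Real.sqrt v)^2) (sq_nonneg _)) = v := by
      ext; simp [neg_sq, Real.sq_sqrt v.2]
    rw [h1, mul_one, mul_zero] at h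
    exact h
  rw [← hmap,
    show {x : ℝ | x ≤ -Real.sqrt v} = Set.Iic (-Real.sqrt v) from rfl,
    Measure.map_apply (measurable_const_mul _) (measurableSet_Iic (a := -Real.sqrt v))]
  congr 1
  ext y
  simp only [Set.mem_preimage, Set.mem_Iic, neg_mul, neg_le_neg_iff]
  exact (le_mul_iff_one_le_right hvpos)

lemma gauss_bound_1 (p : ℝ) (hp : 1 ≤ p) (v : ℝ≥0) (t : ℝ) :
    min (|t| ^ p) 1 * (1/2) ≤ ∫ x, min (|t + x| ^ p) 1 ∂(gaussianReal 0 v) := by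
  have hp0 : (0:ℝ) ≤ p := by linarith
  have hgm : Measurable fun x : ℝ => min (|t + x| ^ p) 1 :=
    by fun_prop
  have hg0 : ∀ x, 0 ≤ min (|t + x| ^ p) 1 := fun x =>
    le_min (Real.rpow_nonneg (abs_nonneg _) p) zero_le_one
  have hg1 : ∀ x : ℝ, min (|t + x| ^ p) 1 ≤ 1 := fun x => min_le_right _ _
  have ha0 : 0 ≤ min (|t| ^ p) 1 := le_min (Real.rpow_nonneg (abs_nonneg _) p) zero_le_one
  rcases le_total 0 t with ht | ht
  · have key := integral_ge_aux (μ := gaussianReal 0 v) hgm hg0 hg1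
      (measurableSet_Ici (a := (0:ℝ))) ha0 (fun x hx => by
        have hx' : (0:ℝ) ≤ x := hx
        refine min_le_min ?_ le_rfl
        apply Real.rpow_le_rpow (abs_nonneg _) _ hp0
        rw [abs_of_nonneg ht, abs_of_nonneg (by linarith : (0:ℝ) ≤ t + x)]
        linarith)
    have hhalf : (1/2 : ℝ) ≤ ((gaussianReal 0 v) (Set.Ici (0:ℝ))).toReal := by
      have := ENNReal.toReal_mono (measure_ne_top _ _) (gaussian_half v)
      rw [show {x : ℝ | 0 ≤ x} = Set.Ici (0:ℝ) from rfl] at this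
      refine le_trans (le_of_eq ?_) this
      simp
    calc min (|t| ^ p) 1 * (1/2)
        ≤ min (|t| ^ p) 1 * ((gaussianReal 0 v) (Set.Ici (0:ℝ))).toReal :=
          mul_le_mul_of_nonneg_left hhalf ha0
      _ ≤ _ := key
  · have key := integral_ge_aux (μ := gaussianReal 0 v) hgm hg0 hg1
      (measurableSet_Iic (a := (0:ℝ))) ha0 (fun x hx => by
        have hx' : x ≤ (0:ℝ) := hx
        refine min_le_min ?_ le_rfl
        apply Real.rpow_le_rpow (abs_nonneg _) _ hp0
        rw [abs_of_nonpos ht, abs_of_nonpos (by linarith : t + x ≤ 0)]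
        linarith)
    have hhalf : (1/2 : ℝ) ≤ ((gaussianReal 0 v) (Set.Iic (0:ℝ))).toReal := by
      have := ENNReal.toReal_mono (measure_ne_top _ _) (gaussian_half_neg v)
      rw [show {x : ℝ | x ≤ 0} = Set.Iic (0:ℝ) from rfl] at this
      refine le_trans (le_of_eq ?_) this
      simp
    calc min (|t| ^ p) 1 * (1/2)
        ≤ min (|t| ^ p) 1 * ((gaussianReal 0 v) (Set.Iic (0:ℝ))).toReal :=
          mul_le_mul_of_nonneg_left hhalf ha0
      _ ≤ _ := key

lemma gauss_bound_2 (p : ℝ) (hp : 1 ≤ p) (v : ℝ≥0) (t : ℝ) :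
    min ((v:ℝ) ^ (p/2)) 1 * (gaussianReal 0 1 {x | 1 ≤ x}).toReal
      ≤ ∫ x, min (|t + x| ^ p) 1 ∂(gaussianReal 0 v) := by
  have hp0 : (0:ℝ) ≤ p := by linarith
  have hgm : Measurable fun x : ℝ => min (|t + x| ^ p) 1 :=
    by fun_prop
  have hg0 : ∀ x, 0 ≤ min (|t + x| ^ p) 1 := fun x =>
    le_min (Real.rpow_nonneg (abs_nonneg _) p) zero_le_one
  have hg1 : ∀ x : ℝ, min (|t + x| ^ p) 1 ≤ 1 := fun x => min_le_right _ _
  by_cases hv : v = 0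
  · subst hv
    have : ((0:ℝ≥0):ℝ) ^ (p/2) = 0 := by
      rw [NNReal.coe_zero]
      exact Real.zero_rpow (by positivity)
    rw [this]
    rw [min_eq_left zero_le_one, zero_mul]
    exact integral_nonneg hg0
  · have hvpos : (0:ℝ) < Real.sqrt v :=
      Real.sqrt_pos.2 (by exact_mod_cast pos_iff_ne_zero.2 hv)
    have hsq : (Real.sqrt v) ^ p = (v:ℝ) ^ (p/2) := by
      rw [show (p/2 : ℝ) = (1/2) * p by ring, Real.rpow_mul (NNReal.coe_nonneg v),
        ← Real.sqrt_eq_rpow]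
    have ha0 : 0 ≤ min ((v:ℝ) ^ (p/2)) 1 :=
      le_min (Real.rpow_nonneg v.2 _) zero_le_one
    rcases le_total 0 t with ht | ht
    · have key := integral_ge_aux (μ := gaussianReal 0 v) hgm hg0 hg1
        (measurableSet_Ici (a := Real.sqrt v)) ha0 (fun x hx => by
          have hx' : Real.sqrt v ≤ x := hx
          refine min_le_min ?_ le_rfl
          rw [← hsq]
          apply Real.rpow_le_rpow (Real.sqrt_nonneg _) _ hp0
          rw [abs_of_nonneg (by linarith : (0:ℝ) ≤ t + x)]
          linarith)
      rwa [show (Set.Ici (Real.sqrt v)) = {x | Real.sqrt v ≤ x} from rfl,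
        gaussian_tail_right v hv] at key
    · have key := integral_ge_aux (μ := gaussianReal 0 v) hgm hg0 hg1
        (measurableSet_Iic (a := -Real.sqrt v)) ha0 (fun x hx => by
          have hx' : x ≤ -Real.sqrt v := hx
          refine min_le_min ?_ le_rfl
          rw [← hsq]
          apply Real.rpow_le_rpow (Real.sqrt_nonneg _) _ hp0
          rw [abs_of_nonpos (by linarith : t + x ≤ 0)]
          linarith)
      rwa [show (Set.Iic (-Real.sqrt v)) = {x | x ≤ -Real.sqrt v} from rfl,
        gaussian_tail_left v hv] at key
lemma rho_pos : 0 < (gaussianReal 0 1 {x | 1 ≤ x}).toReal :=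
  ENNReal.toReal_pos (ne_of_gt gaussian_tail_pos) (measure_ne_top _ _)

lemma integral_sq_gaussian (v : ℝ≥0) :
    ∫ x, x ^ 2 ∂(gaussianReal 0 v) = (v:ℝ) * ∫ x, x ^ 2 ∂(gaussianReal 0 1) := by
  rw [← gaussian_scale_map v,
    integral_map (measurable_const_mul _).aemeasurable
      ((by fun_prop : Measurable (fun x : ℝ => x ^ 2)).aestronglyMeasurable)]
  simp_rw [mul_pow, Real.sq_sqrt (NNReal.coe_nonneg v)]
  rw [integral_const_mul]

/-- If `(ζ(n))_{n ≥ 0}` is a sequence of mutually independent mean-zero real Gaussian random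
variables (with arbitrary, possibly zero, variances) and
`∑ₙ |f(n) + ζ(n)|^p < ∞` almost surely for some `p ∈ [1, ∞)`, then
`∑ₙ |f(n)|^p < ∞` and `∑ₙ (E[ζ(n)²])^{p/2} < ∞`. -/
theorem summable_of_summable_add_gaussian {Ω : Type*} [MeasurableSpace Ω]
    (P : Measure Ω) [IsProbabilityMeasure P] (p : ℝ) (hp : 1 ≤ p)
    (f : ℕ → ℝ) (ζ : ℕ → Ω → ℝ) (hζmeas : ∀ n, Measurable (ζ n))
    (hindep : iIndepFun ζ P)
    (v : ℕ → NNReal)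
    (hgauss : ∀ n, Measure.map (ζ n) P = gaussianReal 0 (v n))
    (hsum : ∀ᵐ ω ∂P, Summable fun n => |f n + ζ n ω| ^ p) :
    (Summable fun n => |f n| ^ p) ∧
      (Summable fun n => (∫ ω, (ζ n ω) ^ 2 ∂P) ^ (p / 2)) := by
  set g : ℕ → ℝ → ℝ := fun n x => min (|f n + x| ^ p) 1 with hgdef
  have hgmeas : ∀ n, Measurable (g n) := fun n => by simp only [hgdef]; fun_prop
  set Z : ℕ → Ω → ℝ := fun n ω => g n (ζ n ω) with hZdef
  have hZmeas : ∀ n, Measurable (Z n) := fun n => (hgmeas n).comp (hζmeas n)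
  have hZ0 : ∀ n ω, 0 ≤ Z n ω := fun n ω =>
    le_min (Real.rpow_nonneg (abs_nonneg _) p) zero_le_one
  have hZ1 : ∀ n ω, Z n ω ≤ 1 := fun n ω => min_le_right _ _
  have hZindep : iIndepFun Z P := hindep.comp g hgmeas
  have hZsum : ∀ᵐ ω ∂P, Summable fun n => Z n ω := by
    filter_upwards [hsum] with ω hs
    exact Summable.of_nonneg_of_le (fun n => hZ0 n ω) (fun n => min_le_left _ _) hs
  have hEsum : Summable fun n => ∫ ω, Z n ω ∂P :=
    summable_integral_of_indep P Z hZmeas hZ0 hZ1 hZindep hZsum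
  have hEeq : ∀ n, ∫ ω, Z n ω ∂P = ∫ x, g n x ∂(gaussianReal 0 (v n)) := by
    intro n
    rw [← hgauss n, integral_map (hζmeas n).aemeasurable ((hgmeas n).aestronglyMeasurable)]
  -- first part
  have h1 : Summable fun n => min (|f n| ^ p) 1 := by
    refine Summable.of_nonneg_of_le
      (fun n => le_min (Real.rpow_nonneg (abs_nonneg _) p) zero_le_one)
      (fun n => ?_) (hEsum.mul_left 2)
    have hb := gauss_bound_1 p hp (v n) (f n)
    rw [← hEeq n] at hb
    linarith
  have hf1 : Summable fun n => |f n| ^ p := by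
    have hten : Tendsto (fun n => min (|f n| ^ p) 1) atTop (nhds 0) := h1.tendsto_atTop_zero
    have hev : ∀ᶠ n in atTop, min (|f n| ^ p) 1 = |f n| ^ p := by
      filter_upwards [hten.eventually (gt_mem_nhds (by norm_num : (0:ℝ) < 1))] with n hn
      rcases le_total (|f n| ^ p) 1 with h | h
      · exact min_eq_left h
      · exfalso; rw [min_eq_right h] at hn; exact absurd hn (lt_irrefl _)
    obtain ⟨N, hN⟩ := eventually_atTop.1 hev
    rw [← summable_nat_add_iff N]
    exact ((summable_nat_add_iff N).2 h1).congr (fun n => hN (n + N) (by omega))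
  -- second part
  have h2 : Summable fun n => min ((v n : ℝ) ^ (p/2)) 1 := by
    refine Summable.of_nonneg_of_le
      (fun n => le_min (Real.rpow_nonneg (v n).2 _) zero_le_one)
      (fun n => ?_) (hEsum.mul_left (gaussianReal 0 1 {x | 1 ≤ x}).toReal⁻¹)
    have hb := gauss_bound_2 p hp (v n) (f n)
    rw [← hEeq n] at hb
    rw [← div_eq_inv_mul]
    exact (le_div_iff₀ rho_pos).2 hb
  have hv2 : Summable fun n => (v n : ℝ) ^ (p/2) := by
    have hten : Tendsto (fun n => min ((v n : ℝ) ^ (p/2)) 1) atTop (nhds 0) :=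
      h2.tendsto_atTop_zero
    have hev : ∀ᶠ n in atTop, min ((v n : ℝ) ^ (p/2)) 1 = (v n : ℝ) ^ (p/2) := by
      filter_upwards [hten.eventually (gt_mem_nhds (by norm_num : (0:ℝ) < 1))] with n hn
      rcases le_total ((v n : ℝ) ^ (p/2)) 1 with h | h
      · exact min_eq_left h
      · exfalso; rw [min_eq_right h] at hn; exact absurd hn (lt_irrefl _)
    obtain ⟨N, hN⟩ := eventually_atTop.1 hev
    rw [← summable_nat_add_iff N]
    exact ((summable_nat_add_iff N).2 h2).congr (fun n => hN (n + N) (by omega))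
  refine ⟨hf1, ?_⟩
  have hK0 : 0 ≤ ∫ x, x ^ 2 ∂(gaussianReal 0 1) := integral_nonneg (fun x => sq_nonneg x)
  have hrw : (fun n => (∫ ω, (ζ n ω) ^ 2 ∂P) ^ (p / 2))
      = fun n => (v n : ℝ) ^ (p/2) * (∫ x, x ^ 2 ∂(gaussianReal 0 1)) ^ (p/2) := by
    funext n
    have : ∫ ω, (ζ n ω) ^ 2 ∂P = (v n : ℝ) * ∫ x, x ^ 2 ∂(gaussianReal 0 1) := by
      rw [← integral_sq_gaussian (v n), ← hgauss n,
        integral_map (hζmeas n).aemeasurable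
          ((by fun_prop : Measurable (fun x : ℝ => x ^ 2)).aestronglyMeasurable)]
    rw [this, Real.mul_rpow (NNReal.coe_nonneg (v n)) hK0]
  rw [hrw]
  exact hv2.mul_right _
end

section
/- Let (f(n))_{n≥0} and (σ(n))_{n≥0} be deterministic real sequences, and let (ξ(n))_{n≥1} be an i.i.d. sequence of real-valued random variables, each equal in distribution to a random variable ξ belonging to the class 𝔻. If for some p ∈ [1, ∞) one has ∑_{n=0}^∞ |f(n) + σ(n)ξ(n+1)|^p < ∞ almost surely, then σ(n) → 0 and f(n) → 0 as n → ∞. -/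
open MeasureTheory ProbabilityTheory Filter
open scoped ENNReal

/-- If `(ξ(n))_{n ≥ 1}` is an i.i.d. sequence of real random variables, each equal in
distribution to `ξ ∈ 𝔻`, and `∑ₙ |f(n) + σ(n) ξ(n+1)|^p < ∞` almost surely for some
`p ∈ [1, ∞)`, then `σ(n) → 0` and `f(n) → 0` as `n → ∞`.
(Here `η n` plays the role of `ξ(n+1)`.) -/
theorem perturbations_tendsto_zero {Ω : Type*} [MeasurableSpace Ω] (P : Measure Ω)
    [IsProbabilityMeasure P] (p : ℝ) (hp : 1 ≤ p)
    (f σ : ℕ → ℝ) (ξ : Ω → ℝ) (hξmeas : Measurable ξ) (hξD : MemD P ξ)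
    (η : ℕ → Ω → ℝ) (hηmeas : ∀ n, Measurable (η n))
    (hindep : iIndepFun η P)
    (hident : ∀ n, Measure.map (η n) P = Measure.map ξ P)
    (hsum : ∀ᵐ ω ∂P, Summable fun n => |f n + σ n * η n ω| ^ p) :
    Tendsto σ atTop (nhds 0) ∧ Tendsto f atTop (nhds 0) := by
  have hp0 : p ≠ 0 := by positivity
  -- the random walk terms
  set X : ℕ → Ω → ℝ := fun n ω => f n + σ n * η n ω with hX_def
  have hXmeas : ∀ n, Measurable (X n) := fun n =>
    measurable_const.add (measurable_const.mul (hηmeas n))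
  -- a.s. the terms tend to 0
  have h_ae : ∀ᵐ ω ∂P, Tendsto (fun n => X n ω) atTop (nhds ((fun _ : Ω => (0:ℝ)) ω)) := by
    filter_upwards [hsum] with ω hs
    have h1 : Tendsto (fun n => |f n + σ n * η n ω| ^ p) atTop (nhds 0) :=
      hs.tendsto_atTop_zero
    have h2 : Tendsto (fun n => (|f n + σ n * η n ω| ^ p) ^ p⁻¹) atTop
        (nhds ((0:ℝ) ^ p⁻¹)) := h1.rpow_const (Or.inr (by positivity))
    have h3 : Tendsto (fun n => |f n + σ n * η n ω|) atTop (nhds 0) := by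
      have : ((0:ℝ) ^ p⁻¹) = 0 := Real.zero_rpow (inv_ne_zero hp0)
      rw [this] at h2
      convert h2 using 2 with n
      rw [← Real.rpow_mul (abs_nonneg _), mul_inv_cancel₀ hp0, Real.rpow_one]
    exact (tendsto_zero_iff_abs_tendsto_zero _).2 h3
  -- convergence in probability
  have hXconv : TendstoInMeasure P X atTop (fun _ => (0:ℝ)) :=
    tendstoInMeasure_of_tendsto_ae (fun n => (hXmeas n).aestronglyMeasurable) h_ae
  -- the law of ξ is not concentrated at a point
  have h_ne : ∀ y : ℝ, ∃ᵐ ω ∂P, ξ ω ≠ y := by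
    intro y
    by_contra h
    rw [Filter.not_frequently] at h
    have h' : ∀ᵐ ω ∂P, ξ ω = y := h.mono fun ω hω => not_not.mp hω
    obtain ⟨B₁, B₂, hB₁, hB₂, -, -, -, -, -, -, -, hkey⟩ := hξD
    have E : ∀ B : Set ℝ, MeasurableSet B →
        (∫ ω in ξ ⁻¹' B, ξ ω ∂P) = (P (ξ ⁻¹' B)).toReal * y := by
      intro B hB
      rw [setIntegral_congr_ae (hξmeas hB) (h'.mono fun ω hω _ => hω),
        setIntegral_const, smul_eq_mul, Measure.real]
    exact hkey (by rw [E _ hB₁, E _ hB₂]; ring)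
  -- get two points whose neighborhoods all have positive mass
  obtain ⟨a, b, hab, ha, hb⟩ := exists_ne_forall_mem_nhds_pos_measure_preimage (μ := P) h_ne
  set r : ℝ := dist a b / 5 with hr_def
  have hr : 0 < r := by
    have : 0 < dist a b := dist_pos.2 hab
    positivity
  set c : ℝ≥0∞ := min (P (ξ ⁻¹' Metric.ball a r)) (P (ξ ⁻¹' Metric.ball b r)) with hc_def
  have hc : 0 < c :=
    lt_min (ha _ (Metric.ball_mem_nhds a hr)) (hb _ (Metric.ball_mem_nhds b hr))
  -- any closed ball of radius r misses one of the two balls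
  have hdisj : ∀ x : ℝ, Disjoint (Metric.closedBall x r) (Metric.ball a r) ∨
      Disjoint (Metric.closedBall x r) (Metric.ball b r) := by
    intro x
    by_contra h
    push_neg at h
    obtain ⟨h1, h2⟩ := h
    obtain ⟨y, hy1, hy2⟩ := Set.not_disjoint_iff.mp h1
    obtain ⟨z, hz1, hz2⟩ := Set.not_disjoint_iff.mp h2
    have hyx : dist y x ≤ r := Metric.mem_closedBall.mp hy1
    have hya : dist y a < r := Metric.mem_ball.mp hy2
    have hzx : dist z x ≤ r := Metric.mem_closedBall.mp hz1
    have hzb : dist z b < r := Metric.mem_ball.mp hz2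
    have h4 : dist a b ≤ dist a y + dist y z + dist z b := dist_triangle4 a y z b
    have h5 : dist y z ≤ dist y x + dist x z := dist_triangle y x z
    have hay : dist a y < r := by rwa [dist_comm]
    have hxz : dist x z ≤ r := by rwa [dist_comm]
    have : dist a b < 4 * r := by linarith
    rw [hr_def] at this
    have hd : 0 < dist a b := dist_pos.2 hab
    linarith
  -- identical distribution of η n on measurable sets
  have hη_law : ∀ n, ∀ s : Set ℝ, MeasurableSet s → P (η n ⁻¹' s) = P (ξ ⁻¹' s) := by
    intro n s hs
    rw [← Measure.map_apply (hηmeas n) hs, hident n, Measure.map_apply hξmeas hs]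
  -- key estimate: if ε ≤ |σ n| then P {ω | ε * r ≤ |X n ω|} ≥ c
  have hkey : ∀ ε : ℝ, 0 < ε → ∀ n : ℕ, ε ≤ |σ n| →
      c ≤ P {ω | ε * r ≤ dist (X n ω) ((fun _ : Ω => (0:ℝ)) ω)} := by
    intro ε hε n hσn
    have hσ0 : σ n ≠ 0 := by
      intro h0; rw [h0, abs_zero] at hσn; linarith
    set x : ℝ := -(f n) / σ n with hx_def
    have hsub : ∀ pt : ℝ, Disjoint (Metric.closedBall x r) (Metric.ball pt r) →
        η n ⁻¹' Metric.ball pt r ⊆ {ω | ε * r ≤ dist (X n ω) 0} := by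
      intro pt hdis ω hω
      by_contra hlt
      rw [Set.mem_setOf_eq, not_le] at hlt
      have hd0 : dist (X n ω) 0 = |f n + σ n * η n ω| := by
        rw [Real.dist_eq, sub_zero]
      rw [hd0] at hlt
      have hmem : η n ω ∈ Metric.closedBall x r := by
        rw [Metric.mem_closedBall, Real.dist_eq]
        have heq : η n ω - x = (f n + σ n * η n ω) / σ n := by
          rw [hx_def]; field_simp; ring
        rw [heq, abs_div]
        rw [div_le_iff₀ (by positivity : (0:ℝ) < |σ n|)]
        have h6 : ε * r ≤ |σ n| * r := mul_le_mul_of_nonneg_right hσn hr.le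
        nlinarith
      exact Set.disjoint_left.mp hdis hmem hω
    rcases hdisj x with hd | hd
    · calc c ≤ P (ξ ⁻¹' Metric.ball a r) := min_le_left _ _
        _ = P (η n ⁻¹' Metric.ball a r) := (hη_law n _ measurableSet_ball).symm
        _ ≤ P {ω | ε * r ≤ dist (X n ω) 0} := measure_mono (hsub a hd)
    · calc c ≤ P (ξ ⁻¹' Metric.ball b r) := min_le_right _ _
        _ = P (η n ⁻¹' Metric.ball b r) := (hη_law n _ measurableSet_ball).symm
        _ ≤ P {ω | ε * r ≤ dist (X n ω) 0} := measure_mono (hsub b hd)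
  -- σ tends to zero
  have hσ_to : Tendsto σ atTop (nhds 0) := by
    by_contra hσ
    rw [Metric.tendsto_atTop] at hσ
    push_neg at hσ
    obtain ⟨ε, hε, hfreq⟩ := hσ
    have hconv := tendstoInMeasure_iff_dist.mp hXconv (ε * r) (by positivity)
    have hev := hconv.eventually (gt_mem_nhds hc)
    rw [eventually_atTop] at hev
    obtain ⟨N, hN⟩ := hev
    obtain ⟨n, hnN, hσn⟩ := hfreq N
    rw [Real.dist_eq, sub_zero] at hσn
    exact absurd (hN n hnN) (not_lt.2 (hkey ε hε n hσn))
  refine ⟨hσ_to, ?_⟩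
  -- now f tends to zero
  -- first, a ball around 0 with mass > 1/2
  have hM : ∃ M : ℝ, 0 < M ∧ (1/2 : ℝ≥0∞) < P (ξ ⁻¹' Metric.ball 0 M) := by
    have hmono : Monotone fun k : ℕ => ξ ⁻¹' Metric.ball (0:ℝ) k := by
      intro i j hij
      exact Set.preimage_mono (Metric.ball_subset_ball (by exact_mod_cast hij))
    have hunion : (⋃ k : ℕ, ξ ⁻¹' Metric.ball (0:ℝ) k) = Set.univ := by
      rw [Set.eq_univ_iff_forall]
      intro ω
      obtain ⟨k, hk⟩ := exists_nat_gt (|ξ ω|)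
      exact Set.mem_iUnion.2 ⟨k, by simpa [Real.dist_eq] using hk⟩
    have htend := tendsto_measure_iUnion_atTop (μ := P) hmono
    rw [hunion] at htend
    have h1 : P (Set.univ : Set Ω) = 1 := measure_univ
    rw [h1] at htend
    have hev := htend.eventually (lt_mem_nhds (by norm_num : (1/2 : ℝ≥0∞) < 1))
    rw [eventually_atTop] at hev
    obtain ⟨k, hk⟩ := hev
    refine ⟨(k : ℝ) + 1, by positivity, ?_⟩
    refine lt_of_lt_of_le (hk k le_rfl) (measure_mono ?_)
    exact Set.preimage_mono (Metric.ball_subset_ball (by linarith))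
  obtain ⟨M, hM0, hMball⟩ := hM
  rw [Metric.tendsto_atTop]
  intro δ hδ
  have hσ_ev : ∀ᶠ n in atTop, |σ n| < δ / (2 * M) := by
    have := hσ_to.eventually (Metric.ball_mem_nhds (0:ℝ) (by positivity : 0 < δ / (2 * M)))
    filter_upwards [this] with n hn
    simpa [Real.dist_eq] using hn
  have hX_ev : ∀ᶠ n in atTop,
      P {ω | δ/2 ≤ dist (X n ω) ((fun _ : Ω => (0:ℝ)) ω)} < 1/2 :=
    (tendstoInMeasure_iff_dist.mp hXconv (δ/2) (by positivity)).eventually (gt_mem_nhds (by norm_num : (0:ℝ≥0∞) < 1/2))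
  have hcomb := hσ_ev.and hX_ev
  rw [eventually_atTop] at hcomb
  obtain ⟨N, hN⟩ := hcomb
  refine ⟨N, fun n hn => ?_⟩
  obtain ⟨hσsmall, hXsmall⟩ := hN n hn
  -- find ω with |η n ω| < M and |X n ω| < δ/2
  have hball : (1/2 : ℝ≥0∞) < P (η n ⁻¹' Metric.ball 0 M) := by
    rwa [hη_law n _ measurableSet_ball]
  have hω : ∃ ω, ω ∈ η n ⁻¹' Metric.ball (0:ℝ) M ∧ dist (X n ω) 0 < δ/2 := by
    by_contra h
    push_neg at h
    have hsub : η n ⁻¹' Metric.ball (0:ℝ) M ⊆ {ω | δ/2 ≤ dist (X n ω) 0} :=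
      fun ω hω => h ω hω
    have := (measure_mono hsub).trans_lt hXsmall
    exact absurd (hball.trans this) (lt_irrefl _)
  obtain ⟨ω, hω1, hω2⟩ := hω
  have hη_bd : |η n ω| < M := by simpa [Real.dist_eq] using hω1
  have hXval : |f n + σ n * η n ω| < δ/2 := by
    rwa [Real.dist_eq, sub_zero] at hω2
  rw [Real.dist_eq, sub_zero]
  have h1 : |f n| ≤ |f n + σ n * η n ω| + |σ n * η n ω| := by
    have h := abs_add_le (f n + σ n * η n ω) (-(σ n * η n ω))
    simpa [abs_neg] using h
  have h2 : |σ n * η n ω| < δ/2 := by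
    rw [abs_mul]
    calc |σ n| * |η n ω| ≤ |σ n| * M :=
          mul_le_mul_of_nonneg_left (le_of_lt hη_bd) (abs_nonneg _)
      _ < (δ / (2 * M)) * M := by
          apply mul_lt_mul_of_pos_right hσsmall hM0
      _ = δ/2 := by field_simp
  linarith
end

section
/- Let (f(n))_{n≥0} and (σ(n))_{n≥0} be deterministic real sequences, let ξ be a real-valued random variable, and let (ξ(n))_{n≥1} be an i.i.d. sequence of real-valued random variables, each equal in distribution to ξ. If f(n) + σ(n)ξ(n+1) → 0 as n → ∞ almost surely, then f(n) + σ(n)ξ → 0 as n → ∞ almost surely. -/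
open MeasureTheory ProbabilityTheory Filter Set
open scoped ENNReal

section aux

variable {Ω : Type*} [MeasurableSpace Ω] {P : Measure Ω}

lemma my_iIndep_mono {ι : Type*} {m m' : ι → MeasurableSpace Ω}
    (h : iIndep m P) (hle : ∀ i, m' i ≤ m i) : iIndep m' P := by
  rw [iIndep_iff] at h ⊢
  exact fun s f hf => h s fun i hi => hle i _ (hf i hi)

lemma my_iIndepSet_preimage {η : ℕ → Ω → ℝ}
    (hindep : iIndepFun η P)
    (B : ℕ → Set ℝ) (hB : ∀ k, MeasurableSet (B k)) :
    iIndepSet (fun k => η k ⁻¹' B k) P := by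
  rw [iIndepSet_iff_iIndep]
  refine my_iIndep_mono hindep.iIndep fun i => ?_
  refine MeasurableSpace.generateFrom_le ?_
  rintro t ht
  rw [Set.mem_singleton_iff] at ht
  subst ht
  exact ⟨B i, hB i, rfl⟩

lemma my_bc2 [IsProbabilityMeasure P] {η : ℕ → Ω → ℝ}
    (hηmeas : ∀ n, Measurable (η n))
    (hindep : iIndepFun η P)
    {φ : ℕ → ℕ} (hφ : StrictMono φ) {B : ℕ → Set ℝ} (hB : ∀ k, MeasurableSet (B k))
    {δ : ℝ≥0∞} (hδ : δ ≠ 0) (hPB : ∀ k, δ ≤ P (η (φ k) ⁻¹' B k)) :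
    ∀ᵐ ω ∂P, ∃ᶠ k in atTop, η (φ k) ω ∈ B k := by
  classical
  set B' : ℕ → Set ℝ := fun m => ⋃ k, ⋃ (_ : φ k = m), B k with hB'def
  have hB'meas : ∀ m, MeasurableSet (B' m) := fun m =>
    MeasurableSet.iUnion fun k => MeasurableSet.iUnion fun _ => hB k
  have hB'φ : ∀ k, B' (φ k) = B k := by
    intro k
    ext x
    simp only [hB'def, Set.mem_iUnion]
    constructor
    · rintro ⟨k', hk', hx⟩
      rwa [hφ.injective hk'] at hx
    · exact fun hx => ⟨k, rfl, hx⟩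
  set s : ℕ → Set Ω := fun m => η m ⁻¹' B' m with hsdef
  have hsmeas : ∀ m, MeasurableSet (s m) := fun m => (hηmeas m) (hB'meas m)
  have hsindep : iIndepSet s P := my_iIndepSet_preimage hindep B' hB'meas
  have htsum : (∑' m, P (s m)) = ∞ := by
    refine top_unique ?_
    calc (⊤ : ℝ≥0∞) = ∑' (_ : ℕ), δ := (ENNReal.tsum_const_eq_top_of_ne_zero hδ).symm
    _ ≤ ∑' k, P (s (φ k)) := ENNReal.tsum_le_tsum fun k => by
        show δ ≤ P (η (φ k) ⁻¹' B' (φ k))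
        rw [hB'φ k]; exact hPB k
    _ ≤ ∑' m, P (s m) := ENNReal.tsum_comp_le_tsum_of_injective hφ.injective _
  have hlim := ProbabilityTheory.measure_limsup_eq_one hsmeas hsindep htsum
  have hmeas : MeasurableSet (limsup s atTop) := MeasurableSet.measurableSet_limsup hsmeas
  have hae : ∀ᵐ ω ∂P, ω ∈ limsup s atTop :=
    (mem_ae_iff_prob_eq_one hmeas).2 hlim
  filter_upwards [hae] with ω hω
  rw [mem_limsup_iff_frequently_mem, Nat.frequently_atTop_iff_infinite] at hω
  rw [Nat.frequently_atTop_iff_infinite]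
  have hsub : {m | ω ∈ s m} ⊆ φ '' {k | η (φ k) ω ∈ B k} := by
    intro m hm
    have hm' : η m ω ∈ B' m := hm
    rw [hB'def] at hm'
    simp only [Set.mem_iUnion] at hm'
    obtain ⟨k, hk, hx⟩ := hm'
    subst hk
    exact ⟨k, hx, rfl⟩
  exact Set.Infinite.of_image φ (hω.mono hsub)

end aux

/-- If `(ξ(n))_{n ≥ 1}` is an i.i.d. sequence of real random variables, each equal in
distribution to a random variable `ξ` on the same probability space, and
`f(n) + σ(n) ξ(n+1) → 0` almost surely as `n → ∞`, then `f(n) + σ(n) ξ → 0` almost surely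
as `n → ∞`.  (Here `η n` plays the role of `ξ(n+1)`.) -/
theorem tendsto_of_tendsto_iid {Ω : Type*} [MeasurableSpace Ω] (P : Measure Ω)
    [IsProbabilityMeasure P] (f σ : ℕ → ℝ) (ξ : Ω → ℝ) (hξmeas : Measurable ξ)
    (η : ℕ → Ω → ℝ) (hηmeas : ∀ n, Measurable (η n))
    (hindep : iIndepFun η P)
    (hident : ∀ n, Measure.map (η n) P = Measure.map ξ P)
    (htends : ∀ᵐ ω ∂P, Tendsto (fun n => f n + σ n * η n ω) atTop (nhds 0)) :
    ∀ᵐ ω ∂P, Tendsto (fun n => f n + σ n * ξ ω) atTop (nhds 0) := by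
  classical
  set μ : Measure ℝ := P.map ξ with hμdef
  have hμprob : IsProbabilityMeasure μ := Measure.isProbabilityMeasure_map hξmeas.aemeasurable
  have hμη : ∀ (n : ℕ) (B : Set ℝ), MeasurableSet B → P (η n ⁻¹' B) = μ B := by
    intro n B hB
    rw [← hident n, Measure.map_apply (hηmeas n) hB]
  have hμξ : ∀ B : Set ℝ, MeasurableSet B → P (ξ ⁻¹' B) = μ B := fun B hB =>
    (Measure.map_apply hξmeas hB).symm
  by_cases hdeg : ∀ x : ℝ, μ (Set.Iic x) = 0 ∨ μ (Set.Ioi x) = 0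
  · -- degenerate case: ξ is a.s. equal to a constant c
    have hSne : ∃ x : ℝ, μ (Set.Ioi x) = 0 := by
      have hex : ∃ n : ℕ, μ (Set.Iic (n : ℝ)) ≠ 0 := by
        by_contra h
        push_neg at h
        have huniv : (Set.univ : Set ℝ) = ⋃ n : ℕ, Set.Iic (n : ℝ) := by
          ext x
          simp only [Set.mem_univ, Set.mem_iUnion, Set.mem_Iic, true_iff]
          exact exists_nat_ge x
        have h0 : μ Set.univ = 0 := by rw [huniv]; exact measure_iUnion_null h
        simp [measure_univ] at h0
      obtain ⟨n, hn⟩ := hex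
      exact ⟨n, (hdeg n).resolve_left hn⟩
    have hbdd : BddBelow {x : ℝ | μ (Set.Ioi x) = 0} := by
      have hex : ∃ m : ℕ, μ (Set.Ioi (-(m : ℝ))) ≠ 0 := by
        by_contra h
        push_neg at h
        have huniv : (Set.univ : Set ℝ) = ⋃ m : ℕ, Set.Ioi (-(m : ℝ)) := by
          ext x
          simp only [Set.mem_univ, Set.mem_iUnion, Set.mem_Ioi, true_iff]
          obtain ⟨m, hm⟩ := exists_nat_gt (-x)
          exact ⟨m, by linarith⟩
        have h0 : μ Set.univ = 0 := by rw [huniv]; exact measure_iUnion_null h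
        simp [measure_univ] at h0
      obtain ⟨m, hm⟩ := hex
      refine ⟨-(m : ℝ), fun x hx => ?_⟩
      by_contra hlt
      push_neg at hlt
      exact hm (measure_mono_null (Set.Ioi_subset_Ioi hlt.le) hx)
    set c := sInf {x : ℝ | μ (Set.Ioi x) = 0} with hcdef
    have hIoic : μ (Set.Ioi c) = 0 := by
      have hun : Set.Ioi c = ⋃ k : ℕ, Set.Ioi (c + 1 / ((k : ℝ) + 1)) := by
        ext x
        simp only [Set.mem_Ioi, Set.mem_iUnion]
        constructor
        · intro hx
          obtain ⟨k, hk⟩ := exists_nat_one_div_lt (sub_pos.2 hx)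
          exact ⟨k, by linarith⟩
        · rintro ⟨k, hk⟩
          have : 0 < 1 / ((k : ℝ) + 1) := by positivity
          linarith
      rw [hun]
      refine measure_iUnion_null fun k => ?_
      have hlt : c < c + 1 / ((k : ℝ) + 1) := by
        have : 0 < 1 / ((k : ℝ) + 1) := by positivity
        linarith
      obtain ⟨x, hxS, hxlt⟩ := (csInf_lt_iff hbdd hSne).1 hlt
      exact measure_mono_null (Set.Ioi_subset_Ioi hxlt.le) hxS
    have hIioc : μ (Set.Iio c) = 0 := by
      have hun : Set.Iio c = ⋃ k : ℕ, Set.Iic (c - 1 / ((k : ℝ) + 1)) := by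
        ext x
        simp only [Set.mem_Iio, Set.mem_iUnion, Set.mem_Iic]
        constructor
        · intro hx
          obtain ⟨k, hk⟩ := exists_nat_one_div_lt (sub_pos.2 hx)
          exact ⟨k, by linarith⟩
        · rintro ⟨k, hk⟩
          have : 0 < 1 / ((k : ℝ) + 1) := by positivity
          linarith
      rw [hun]
      refine measure_iUnion_null fun k => ?_
      have hnot : (c - 1 / ((k : ℝ) + 1)) ∉ {x : ℝ | μ (Set.Ioi x) = 0} := by
        intro hmem
        have hle := csInf_le hbdd hmem
        have hpos : 0 < 1 / ((k : ℝ) + 1) := by positivity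
        rw [← hcdef] at hle
        linarith
      exact (hdeg _).resolve_right hnot
    have hc1 : μ {c} = 1 := by
      have hcompl : ({c}ᶜ : Set ℝ) = Set.Iio c ∪ Set.Ioi c := by
        ext x
        simp only [Set.mem_compl_iff, Set.mem_singleton_iff, Set.mem_union, Set.mem_Iio,
          Set.mem_Ioi]
        exact ne_iff_lt_or_gt
      have h0 : μ ({c}ᶜ) = 0 := by
        rw [hcompl]
        exact measure_union_null hIioc hIoic
      rwa [prob_compl_eq_zero_iff (measurableSet_singleton c)] at h0
    have hξc : ∀ᵐ ω ∂P, ξ ω = c := by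
      have h0 : P (ξ ⁻¹' {c}ᶜ) = 0 := by
        rw [hμξ _ (measurableSet_singleton c).compl,
          prob_compl_eq_zero_iff (measurableSet_singleton c)]
        exact hc1
      rw [ae_iff]
      exact h0
    have hηc : ∀ᵐ ω ∂P, ∀ n, η n ω = c := by
      rw [ae_all_iff]
      intro n
      have h0 : P (η n ⁻¹' {c}ᶜ) = 0 := by
        rw [hμη _ _ (measurableSet_singleton c).compl,
          prob_compl_eq_zero_iff (measurableSet_singleton c)]
        exact hc1
      rw [ae_iff]
      exact h0
    have hdet : Tendsto (fun n => f n + σ n * c) atTop (nhds 0) := by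
      obtain ⟨ω₀, hω₀t, hω₀c⟩ := (htends.and hηc).exists
      have heq : (fun n => f n + σ n * c) = fun n => f n + σ n * η n ω₀ := by
        funext n; rw [hω₀c n]
      rw [heq]
      exact hω₀t
    filter_upwards [hξc] with ω hω
    rw [hω]
    exact hdet
  · push_neg at hdeg
    obtain ⟨a, ha0, ha1⟩ := hdeg
    -- find b > a with μ (Ici b) ≠ 0
    have hIoi : Set.Ioi a = ⋃ k : ℕ, Set.Ici (a + 1 / ((k : ℝ) + 1)) := by
      ext x
      simp only [Set.mem_Ioi, Set.mem_iUnion, Set.mem_Ici]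
      constructor
      · intro hx
        obtain ⟨k, hk⟩ := exists_nat_one_div_lt (sub_pos.2 hx)
        exact ⟨k, by linarith⟩
      · rintro ⟨k, hk⟩
        have : 0 < 1 / ((k : ℝ) + 1) := by positivity
        linarith
    have hbex : ∃ b : ℝ, a < b ∧ μ (Set.Ici b) ≠ 0 := by
      have hb : ∃ k : ℕ, μ (Set.Ici (a + 1 / ((k : ℝ) + 1))) ≠ 0 := by
        by_contra h
        push_neg at h
        exact ha1 (by rw [hIoi]; exact measure_iUnion_null h)
      obtain ⟨k₀, hb0⟩ := hb
      refine ⟨a + 1 / ((k₀ : ℝ) + 1), ?_, hb0⟩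
      have : 0 < 1 / ((k₀ : ℝ) + 1) := by positivity
      linarith
    obtain ⟨b, hab, hb0⟩ := hbex
    -- step 1 : σ → 0
    have hσ0 : Tendsto σ atTop (nhds 0) := by
      by_contra hcon
      rw [Metric.tendsto_atTop] at hcon
      push_neg at hcon
      obtain ⟨ε, hε, hfreq⟩ := hcon
      obtain ⟨φ, hφ, hφσ⟩ := Filter.extraction_of_frequently_atTop
        (Filter.frequently_atTop.2 fun N => by
          obtain ⟨n, hn, hn'⟩ := hfreq N; exact ⟨n, hn, hn'⟩)
      have hφσ' : ∀ k, ε ≤ |σ (φ k)| := by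
        intro k
        have := hφσ k
        rwa [Real.dist_eq, sub_zero] at this
      have hσne : ∀ k, σ (φ k) ≠ 0 := fun k h => by
        have := hφσ' k; rw [h, abs_zero] at this; linarith
      set c : ℕ → ℝ := fun k => -(f (φ k)) / σ (φ k) with hcdef
      set B : ℕ → Set ℝ := fun k =>
        if c k ≤ (a + b) / 2 then Set.Ici b else Set.Iic a with hBdef
      have hBk : ∀ k, B k = if c k ≤ (a + b) / 2 then Set.Ici b else Set.Iic a :=
        fun k => rfl
      have hBmeas : ∀ k, MeasurableSet (B k) := by
        intro k
        rw [hBk]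
        split_ifs
        · exact measurableSet_Ici
        · exact measurableSet_Iic
      have hδpos : (min (μ (Set.Iic a)) (μ (Set.Ici b)) : ℝ≥0∞) ≠ 0 :=
        (lt_min (zero_lt_iff.2 ha0) (zero_lt_iff.2 hb0)).ne'
      have hPB : ∀ k, min (μ (Set.Iic a)) (μ (Set.Ici b)) ≤ P (η (φ k) ⁻¹' B k) := by
        intro k
        rw [hBk]
        split_ifs
        · rw [hμη _ _ measurableSet_Ici]; exact min_le_right _ _
        · rw [hμη _ _ measurableSet_Iic]; exact min_le_left _ _
      have hsep : ∀ k, ∀ x ∈ B k, (b - a) / 2 ≤ |x - c k| := by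
        intro k x hx
        rw [hBk] at hx
        split_ifs at hx with h
        · have hxb : b ≤ x := hx
          have h2 := le_abs_self (x - c k)
          linarith
        · have hxa : x ≤ a := hx
          push_neg at h
          have h2 := neg_abs_le (x - c k)
          linarith
      have hbc := my_bc2 hηmeas hindep hφ hBmeas hδpos hPB
      obtain ⟨ω, hωfreq, hωtend⟩ := (hbc.and htends).exists
      have hsub : Tendsto (fun j => f (φ j) + σ (φ j) * η (φ j) ω) atTop (nhds 0) :=
        hωtend.comp hφ.tendsto_atTop
      have hev : ∀ᶠ j in atTop, |f (φ j) + σ (φ j) * η (φ j) ω| < ε * ((b - a) / 2) := by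
        have hpos : 0 < ε * ((b - a) / 2) := by
          apply mul_pos hε
          linarith
        obtain ⟨N, hN⟩ := Metric.tendsto_atTop.1 hsub _ hpos
        refine Filter.eventually_atTop.2 ⟨N, fun j hj => ?_⟩
        have := hN j hj
        rwa [Real.dist_eq, sub_zero] at this
      obtain ⟨j, hjB, hjev⟩ := (hωfreq.and_eventually hev).exists
      have key : ε * ((b - a) / 2) ≤ |f (φ j) + σ (φ j) * η (φ j) ω| := by
        have heq : f (φ j) + σ (φ j) * η (φ j) ω = σ (φ j) * (η (φ j) ω - c j) := by
          have hck : c j = -(f (φ j)) / σ (φ j) := rfl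
          rw [hck, mul_sub, mul_div_cancel₀ _ (hσne j)]
          ring
        rw [heq, abs_mul]
        calc ε * ((b - a) / 2) ≤ |σ (φ j)| * ((b - a) / 2) := by
              apply mul_le_mul_of_nonneg_right (hφσ' j)
              linarith
        _ ≤ |σ (φ j)| * |η (φ j) ω - c j| :=
              mul_le_mul_of_nonneg_left (hsep j _ hjB) (abs_nonneg _)
      linarith
    -- step 2 : f → 0
    have hf0 : Tendsto f atTop (nhds 0) := by
      -- find M with μ (Icc (-M) M) ≠ 0
      have hMex : ∃ M : ℕ, μ (Set.Icc (-(M : ℝ)) M) ≠ 0 := by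
        by_contra h
        push_neg at h
        have huniv : (Set.univ : Set ℝ) = ⋃ m : ℕ, Set.Icc (-(m : ℝ)) m := by
          ext x
          simp only [Set.mem_univ, Set.mem_iUnion, Set.mem_Icc, true_iff]
          obtain ⟨m, hm⟩ := exists_nat_ge |x|
          obtain ⟨h1, h2⟩ := abs_le.1 hm
          exact ⟨m, h1, h2⟩
        have : μ Set.univ = 0 := by rw [huniv]; exact measure_iUnion_null h
        simp [measure_univ] at this
      obtain ⟨M, hM0⟩ := hMex
      by_contra hcon
      rw [Metric.tendsto_atTop] at hcon
      push_neg at hcon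
      obtain ⟨ε, hε, hfreq⟩ := hcon
      obtain ⟨φ, hφ, hφf⟩ := Filter.extraction_of_frequently_atTop
        (Filter.frequently_atTop.2 fun N => by
          obtain ⟨n, hn, hn'⟩ := hfreq N; exact ⟨n, hn, hn'⟩)
      have hφf' : ∀ k, ε ≤ |f (φ k)| := by
        intro k
        have := hφf k
        rwa [Real.dist_eq, sub_zero] at this
      have hBmeas : ∀ _ : ℕ, MeasurableSet (Set.Icc (-(M : ℝ)) M) :=
        fun _ => measurableSet_Icc
      have hPB : ∀ k, μ (Set.Icc (-(M : ℝ)) M) ≤ P (η (φ k) ⁻¹' Set.Icc (-(M : ℝ)) M) :=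
        fun k => le_of_eq (hμη _ _ measurableSet_Icc).symm
      have hbc := my_bc2 hηmeas hindep hφ (B := fun _ => Set.Icc (-(M : ℝ)) M)
        hBmeas hM0 hPB
      obtain ⟨ω, hωfreq, hωtend⟩ := (hbc.and htends).exists
      have hsub : Tendsto (fun j => f (φ j) + σ (φ j) * η (φ j) ω) atTop (nhds 0) :=
        hωtend.comp hφ.tendsto_atTop
      have hev1 : ∀ᶠ j in atTop, |f (φ j) + σ (φ j) * η (φ j) ω| < ε / 2 := by
        obtain ⟨N, hN⟩ := Metric.tendsto_atTop.1 hsub _ (by linarith : (0:ℝ) < ε / 2)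
        refine Filter.eventually_atTop.2 ⟨N, fun j hj => ?_⟩
        have := hN j hj
        rwa [Real.dist_eq, sub_zero] at this
      have hev2 : ∀ᶠ j in atTop, |σ (φ j)| * M < ε / 2 := by
        have hσsub : Tendsto (fun j => |σ (φ j)| * M) atTop (nhds 0) := by
          have h1 : Tendsto (fun j => σ (φ j)) atTop (nhds 0) :=
            hσ0.comp hφ.tendsto_atTop
          have := (h1.abs).mul_const (M : ℝ)
          simpa using this
        obtain ⟨N, hN⟩ := Metric.tendsto_atTop.1 hσsub _ (by linarith : (0:ℝ) < ε / 2)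
        refine Filter.eventually_atTop.2 ⟨N, fun j hj => ?_⟩
        have := hN j hj
        rw [Real.dist_eq, sub_zero] at this
        calc |σ (φ j)| * M ≤ |(|σ (φ j)| * M)| := le_abs_self _
        _ < ε / 2 := this
      obtain ⟨j, hjB, hjev1, hjev2⟩ :=
        (hωfreq.and_eventually (hev1.and hev2)).exists
      have hjabs : |η (φ j) ω| ≤ M := by
        rw [abs_le]
        exact ⟨hjB.1, hjB.2⟩
      have : |f (φ j)| < ε := by
        have h1 : |f (φ j)| ≤ |f (φ j) + σ (φ j) * η (φ j) ω| + |σ (φ j) * η (φ j) ω| := by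
          have h := abs_sub (f (φ j) + σ (φ j) * η (φ j) ω) (σ (φ j) * η (φ j) ω)
          simpa using h
        have h2 : |σ (φ j) * η (φ j) ω| ≤ |σ (φ j)| * M := by
          rw [abs_mul]
          exact mul_le_mul_of_nonneg_left hjabs (abs_nonneg _)
        linarith
      linarith [hφf' j]
    refine Filter.Eventually.of_forall fun ω => ?_
    have := hf0.add (hσ0.mul_const (ξ ω))
    simpa using this
end

section
/- Let f : [0, ∞) → [0, ∞) be a non-negative continuous function and let β > 0. Then for each p ∈ (0, 1) the following are equivalent: (i) the function t ↦ ∫₀ᵗ e^{−β(t−s)} f(s) ds belongs to L^p([0, ∞); ℝ), i.e. ∫₀^∞ (∫₀ᵗ e^{−β(t−s)} f(s) ds)^p dt < ∞; (ii) the sequence n ↦ ∫ₙ^{n+1} f(s) ds belongs to ℓ^p(ℤ₊; ℝ), i.e. ∑_{n=0}^∞ (∫ₙ^{n+1} f(s) ds)^p < ∞. -/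
open MeasureTheory intervalIntegral

private lemma rpow_add_le_add_rpow' {p u v : ℝ} (hp0 : 0 ≤ p) (hp1 : p ≤ 1)
    (hu : 0 ≤ u) (hv : 0 ≤ v) : (u + v) ^ p ≤ u ^ p + v ^ p := by
  have h := NNReal.rpow_add_le_add_rpow u.toNNReal v.toNNReal hp0 hp1
  have h2 := NNReal.coe_le_coe.2 h
  push_cast [NNReal.coe_rpow] at h2
  rwa [Real.coe_toNNReal u hu, Real.coe_toNNReal v hv] at h2

private lemma rpow_finset_sum_le {p : ℝ} (hp0 : 0 < p) (hp1 : p ≤ 1)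
    (s : Finset ℕ) (x : ℕ → ℝ) (hx : ∀ i, 0 ≤ x i) :
    (∑ i ∈ s, x i) ^ p ≤ ∑ i ∈ s, x i ^ p := by
  induction s using Finset.cons_induction with
  | empty => simp [Real.zero_rpow hp0.ne']
  | cons a s ha ih =>
    rw [Finset.sum_cons, Finset.sum_cons]
    calc (x a + ∑ i ∈ s, x i) ^ p ≤ x a ^ p + (∑ i ∈ s, x i) ^ p :=
          rpow_add_le_add_rpow' hp0.le hp1 (hx a) (Finset.sum_nonneg fun i _ => hx i)
      _ ≤ x a ^ p + ∑ i ∈ s, x i ^ p := by gcongr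

/-- For a non-negative continuous `f : [0,∞) → [0,∞)`, `β > 0` and `p ∈ (0,1)`:
`t ↦ ∫₀ᵗ e^{−β(t−s)} f(s) ds ∈ L^p([0,∞))` iff `n ↦ ∫ₙ^{n+1} f(s) ds ∈ ℓ^p(ℤ₊)`. -/
theorem perturbed_ode_Lp_iff_lp (f : ℝ → ℝ) (hcont : ContinuousOn f (Set.Ici 0))
    (hnonneg : ∀ t ∈ Set.Ici (0 : ℝ), 0 ≤ f t) (β : ℝ) (hβ : 0 < β)
    (p : ℝ) (hp : p ∈ Set.Ioo (0 : ℝ) 1) :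
    (∫⁻ t in Set.Ici (0 : ℝ),
        ENNReal.ofReal ((∫ s in (0 : ℝ)..t, Real.exp (-β * (t - s)) * f s) ^ p)) < ⊤
      ↔ Summable fun n : ℕ => (∫ s in (n : ℝ)..((n : ℝ) + 1), f s) ^ p := by
  obtain ⟨hp0, hp1⟩ := hp
  set F : ℝ → ℝ := fun t => ∫ s in (0 : ℝ)..t, Real.exp (-β * (t - s)) * f s with hF
  set a : ℕ → ℝ := fun n => ∫ s in (n : ℝ)..((n : ℝ) + 1), f s with ha
  -- basic integrability
  have haf : ∀ c d : ℝ, 0 ≤ c → c ≤ d → IntervalIntegrable f volume c d := by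
    intro c d hc hcd
    apply ContinuousOn.intervalIntegrable
    rw [Set.uIcc_of_le hcd]
    exact hcont.mono fun x hx => le_trans hc hx.1
  have hak : ∀ (t c d : ℝ), 0 ≤ c → c ≤ d →
      IntervalIntegrable (fun s => Real.exp (-β * (t - s)) * f s) volume c d := by
    intro t c d hc hcd
    apply ContinuousOn.intervalIntegrable
    rw [Set.uIcc_of_le hcd]
    exact ((Real.continuous_exp.comp (by continuity)).continuousOn).mul
      (hcont.mono fun x hx => le_trans hc hx.1)
  have ha_nonneg : ∀ n : ℕ, 0 ≤ a n := by
    intro n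
    apply intervalIntegral.integral_nonneg (by linarith [Nat.cast_nonneg (α := ℝ) n])
    intro s hs
    exact hnonneg s (le_trans n.cast_nonneg hs.1)
  have hF_nonneg : ∀ t : ℝ, 0 ≤ t → 0 ≤ F t := by
    intro t ht
    apply intervalIntegral.integral_nonneg ht
    intro s hs
    exact mul_nonneg (Real.exp_nonneg _) (hnonneg s hs.1)
  -- decomposition of the lintegral
  have hunion : Set.Ici (0 : ℝ) = ⋃ n : ℕ, Set.Ico (n : ℝ) ((n : ℝ) + 1) := by
    ext x
    simp only [Set.mem_Ici, Set.mem_iUnion, Set.mem_Ico]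
    constructor
    · intro hx
      exact ⟨⌊x⌋₊, Nat.floor_le hx, Nat.lt_floor_add_one x⟩
    · rintro ⟨n, h1, -⟩
      exact le_trans n.cast_nonneg h1
  have hdisj : Pairwise (Function.onFun Disjoint fun n : ℕ =>
      Set.Ico (n : ℝ) ((n : ℝ) + 1)) := by
    intro m n hmn
    simp only [Function.onFun, Set.Ico_disjoint_Ico]
    rcases hmn.lt_or_gt with h | h
    · have : (m : ℝ) + 1 ≤ n := by exact_mod_cast Nat.succ_le_of_lt h
      exact le_trans (min_le_left _ _) (this.trans (le_max_right _ _))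
    · have : (n : ℝ) + 1 ≤ m := by exact_mod_cast Nat.succ_le_of_lt h
      exact le_trans (min_le_right _ _) (this.trans (le_max_left _ _))
  set I : ℕ → ENNReal := fun n =>
    ∫⁻ t in Set.Ico (n : ℝ) ((n : ℝ) + 1), ENNReal.ofReal (F t ^ p) with hI
  have hdecomp : (∫⁻ t in Set.Ici (0 : ℝ), ENNReal.ofReal (F t ^ p)) = ∑' n, I n := by
    rw [hunion, lintegral_iUnion (fun n => measurableSet_Ico) hdisj]
  -- lower estimate
  have hlow : ∀ n : ℕ, ∀ t : ℝ, (n : ℝ) + 1 ≤ t → t ≤ (n : ℝ) + 2 →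
      Real.exp (-(2 * β)) * a n ≤ F t := by
    intro n t ht1 ht2
    have hn0 : (0 : ℝ) ≤ n := n.cast_nonneg
    have h1 : Real.exp (-(2 * β)) * a n
        ≤ ∫ s in (n : ℝ)..((n : ℝ) + 1), Real.exp (-β * (t - s)) * f s := by
      rw [ha, ← intervalIntegral.integral_const_mul]
      apply intervalIntegral.integral_mono_on (by linarith)
        ((haf n (n + 1) hn0 (by linarith)).const_mul _) (hak t n (n + 1) hn0 (by linarith))
      intro s hs
      have hfs : 0 ≤ f s := hnonneg s (le_trans hn0 hs.1)
      apply mul_le_mul_of_nonneg_right _ hfs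
      apply Real.exp_le_exp.2
      nlinarith [hs.1, hs.2]
    refine h1.trans ?_
    apply intervalIntegral.integral_mono_interval hn0 (by linarith : (n:ℝ) ≤ (n:ℝ)+1)
      (by linarith) ?_ (hak t 0 t le_rfl (by linarith))
    filter_upwards [ae_restrict_mem measurableSet_Ioc] with s hs
    exact mul_nonneg (Real.exp_nonneg _) (hnonneg s hs.1.le)
  -- upper estimate
  have hup : ∀ n : ℕ, ∀ t : ℝ, (n : ℝ) ≤ t → t ≤ (n : ℝ) + 1 →
      F t ≤ ∑ k ∈ Finset.range (n + 1),
        Real.exp β * Real.exp (-β * ((n : ℝ) - k)) * a k := by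
    intro n t ht1 ht2
    have hn0 : (0 : ℝ) ≤ n := n.cast_nonneg
    have ht0 : (0 : ℝ) ≤ t := le_trans hn0 ht1
    have h1 : F t ≤ ∫ s in (0 : ℝ)..((n : ℝ) + 1), Real.exp (-β * (t - s)) * f s := by
      apply intervalIntegral.integral_mono_interval le_rfl ht0 (by linarith) ?_
        (hak t 0 ((n : ℝ) + 1) le_rfl (by linarith))
      filter_upwards [ae_restrict_mem measurableSet_Ioc] with s hs
      exact mul_nonneg (Real.exp_nonneg _) (hnonneg s hs.1.le)
    refine h1.trans ?_
    have h2 : ∑ k ∈ Finset.range (n + 1),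
            (∫ s in (((k : ℕ)) : ℝ)..(((k + 1 : ℕ)) : ℝ), Real.exp (-β * (t - s)) * f s)
        = ∫ s in (((0 : ℕ)) : ℝ)..(((n + 1 : ℕ)) : ℝ), Real.exp (-β * (t - s)) * f s := by
      apply intervalIntegral.sum_integral_adjacent_intervals
      intro k _
      exact hak t k ((k + 1 : ℕ) : ℝ) k.cast_nonneg (by push_cast; linarith)
    have h2' : (∫ s in (0 : ℝ)..((n : ℝ) + 1), Real.exp (-β * (t - s)) * f s)
        = ∫ s in (((0 : ℕ)) : ℝ)..(((n + 1 : ℕ)) : ℝ), Real.exp (-β * (t - s)) * f s := by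
      norm_num
    rw [h2', ← h2]
    apply Finset.sum_le_sum
    intro k hk
    have hk' : (k : ℝ) ≤ n := by
      exact_mod_cast Nat.lt_succ_iff.mp (Finset.mem_range.mp hk)
    have : (∫ s in ((k : ℕ) : ℝ)..(((k + 1 : ℕ) : ℝ)), Real.exp (-β * (t - s)) * f s)
        ≤ ∫ s in ((k : ℕ) : ℝ)..(((k + 1 : ℕ) : ℝ)),
            (Real.exp β * Real.exp (-β * ((n : ℝ) - k))) * f s := by
      apply intervalIntegral.integral_mono_on (by push_cast; linarith)
        (hak t k ((k : ℕ) + 1 : ℕ) k.cast_nonneg (by push_cast; linarith))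
        ((haf k ((k : ℕ) + 1 : ℕ) k.cast_nonneg (by push_cast; linarith)).const_mul _)
      intro s hs
      have hfs : 0 ≤ f s := hnonneg s (le_trans k.cast_nonneg hs.1)
      apply mul_le_mul_of_nonneg_right _ hfs
      rw [← Real.exp_add]
      apply Real.exp_le_exp.2
      have hs2 : s ≤ (k : ℝ) + 1 := by
        have := hs.2; push_cast at this; linarith
      nlinarith
    refine this.trans_eq ?_
    rw [intervalIntegral.integral_const_mul]
    push_cast
    rfl
  constructor
  · -- (i) → (ii)
    intro hfin
    rw [hdecomp] at hfin
    have key : ∀ n : ℕ, ENNReal.ofReal ((Real.exp (-(2 * β)) * a n) ^ p) ≤ I (n + 1) := by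
      intro n
      have hμ : volume (Set.Ico (((n : ℕ) + 1 : ℕ) : ℝ) ((((n : ℕ) + 1 : ℕ) : ℝ) + 1)) = 1 := by
        rw [Real.volume_Ico]
        norm_num
      calc ENNReal.ofReal ((Real.exp (-(2 * β)) * a n) ^ p)
          = ∫⁻ _ in Set.Ico (((n + 1 : ℕ)) : ℝ) (((n + 1 : ℕ) : ℝ) + 1),
              ENNReal.ofReal ((Real.exp (-(2 * β)) * a n) ^ p) := by
            rw [setLIntegral_const, hμ, mul_one]
        _ ≤ I (n + 1) := by
            apply setLIntegral_mono' measurableSet_Ico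
            intro t ht
            apply ENNReal.ofReal_le_ofReal
            apply Real.rpow_le_rpow (mul_nonneg (Real.exp_nonneg _) (ha_nonneg n)) _ hp0.le
            apply hlow n t
            · have := ht.1; push_cast at this ⊢; linarith
            · have := ht.2; push_cast at this ⊢; linarith
    have hsum : ∑' n, ENNReal.ofReal ((Real.exp (-(2 * β)) * a n) ^ p) ≠ ⊤ := by
      apply ne_top_of_le_ne_top hfin.ne
      calc ∑' n, ENNReal.ofReal ((Real.exp (-(2 * β)) * a n) ^ p)
          ≤ ∑' n, I (n + 1) := ENNReal.tsum_le_tsum key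
        _ ≤ ∑' n, I n := ENNReal.tsum_comp_le_tsum_of_injective Nat.succ_injective I
    have hsummable : Summable fun n => (Real.exp (-(2 * β)) * a n) ^ p := by
      have := ENNReal.summable_toReal hsum
      refine this.congr fun n => ?_
      rw [ENNReal.toReal_ofReal]
      exact Real.rpow_nonneg (mul_nonneg (Real.exp_nonneg _) (ha_nonneg n)) p
    have hexp : (0 : ℝ) < Real.exp (-(2 * β)) ^ p := Real.rpow_pos_of_pos (Real.exp_pos _) p
    have : Summable fun n => Real.exp (-(2 * β)) ^ p * a n ^ p := by
      refine hsummable.congr fun n => ?_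
      rw [Real.mul_rpow (Real.exp_nonneg _) (ha_nonneg n)]
    have h2 := this.mul_left (Real.exp (-(2 * β)) ^ p)⁻¹
    refine h2.congr fun n => ?_
    rw [← mul_assoc, inv_mul_cancel₀ hexp.ne', one_mul]
  · -- (ii) → (i)
    intro hsummable
    rw [hdecomp]
    set E : ENNReal := ENNReal.ofReal (Real.exp β ^ p) with hE
    set R : ENNReal := ENNReal.ofReal (Real.exp (-(β * p))) with hR
    set B : ℕ → ENNReal := fun k => ENNReal.ofReal (a k ^ p) with hB
    set ψ : ℕ → ℕ → ENNReal := fun n k => if k ≤ n then E * B k * R ^ (n - k) else 0 with hψ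
    have hkey : ∀ n : ℕ, I n ≤ ∑' k, ψ n k := by
      intro n
      have hSnonneg : ∀ k : ℕ, 0 ≤ Real.exp β * Real.exp (-β * ((n : ℝ) - k)) * a k := fun k =>
        mul_nonneg (mul_nonneg (Real.exp_nonneg _) (Real.exp_nonneg _)) (ha_nonneg k)
      have step1 : I n ≤ ENNReal.ofReal ((∑ k ∈ Finset.range (n + 1),
          Real.exp β * Real.exp (-β * ((n : ℝ) - k)) * a k) ^ p) := by
        have hμ : volume (Set.Ico ((n : ℕ) : ℝ) (((n : ℕ) : ℝ) + 1)) = 1 := by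
          rw [Real.volume_Ico]; norm_num
        calc I n ≤ ∫⁻ _ in Set.Ico ((n : ℕ) : ℝ) (((n : ℕ) : ℝ) + 1),
              ENNReal.ofReal ((∑ k ∈ Finset.range (n + 1),
                Real.exp β * Real.exp (-β * ((n : ℝ) - k)) * a k) ^ p) := by
              apply setLIntegral_mono' measurableSet_Ico
              intro t ht
              apply ENNReal.ofReal_le_ofReal
              exact Real.rpow_le_rpow (hF_nonneg t (le_trans n.cast_nonneg ht.1))
                (hup n t ht.1 ht.2.le) hp0.le
          _ = _ := by rw [setLIntegral_const, hμ, mul_one]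
      have step2 : ((∑ k ∈ Finset.range (n + 1),
          Real.exp β * Real.exp (-β * ((n : ℝ) - k)) * a k) ^ p)
          ≤ ∑ k ∈ Finset.range (n + 1),
              (Real.exp β * Real.exp (-β * ((n : ℝ) - k)) * a k) ^ p :=
        rpow_finset_sum_le hp0 hp1.le _ _ hSnonneg
      have step3 : ∀ k ∈ Finset.range (n + 1),
          ENNReal.ofReal ((Real.exp β * Real.exp (-β * ((n : ℝ) - k)) * a k) ^ p)
            = ψ n k := by
        intro k hk
        have hkn : k ≤ n := Nat.lt_succ_iff.mp (Finset.mem_range.mp hk)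
        have hcast : (n : ℝ) - k = ((n - k : ℕ) : ℝ) := by
          push_cast [Nat.cast_sub hkn]; ring
        have hexp_pow : Real.exp (-β * ((n : ℝ) - k)) ^ p
            = Real.exp (-(β * p)) ^ (n - k : ℕ) := by
          rw [hcast, ← Real.exp_mul, ← Real.exp_nat_mul]
          ring_nf
        rw [Real.mul_rpow (mul_nonneg (Real.exp_nonneg _) (Real.exp_nonneg _)) (ha_nonneg k),
          Real.mul_rpow (Real.exp_nonneg _) (Real.exp_nonneg _), hexp_pow]
        rw [hψ]
        simp only [hkn, if_true]
        rw [ENNReal.ofReal_mul (by positivity), ENNReal.ofReal_mul (by positivity),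
          ENNReal.ofReal_pow (Real.exp_nonneg _)]
        rw [hE, hB, hR]
        ring
      calc I n ≤ ENNReal.ofReal ((∑ k ∈ Finset.range (n + 1),
            Real.exp β * Real.exp (-β * ((n : ℝ) - k)) * a k) ^ p) := step1
        _ ≤ ENNReal.ofReal (∑ k ∈ Finset.range (n + 1),
            (Real.exp β * Real.exp (-β * ((n : ℝ) - k)) * a k) ^ p) :=
            ENNReal.ofReal_le_ofReal step2
        _ = ∑ k ∈ Finset.range (n + 1),
            ENNReal.ofReal ((Real.exp β * Real.exp (-β * ((n : ℝ) - k)) * a k) ^ p) :=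
            ENNReal.ofReal_sum_of_nonneg fun k _ => Real.rpow_nonneg (hSnonneg k) p
        _ = ∑ k ∈ Finset.range (n + 1), ψ n k := Finset.sum_congr rfl step3
        _ = ∑' k, ψ n k := by
            rw [tsum_eq_sum (s := Finset.range (n + 1))]
            intro k hk
            have : ¬ k ≤ n := fun h => hk (Finset.mem_range.mpr (Nat.lt_succ_of_le h))
            simp [hψ, this]
    have hinner : ∀ k : ℕ, ∑' n, ψ n k = E * B k * (1 - R)⁻¹ := by
      intro k
      have hsupp : (Function.support fun n => ψ n k) ⊆ Set.range (fun j => k + j) := by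
        intro n hn
        have hkn : k ≤ n := by
          by_contra h
          simp [hψ, h] at hn
        exact ⟨n - k, by simpa using Nat.add_sub_cancel' hkn⟩
      rw [← Function.Injective.tsum_eq (add_right_injective k) hsupp]
      have : ∀ j : ℕ, ψ (k + j) k = E * B k * R ^ j := by
        intro j
        simp [hψ, Nat.le_add_right k j]
      rw [tsum_congr this, ENNReal.tsum_mul_left, ENNReal.tsum_geometric]
    have hRlt : R < 1 := by
      rw [hR, ← ENNReal.ofReal_one]
      apply (ENNReal.ofReal_lt_ofReal_iff one_pos).2
      rw [← Real.exp_zero]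
      apply Real.exp_lt_exp.2
      nlinarith
    have hC : (1 - R)⁻¹ ≠ ⊤ := by
      rw [ENNReal.inv_ne_top]
      exact (tsub_pos_of_lt hRlt).ne'
    have hBsum : ∑' k, B k ≠ ⊤ := by
      rw [hB, ← ENNReal.ofReal_tsum_of_nonneg
        (fun n => Real.rpow_nonneg (ha_nonneg n) p) hsummable]
      exact ENNReal.ofReal_ne_top
    calc ∑' n, I n ≤ ∑' n, ∑' k, ψ n k := ENNReal.tsum_le_tsum hkey
      _ = ∑' k, ∑' n, ψ n k := ENNReal.tsum_comm
      _ = ∑' k, E * B k * (1 - R)⁻¹ := tsum_congr hinner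
      _ = ∑' k, E * (1 - R)⁻¹ * B k := by congr 1; ext k; ring
      _ = E * (1 - R)⁻¹ * ∑' k, B k := ENNReal.tsum_mul_left
      _ < ⊤ := ENNReal.mul_lt_top
          (ENNReal.mul_lt_top ENNReal.ofReal_lt_top hC.lt_top) hBsum.lt_top
end

section
/- Let f : [0, ∞) → [0, ∞) be locally integrable, let p ∈ [1, ∞), and assume that for every θ > 0, ∫₀^∞ (∫ₜ^{t+θ} f(s) ds)^p dt < ∞. Then for every sequence (aₙ)_{n≥0} with a₀ = 0 and 0 < α ≤ a_{n+1} − aₙ ≤ β for all n (for some constants α, β > 0), one has ∑_{n=0}^∞ (∫_{aₙ}^{a_{n+1}} f(s) ds)^p < ∞. -/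
open MeasureTheory intervalIntegral

/-- If `f : [0,∞) → [0,∞)` is locally integrable, `p ∈ [1,∞)`, and for every `θ > 0`
`∫₀^∞ (∫ₜ^{t+θ} f(s) ds)^p dt < ∞`, then for every sequence `(aₙ)` with `a₀ = 0` and
`0 < α ≤ a_{n+1} − aₙ ≤ β`, one has `∑ₙ (∫_{aₙ}^{a_{n+1}} f(s) ds)^p < ∞`. -/
theorem summable_of_integral_average_Lp (f : ℝ → ℝ)
    (hloc : LocallyIntegrableOn f (Set.Ici 0))
    (hnonneg : ∀ t ∈ Set.Ici (0 : ℝ), 0 ≤ f t) (p : ℝ) (hp : 1 ≤ p)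
    (hint : ∀ θ > (0 : ℝ),
      (∫⁻ t in Set.Ici (0 : ℝ), ENNReal.ofReal ((∫ s in t..(t + θ), f s) ^ p)) < ⊤)
    (a : ℕ → ℝ) (α β : ℝ) (hα : 0 < α) (hβ : 0 < β) (ha0 : a 0 = 0)
    (hstep : ∀ n, α ≤ a (n + 1) - a n ∧ a (n + 1) - a n ≤ β) :
    Summable fun n => (∫ s in (a n)..(a (n + 1)), f s) ^ p := by
  set θ := α + β with hθdef
  have hθ : 0 < θ := by positivity
  have haa : ∀ n, a n + α ≤ a (n + 1) := fun n => by linarith [(hstep n).1]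
  have haa' : ∀ n, a n ≤ a (n + 1) := fun n => by linarith [(hstep n).1]
  have hmono : Monotone a := monotone_nat_of_le_succ haa'
  have ha_nonneg : ∀ n, 0 ≤ a n := fun n => ha0 ▸ hmono (Nat.zero_le n)
  set I : ℕ → ℝ := fun n => ∫ s in (a n)..(a (n + 1)), f s with hIdef
  have hI_nonneg : ∀ n, 0 ≤ I n := by
    intro n
    apply intervalIntegral.integral_nonneg (haa' n)
    intro u hu
    exact hnonneg u (le_trans (ha_nonneg n) hu.1)
  -- the disjoint intervals
  set S : ℕ → Set ℝ := fun n => Set.Ico (a (n + 1) - α) (a (n + 1)) with hSdef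
  have hSmeas : ∀ n, MeasurableSet (S n) := fun n => measurableSet_Ico
  have hSsub : ∀ n, S n ⊆ Set.Ici (0 : ℝ) := by
    intro n t ht
    have := haa n
    have := ha_nonneg n
    have := ht.1
    simp only [Set.mem_Ici]
    linarith
  have hSdisj : Pairwise (Function.onFun Disjoint S) := by
    intro m n hmn
    wlog h : m < n generalizing m n
    · exact (this hmn.symm (hmn.lt_or_gt.resolve_left h)).symm
    have h1 : a (m + 1) ≤ a n := hmono h
    have h2 : a n + α ≤ a (n + 1) := haa n
    simp only [Function.onFun, hSdef]
    rw [Set.Ico_disjoint_Ico]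
    have : min (a (m + 1)) (a (n + 1)) = a (m + 1) := min_eq_left (hmono (by omega))
    rw [this]
    calc a (m + 1) ≤ a (n + 1) - α := by linarith
      _ ≤ max (a (m + 1) - α) (a (n + 1) - α) := le_max_right _ _
  set g : ℝ → ENNReal := fun t => ENNReal.ofReal ((∫ s in t..(t + θ), f s) ^ p) with hgdef
  -- pointwise bound
  have hkey : ∀ n, ∀ t ∈ S n, I (n + 1) ≤ ∫ s in t..(t + θ), f s := by
    intro n t ht
    obtain ⟨ht1, ht2⟩ := ht
    have h0t : 0 ≤ t := hSsub n ⟨ht1, ht2⟩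
    have hA : t ≤ a (n + 1) := le_of_lt ht2
    have hB : a (n + 2) ≤ t + θ := by
      have := (hstep (n + 1)).2
      have := haa n
      simp only [hθdef]
      push_cast at *
      linarith
    have hint' : IntegrableOn f (Set.Ioc t (t + θ)) := by
      have : IntegrableOn f (Set.Icc t (t + θ)) :=
        hloc.integrableOn_compact_subset (t := Set.Icc t (t + θ))
          (fun x hx => le_trans h0t hx.1) isCompact_Icc
      exact this.mono_set Set.Ioc_subset_Icc_self
    apply intervalIntegral.integral_mono_interval hA (haa' (n + 1)) hB
    · filter_upwards [ae_restrict_mem measurableSet_Ioc] with x hx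
      exact hnonneg x (le_trans h0t (le_of_lt hx.1))
    · exact (intervalIntegrable_iff_integrableOn_Ioc_of_le (by linarith)).mpr hint'
  -- main estimate in ENNReal
  have hmain : ∀ n, ENNReal.ofReal (I (n + 1) ^ p) * ENNReal.ofReal α
      ≤ ∫⁻ t in S n, g t := by
    intro n
    have hvol : volume (S n) = ENNReal.ofReal α := by
      simp [hSdef, Real.volume_Ico]
    calc ENNReal.ofReal (I (n + 1) ^ p) * ENNReal.ofReal α
        = ∫⁻ _ in S n, ENNReal.ofReal (I (n + 1) ^ p) := by
          rw [setLIntegral_const, hvol]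
      _ ≤ ∫⁻ t in S n, g t := by
          apply setLIntegral_mono' (hSmeas n)
          intro t ht
          apply ENNReal.ofReal_le_ofReal
          exact Real.rpow_le_rpow (hI_nonneg (n + 1)) (hkey n t ht) (le_trans zero_le_one hp)
  have hsum_fin : (∑' n, ENNReal.ofReal (I (n + 1) ^ p)) < ⊤ := by
    have h1 : (∑' n, ENNReal.ofReal (I (n + 1) ^ p)) * ENNReal.ofReal α
        ≤ ∫⁻ t in Set.Ici (0 : ℝ), g t := by
      rw [← ENNReal.tsum_mul_right]
      calc ∑' n, ENNReal.ofReal (I (n + 1) ^ p) * ENNReal.ofReal α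
          ≤ ∑' n, ∫⁻ t in S n, g t := ENNReal.tsum_le_tsum hmain
        _ = ∫⁻ t in ⋃ n, S n, g t := (lintegral_iUnion hSmeas hSdisj g).symm
        _ ≤ ∫⁻ t in Set.Ici (0 : ℝ), g t := lintegral_mono_set (Set.iUnion_subset hSsub)
    have h2 := lt_of_le_of_lt h1 (hint θ hθ)
    by_contra hcon
    push_neg at hcon
    rw [top_le_iff.mp hcon, ENNReal.top_mul (by simp [hα])] at h2
    exact (lt_irrefl _ h2)
  have hsum' : Summable fun n => I (n + 1) ^ p := by
    have h := ENNReal.summable_toReal hsum_fin.ne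
    have heq : (fun n => (ENNReal.ofReal (I (n + 1) ^ p)).toReal) = fun n => I (n + 1) ^ p := by
      funext n
      rw [ENNReal.toReal_ofReal (Real.rpow_nonneg (hI_nonneg (n + 1)) p)]
    rwa [heq] at h
  exact (summable_nat_add_iff 1).mp hsum'
end

section
/- Let f : [0, ∞) → [0, ∞) be locally integrable and let q ∈ (0, ∞). Then the function t ↦ ∫ₜ^{t+1} f(s) ds belongs to L^q([0, ∞); ℝ) (i.e. ∫₀^∞ (∫ₜ^{t+1} f(s) ds)^q dt < ∞) if and only if for every θ > 0 the function t ↦ ∫ₜ^{t+θ} f(s) ds belongs to L^q([0, ∞); ℝ). -/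
open MeasureTheory intervalIntegral
open scoped ENNReal

/-- For a locally integrable non-negative `f : [0,∞) → [0,∞)` and `q ∈ (0,∞)`:
`t ↦ ∫ₜ^{t+1} f(s) ds ∈ L^q([0,∞))` iff for every `θ > 0` the function
`t ↦ ∫ₜ^{t+θ} f(s) ds` belongs to `L^q([0,∞))`. -/
theorem integral_average_Lq_iff (f : ℝ → ℝ)
    (hloc : LocallyIntegrableOn f (Set.Ici 0))
    (hnonneg : ∀ t ∈ Set.Ici (0 : ℝ), 0 ≤ f t) (q : ℝ) (hq : 0 < q) :
    (∫⁻ t in Set.Ici (0 : ℝ), ENNReal.ofReal ((∫ s in t..(t + 1), f s) ^ q)) < ⊤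
      ↔ ∀ θ > (0 : ℝ),
        (∫⁻ t in Set.Ici (0 : ℝ), ENNReal.ofReal ((∫ s in t..(t + θ), f s) ^ q)) < ⊤ := by
  have hmeas := hloc.aestronglyMeasurable
  obtain ⟨f₀, hf₀m, hf₀e⟩ : ∃ f₀ : ℝ → ℝ, Measurable f₀ ∧
      f =ᵐ[volume.restrict (Set.Ici (0:ℝ))] f₀ :=
    ⟨hmeas.mk f, hmeas.stronglyMeasurable_mk.measurable, hmeas.ae_eq_mk⟩
  set g : ℝ → ℝ≥0∞ := fun s => ENNReal.ofReal (f₀ s) with hg_def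
  have hg : Measurable g := ENNReal.measurable_ofReal.comp hf₀m
  set Φ : ℝ → ℝ → ℝ≥0∞ := fun θ t => ∫⁻ s in Set.Ioc t (t + θ), g s with hΦ_def
  -- measurability of Φ θ
  have hΦm : ∀ θ : ℝ, Measurable (Φ θ) := by
    intro θ
    have h1 : (Φ θ) = fun t => ∫⁻ s, (Set.Ioc t (t + θ)).indicator g s := by
      funext t
      exact (lintegral_indicator measurableSet_Ioc g).symm
    rw [h1]
    have h2 : (fun p : ℝ × ℝ => (Set.Ioc p.1 (p.1 + θ)).indicator g p.2)
        = ({p : ℝ × ℝ | p.1 < p.2 ∧ p.2 ≤ p.1 + θ}).indicator (fun p => g p.2) := by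
      funext p
      simp [Set.indicator_apply, Set.mem_Ioc, Set.mem_setOf_eq]
    have hset : MeasurableSet {p : ℝ × ℝ | p.1 < p.2 ∧ p.2 ≤ p.1 + θ} :=
      (measurableSet_lt measurable_fst measurable_snd).inter
        (measurableSet_le measurable_snd (measurable_fst.add_const θ))
    have hF : Measurable fun p : ℝ × ℝ => (Set.Ioc p.1 (p.1 + θ)).indicator g p.2 := by
      rw [h2]
      exact (hg.comp measurable_snd).indicator hset
    exact hF.lintegral_prod_right'
  -- conversion between the real form and the Φ form
  have hconv : ∀ θ : ℝ, 0 ≤ θ →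
      (∫⁻ t in Set.Ici (0:ℝ), ENNReal.ofReal ((∫ s in t..(t + θ), f s) ^ q))
        = ∫⁻ t in Set.Ici (0:ℝ), (Φ θ t) ^ q := by
    intro θ hθ
    refine lintegral_congr_ae ((ae_restrict_iff' measurableSet_Ici).2 (ae_of_all _ ?_))
    intro t ht
    have ht' : (0:ℝ) ≤ t := ht
    have hle : t ≤ t + θ := by linarith
    have hsub : Set.Ioc t (t + θ) ⊆ Set.Ici (0:ℝ) := fun s hs => le_trans ht' hs.1.le
    have hint : IntegrableOn f (Set.Ioc t (t + θ)) := by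
      have := hloc.integrableOn_compact_subset
        (show Set.Icc t (t + θ) ⊆ Set.Ici (0:ℝ) from fun s hs => le_trans ht' hs.1)
        isCompact_Icc
      exact this.mono_set Set.Ioc_subset_Icc_self
    have hcong : f =ᵐ[volume.restrict (Set.Ioc t (t + θ))] f₀ :=
      ae_restrict_of_ae_restrict_of_subset hsub hf₀e
    have hnn : 0 ≤ᵐ[volume.restrict (Set.Ioc t (t + θ))] f₀ := by
      have hfnn : 0 ≤ᵐ[volume.restrict (Set.Ioc t (t + θ))] f :=
        (ae_restrict_iff' measurableSet_Ioc).2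
          (ae_of_all _ fun s hs => hnonneg s (hsub hs))
      filter_upwards [hfnn, hcong] with s h1 h2
      rw [← h2]; exact h1
    have h1 : (∫ s in t..(t + θ), f s) = ∫ s in Set.Ioc t (t + θ), f s :=
      integral_of_le hle
    have h2 : (∫ s in Set.Ioc t (t + θ), f s) = ∫ s in Set.Ioc t (t + θ), f₀ s :=
      integral_congr_ae hcong
    have h3 : ENNReal.ofReal (∫ s in Set.Ioc t (t + θ), f₀ s) = Φ θ t :=
      ofReal_integral_eq_lintegral_ofReal (hint.congr_fun_ae hcong) hnn
    have hx : 0 ≤ ∫ s in t..(t + θ), f s := by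
      rw [h1, h2]; exact integral_nonneg_of_ae hnn
    show ENNReal.ofReal ((∫ s in t..(t + θ), f s) ^ q) = (Φ θ t) ^ q
    rw [← ENNReal.ofReal_rpow_of_nonneg hx hq.le, h1, h2, h3]
  -- shift estimate
  have hshift : ∀ c : ℝ, 0 ≤ c →
      (∫⁻ t in Set.Ici (0:ℝ), (Φ 1 (t + c)) ^ q)
        ≤ ∫⁻ t in Set.Ici (0:ℝ), (Φ 1 t) ^ q := by
    intro c hc
    set h : ℝ → ℝ≥0∞ := fun t => (Φ 1 t) ^ q with hh_def
    have hh : Measurable h := (hΦm 1).pow_const q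
    calc (∫⁻ t in Set.Ici (0:ℝ), h (t + c))
        = ∫⁻ t, (Set.Ici (0:ℝ)).indicator (fun t => h (t + c)) t :=
          (lintegral_indicator measurableSet_Ici _).symm
      _ = ∫⁻ t, (Set.Ici c).indicator h (t + c) := by
          congr 1; funext t
          simp only [Set.indicator_apply, Set.mem_Ici, le_add_iff_nonneg_left]
      _ = ∫⁻ t, (Set.Ici c).indicator h t :=
          (measurePreserving_add_right volume c).lintegral_comp
            (hh.indicator measurableSet_Ici)
      _ = ∫⁻ t in Set.Ici c, h t := lintegral_indicator measurableSet_Ici _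
      _ ≤ ∫⁻ t in Set.Ici (0:ℝ), h t :=
          lintegral_mono_set (Set.Ici_subset_Ici.2 hc)
  -- elementary rpow inequality
  have hpow2 : ∀ a b : ℝ≥0∞, (a + b) ^ q ≤ (2:ℝ≥0∞) ^ q * (a ^ q + b ^ q) := by
    intro a b
    have h1 : a + b ≤ 2 * (a ⊔ b) := by
      rw [two_mul]; exact add_le_add le_sup_left le_sup_right
    calc (a + b) ^ q ≤ (2 * (a ⊔ b)) ^ q := ENNReal.rpow_le_rpow h1 hq.le
      _ = (2:ℝ≥0∞) ^ q * (a ⊔ b) ^ q := ENNReal.mul_rpow_of_nonneg _ _ hq.le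
      _ ≤ (2:ℝ≥0∞) ^ q * (a ^ q + b ^ q) := by
          refine mul_le_mul_right ?_ _
          rcases le_total a b with hab | hab
          · rw [sup_eq_right.2 hab]; exact le_add_self
          · rw [sup_eq_left.2 hab]; exact le_self_add
  have h2q_ne_top : ((2:ℝ≥0∞) ^ q) ≠ ⊤ :=
    ENNReal.rpow_ne_top_of_nonneg hq.le (by norm_num)
  constructor
  · intro h1 θ hθ
    rw [hconv θ hθ.le]
    rw [hconv 1 zero_le_one] at h1
    -- main induction
    have claim : ∀ n : ℕ, (∫⁻ t in Set.Ici (0:ℝ), (Φ ((n:ℝ) + 1) t) ^ q) < ⊤ := by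
      intro n
      induction n with
      | zero => simpa using h1
      | succ n ih =>
        have hc : (0:ℝ) ≤ (n:ℝ) + 1 := by positivity
        have key : ∀ t : ℝ, Φ ((n:ℝ) + 1 + 1) t
            ≤ Φ ((n:ℝ) + 1) t + Φ 1 (t + ((n:ℝ) + 1)) := by
          intro t
          have hsub : Set.Ioc t (t + ((n:ℝ) + 1 + 1))
              ⊆ Set.Ioc t (t + ((n:ℝ) + 1))
                ∪ Set.Ioc (t + ((n:ℝ) + 1)) (t + ((n:ℝ) + 1) + 1) := by
            intro s hs
            rcases le_or_gt s (t + ((n:ℝ) + 1)) with hcase | hcase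
            · exact Or.inl ⟨hs.1, hcase⟩
            · exact Or.inr ⟨hcase, by linarith [hs.2]⟩
          calc Φ ((n:ℝ) + 1 + 1) t
              ≤ ∫⁻ s in Set.Ioc t (t + ((n:ℝ) + 1))
                  ∪ Set.Ioc (t + ((n:ℝ) + 1)) (t + ((n:ℝ) + 1) + 1), g s :=
                lintegral_mono_set hsub
            _ ≤ Φ ((n:ℝ) + 1) t + Φ 1 (t + ((n:ℝ) + 1)) := lintegral_union_le _ _ _
        have hcast : ((n + 1 : ℕ) : ℝ) + 1 = (n:ℝ) + 1 + 1 := by push_cast; ring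
        rw [hcast]
        have hmeas1 : AEMeasurable (fun t => (Φ ((n:ℝ) + 1) t) ^ q)
            (volume.restrict (Set.Ici (0:ℝ))) :=
          ((hΦm ((n:ℝ) + 1)).pow_const q).aemeasurable
        calc (∫⁻ t in Set.Ici (0:ℝ), (Φ ((n:ℝ) + 1 + 1) t) ^ q)
            ≤ ∫⁻ t in Set.Ici (0:ℝ), (2:ℝ≥0∞) ^ q
                * ((Φ ((n:ℝ) + 1) t) ^ q + (Φ 1 (t + ((n:ℝ) + 1))) ^ q) :=
              lintegral_mono fun t =>
                le_trans (ENNReal.rpow_le_rpow (key t) hq.le) (hpow2 _ _)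
          _ = (2:ℝ≥0∞) ^ q * ∫⁻ t in Set.Ici (0:ℝ),
                ((Φ ((n:ℝ) + 1) t) ^ q + (Φ 1 (t + ((n:ℝ) + 1))) ^ q) :=
              lintegral_const_mul' _ _ h2q_ne_top
          _ = (2:ℝ≥0∞) ^ q * ((∫⁻ t in Set.Ici (0:ℝ), (Φ ((n:ℝ) + 1) t) ^ q)
                + ∫⁻ t in Set.Ici (0:ℝ), (Φ 1 (t + ((n:ℝ) + 1))) ^ q) := by
              rw [lintegral_add_left' hmeas1]
          _ < ⊤ := by
              refine ENNReal.mul_lt_top h2q_ne_top.lt_top (ENNReal.add_lt_top.2 ⟨ih, ?_⟩)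
              exact lt_of_le_of_lt (hshift _ hc) h1
    -- conclude for θ
    set n := ⌈θ⌉₊ with hn
    have hθn : θ ≤ (n:ℝ) + 1 := le_trans (Nat.le_ceil θ) (by linarith)
    refine lt_of_le_of_lt (lintegral_mono fun t => ?_) (claim n)
    exact ENNReal.rpow_le_rpow
      (lintegral_mono_set (Set.Ioc_subset_Ioc_right (by linarith))) hq.le
  · intro h
    simpa using h 1 one_pos
end
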